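/- arXiv:1901.07695 — 6 statements merged into one kernel-verified Lean document; each statement's English description precedes it below -/
import Mathlib

section
/- Let 0 ≤ α ≤ 1 − 1/r, 3 ≤ r ≤ n−1, and write n = rd + s with 0 ≤ s < r. Then the generalized distance spectral radius of the Turán graph satisfies ρ_{D_α}(T_{n,r}) = (n + 2d + αn − 3 + √((n(1−α) − 1)² + 4s(1−α)(d+1)))/2. -/
open Matrix

/-- The distance matrix of a simple graph, with `(u,v)`-entry the graph distance. -/
noncomputable def distMatrix {n : ℕ} (G : SimpleGraph (Fin n)) : Matrix (Fin n) (Fin n) ℝ :=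
  fun u v => (G.dist u v : ℝ)

/-- The transmission of a vertex: the sum of distances to all vertices. -/
noncomputable def transmission {n : ℕ} (G : SimpleGraph (Fin n)) (u : Fin n) : ℝ :=
  ∑ v, (G.dist u v : ℝ)

/-- The generalized distance matrix `D_α(G) = α · Tr(G) + (1−α) · D(G)`. -/
noncomputable def Dalpha {n : ℕ} (α : ℝ) (G : SimpleGraph (Fin n)) : Matrix (Fin n) (Fin n) ℝ :=
  α • Matrix.diagonal (transmission G) + (1 - α) • distMatrix G

/-- The largest (real) eigenvalue of a matrix. -/
noncomputable def specRadius {n : ℕ} (M : Matrix (Fin n) (Fin n) ℝ) : ℝ :=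
  sSup {μ : ℝ | Module.End.HasEigenvalue (Matrix.toLin' M) μ}

/-- The Wiener index: sum of distances over unordered pairs. -/
noncomputable def wienerIndex {n : ℕ} (G : SimpleGraph (Fin n)) : ℝ :=
  (∑ u, ∑ v, (G.dist u v : ℝ)) / 2

/-- The star `S_n` with center the vertex `0`. -/
def starGraph (n : ℕ) : SimpleGraph (Fin n) where
  Adj u v := u ≠ v ∧ (u.val = 0 ∨ v.val = 0)
  symm := ⟨by rintro u v ⟨h1, h2⟩; exact ⟨h1.symm, h2.symm⟩⟩
  loopless := ⟨by rintro u ⟨h1, _⟩; exact h1 rfl⟩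

/-- The unicyclic graph `S_n⁺`, obtained from the star `S_n` by adding one edge. -/
def starPlus (n : ℕ) : SimpleGraph (Fin n) where
  Adj u v := u ≠ v ∧ (u.val = 0 ∨ v.val = 0 ∨ (u.val = 1 ∧ v.val = 2) ∨ (u.val = 2 ∧ v.val = 1))
  symm := ⟨by rintro u v ⟨h1, h2⟩; exact ⟨h1.symm, by tauto⟩⟩
  loopless := ⟨by rintro u ⟨h1, _⟩; exact h1 rfl⟩

lemma turan_adj {n r : ℕ} (u v : Fin n) :
    (SimpleGraph.turanGraph n r).Adj u v ↔ u.val % r ≠ v.val % r := by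
  simp [SimpleGraph.turanGraph, Fin.ext_iff]

lemma turan_dist {n r : ℕ} (hr : 2 ≤ r) (hn : r ≤ n) (u v : Fin n) :
    (SimpleGraph.turanGraph n r).dist u v =
      if u = v then 0 else if u.val % r = v.val % r then 2 else 1 := by
  have h2n : 2 ≤ n := le_trans hr hn
  split_ifs with h1 h2
  · subst h1; exact SimpleGraph.dist_self
  · have hw : ∃ w : Fin n, w.val % r ≠ u.val % r := by
      rcases Nat.eq_zero_or_pos (u.val % r) with h | h
      · exact ⟨⟨1, by omega⟩, by simp [Nat.mod_eq_of_lt (by omega : 1 < r), h]⟩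
      · exact ⟨⟨0, by omega⟩, by simp [Nat.zero_mod]; omega⟩
    obtain ⟨w, hwu⟩ := hw
    have hadj1 : (SimpleGraph.turanGraph n r).Adj u w := (turan_adj u w).2 (fun h => hwu h.symm)
    have hadj2 : (SimpleGraph.turanGraph n r).Adj w v := (turan_adj w v).2 (by rw [h2] at hwu; exact hwu)
    have hle : (SimpleGraph.turanGraph n r).dist u v ≤ 2 := by
      have := SimpleGraph.dist_le (SimpleGraph.Walk.cons hadj1 (SimpleGraph.Walk.cons hadj2 SimpleGraph.Walk.nil))
      simpa using this
    have hpos : 0 < (SimpleGraph.turanGraph n r).dist u v :=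
      SimpleGraph.Reachable.pos_dist_of_ne ⟨SimpleGraph.Walk.cons hadj1 (SimpleGraph.Walk.cons hadj2 SimpleGraph.Walk.nil)⟩ h1
    have hne1 : (SimpleGraph.turanGraph n r).dist u v ≠ 1 := by
      intro hc
      exact ((turan_adj u v).1 (SimpleGraph.dist_eq_one_iff_adj.1 hc)) h2
    omega
  · exact SimpleGraph.dist_eq_one_iff_adj.2 ((turan_adj u v).2 h2)

lemma fin_card_filter {n : ℕ} (p : ℕ → Prop) [DecidablePred p] :
    (Finset.univ.filter (fun v : Fin n => p v.val)).card = ((Finset.range n).filter p).card := by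
  rw [Finset.card_filter, Finset.card_filter]
  exact Fin.sum_univ_eq_sum_range (fun k => if p k then 1 else 0) n

lemma count_residue {n r d s : ℕ} (hr : 0 < r) (hn : n = r * d + s) (hs : s < r) (i : ℕ) :
    (Finset.univ.filter (fun v : Fin n => v.val % r = i % r)).card
      = d + if i % r < s then 1 else 0 := by
  have hd : n / r = d := by
    rw [hn, Nat.mul_add_div hr, Nat.div_eq_of_lt hs, Nat.add_zero]
  have hm : n % r = s := by
    rw [hn, Nat.mul_add_mod, Nat.mod_eq_of_lt hs]
  have := Nat.count_modEq_card n hr i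
  rw [Nat.count_eq_card_filter_range] at this
  simp only [Nat.ModEq] at this
  rw [fin_card_filter (fun k => k % r = i % r)]
  rw [hd, hm] at this
  convert this using 2
  exact Finset.filter_congr (fun _ _ => Iff.rfl)

lemma count_big {n r d s : ℕ} (hr : 0 < r) (hn : n = r * d + s) (hs : s < r) :
    (Finset.univ.filter (fun v : Fin n => v.val % r < s)).card = s * (d + 1) := by
  rw [Finset.card_eq_sum_card_fiberwise (f := fun v : Fin n => v.val % r)
    (t := Finset.range s) (fun x hx => Finset.mem_range.2 (Finset.mem_filter.1 hx).2)]
  have hfib : ∀ i ∈ Finset.range s,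
      ((Finset.univ.filter (fun v : Fin n => v.val % r < s)).filter
        (fun v : Fin n => v.val % r = i)).card = d + 1 := by
    intro i hi
    have his : i < s := Finset.mem_range.1 hi
    have hir : i % r = i := Nat.mod_eq_of_lt (lt_trans his hs)
    rw [Finset.filter_filter]
    have : (Finset.univ.filter (fun v : Fin n => v.val % r < s ∧ v.val % r = i))
        = Finset.univ.filter (fun v : Fin n => v.val % r = i % r) := by
      apply Finset.filter_congr
      intro v _
      rw [hir]
      constructor
      · exact fun h => h.2
      · exact fun h => ⟨by omega, h⟩
    rw [this, count_residue hr hn hs i, hir, if_pos his]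
  rw [Finset.sum_congr rfl hfib, Finset.sum_const, Finset.card_range, smul_eq_mul]

/-- Sum of distances (in the Turán graph) weighted by a class-constant function. -/
lemma sum_dist_mul {n r d s : ℕ} (hr : 2 ≤ r) (hrn : r ≤ n) (hn : n = r * d + s) (hs : s < r)
    (u : Fin n) (f : Fin n → ℝ) (hf : ∀ v : Fin n, v.val % r = u.val % r → f v = f u) :
    ∑ v, ((SimpleGraph.turanGraph n r).dist u v : ℝ) * f v
      = (∑ v, f v) + ((d : ℝ) + (if u.val % r < s then 1 else 0) - 2) * f u := by
  have hterm : ∀ v : Fin n, ((SimpleGraph.turanGraph n r).dist u v : ℝ) * f v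
      = (f v + (if v.val % r = u.val % r then f v else 0)) - (if v = u then 2 * f u else 0) := by
    intro v
    rw [turan_dist hr hrn u v]
    by_cases h1 : u = v
    · subst h1; simp; ring
    · have h1' : v ≠ u := fun h => h1 h.symm
      rw [if_neg h1, if_neg h1']
      by_cases h2 : u.val % r = v.val % r
      · rw [if_pos h2, if_pos h2.symm]; push_cast; ring
      · rw [if_neg h2, if_neg (fun h => h2 (Eq.symm h))]; push_cast; ring
  rw [Finset.sum_congr rfl (fun v _ => hterm v)]
  rw [Finset.sum_sub_distrib, Finset.sum_add_distrib]
  have hsub : ∑ v : Fin n, (if v = u then 2 * f u else 0) = 2 * f u := by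
    rw [Finset.sum_ite_eq' Finset.univ u (fun _ => 2 * f u)]
    simp
  have hsame : ∑ v : Fin n, (if v.val % r = u.val % r then f v else 0)
      = ((d : ℝ) + (if u.val % r < s then 1 else 0)) * f u := by
    have : ∀ v : Fin n, (if v.val % r = u.val % r then f v else 0)
        = (if v.val % r = u.val % r then f u else 0) := by
      intro v; by_cases h : v.val % r = u.val % r
      · rw [if_pos h, if_pos h, hf v h]
      · rw [if_neg h, if_neg h]
    rw [Finset.sum_congr rfl (fun v _ => this v), ← Finset.sum_filter, Finset.sum_const]
    have hcard := count_residue (by omega : 0 < r) hn hs u.val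
    rw [hcard, nsmul_eq_mul]
    push_cast
    split_ifs <;> ring
  rw [hsub, hsame]
  ring

/-- A symmetric entrywise-nonnegative matrix with a positive eigenvector has that
eigenvalue as its largest eigenvalue. -/
lemma specRadius_eq_of_pos_eigenvector {N : ℕ} (hN : 0 < N) (M : Matrix (Fin N) (Fin N) ℝ)
    (hsym : ∀ u v, M u v = M v u) (hpos : ∀ u v, 0 ≤ M u v)
    (ρ : ℝ) (z : Fin N → ℝ) (hz : ∀ u, 0 < z u) (heig : M.mulVec z = ρ • z) :
    specRadius M = ρ := by
  have hzne : z ≠ 0 := fun h => (hz ⟨0, hN⟩).ne' (congrFun h _)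
  have hmem : Module.End.HasEigenvalue (Matrix.toLin' M) ρ :=
    Module.End.hasEigenvalue_of_hasEigenvector
      ⟨Module.End.mem_eigenspace_iff.2 (by rw [Matrix.toLin'_apply, heig]), hzne⟩
  have hub : ∀ μ ∈ {μ : ℝ | Module.End.HasEigenvalue (Matrix.toLin' M) μ}, μ ≤ ρ := by
    intro μ hμ
    obtain ⟨x, hx⟩ := hμ.exists_hasEigenvector
    have hxv : M.mulVec x = μ • x := by
      rw [← Matrix.toLin'_apply M x, hx.apply_eq_smul]
    have hMw : ∀ u, |μ| * |x u| ≤ (M.mulVec (fun v => |x v|)) u := by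
      intro u
      have h1 : |μ| * |x u| = |(M.mulVec x) u| := by
        rw [hxv]; simp [abs_mul]
      rw [h1]
      calc |(M.mulVec x) u| = |∑ v, M u v * x v| := by rfl
        _ ≤ ∑ v, |M u v * x v| := Finset.abs_sum_le_sum_abs _ _
        _ = ∑ v, M u v * |x v| := by
            refine Finset.sum_congr rfl (fun v _ => ?_)
            rw [abs_mul, abs_of_nonneg (hpos u v)]
        _ = (M.mulVec (fun v => |x v|)) u := rfl
    have key : |μ| * (∑ u, z u * |x u|) ≤ ρ * (∑ u, z u * |x u|) := by
      calc |μ| * (∑ u, z u * |x u|) = ∑ u, z u * (|μ| * |x u|) := by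
            rw [Finset.mul_sum]; exact Finset.sum_congr rfl (fun u _ => by ring)
        _ ≤ ∑ u, z u * (M.mulVec (fun v => |x v|)) u :=
            Finset.sum_le_sum (fun u _ => mul_le_mul_of_nonneg_left (hMw u) (hz u).le)
        _ = ∑ u, ∑ v, z u * (M u v * |x v|) := by
            exact Finset.sum_congr rfl (fun u _ => by rw [Matrix.mulVec, dotProduct, Finset.mul_sum])
        _ = ∑ v, (∑ u, M v u * z u) * |x v| := by
            rw [Finset.sum_comm]
            refine Finset.sum_congr rfl (fun v _ => ?_)
            rw [Finset.sum_mul]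
            exact Finset.sum_congr rfl (fun u _ => by rw [hsym u v]; ring)
        _ = ∑ v, (ρ * z v) * |x v| := by
            refine Finset.sum_congr rfl (fun v _ => ?_)
            have : (M.mulVec z) v = ρ * z v := by rw [heig]; rfl
            rw [← this]; rfl
        _ = ρ * (∑ u, z u * |x u|) := by rw [Finset.mul_sum]; exact Finset.sum_congr rfl (fun u _ => by ring)
    have hsum : 0 < ∑ u, z u * |x u| := by
      obtain ⟨u0, hu0⟩ := Function.ne_iff.1 hx.right
      refine Finset.sum_pos' (fun u _ => mul_nonneg (hz u).le (abs_nonneg _)) ⟨u0, Finset.mem_univ _, ?_⟩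
      exact mul_pos (hz u0) (abs_pos.2 hu0)
    have habs : |μ| ≤ ρ := le_of_mul_le_mul_right key hsum
    exact le_trans (le_abs_self μ) habs
  exact le_antisymm (csSup_le ⟨ρ, hmem⟩ hub) (le_csSup ⟨ρ, hub⟩ hmem)


set_option maxHeartbeats 1000000 in
/-- The generalized distance spectral radius of the Turán graph `T_{n,r}`. -/
theorem stmt_3 {n r d s : ℕ} (hr3 : 3 ≤ r) (hrn : r ≤ n - 1)
    (hn : n = r * d + s) (hs : s < r)
    (α : ℝ) (hα0 : 0 ≤ α) (hα1 : α ≤ 1 - 1 / (r : ℝ)) :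
    specRadius (Dalpha α (SimpleGraph.turanGraph n r)) =
      ((n : ℝ) + 2 * d + α * n - 3 +
        Real.sqrt ((n * (1 - α) - 1) ^ 2 + 4 * s * (1 - α) * (d + 1))) / 2 := by
  have hr0 : 0 < r := by omega
  have hr2 : 2 ≤ r := by omega
  have hn1 : r + 1 ≤ n := by omega
  have hrsn : r ≤ n := by omega
  have hd1 : 1 ≤ d := by
    by_contra h
    have hd0 : d = 0 := by omega
    rw [hd0] at hn
    omega
  have hrR : (0:ℝ) < r := by positivity
  have hβ : (0:ℝ) < 1 - α := by
    have h1r : (0:ℝ) < 1/r := by positivity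
    linarith
  -- real versions of arithmetic facts
  have hnreal : (n:ℝ) = r * d + s := by exact_mod_cast congrArg (Nat.cast : ℕ → ℝ) hn
  have hsr : (s:ℝ) + 1 ≤ r := by exact_mod_cast hs
  have hdR : (1:ℝ) ≤ d := by exact_mod_cast hd1
  have hnr1 : (r:ℝ) + 1 ≤ n := by exact_mod_cast hn1
  have hnt : (n:ℝ) - s * (d+1) = ((r:ℝ) - s) * d := by linear_combination hnreal
  -- abbreviations
  set q : ℝ := Real.sqrt ((n * (1 - α) - 1) ^ 2 + 4 * s * (1 - α) * (d + 1)) with hqdef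
  set ρ : ℝ := ((n : ℝ) + 2 * d + α * n - 3 + q) / 2 with hρdef
  have hargnn : (0:ℝ) ≤ (n * (1 - α) - 1) ^ 2 + 4 * s * (1 - α) * (d + 1) := by
    have h1 : (0:ℝ) ≤ 4 * (s:ℝ) * (1 - α) * ((d:ℝ) + 1) :=
      mul_nonneg (mul_nonneg (mul_nonneg (by norm_num) (Nat.cast_nonneg s)) hβ.le) (by positivity)
    exact add_nonneg (sq_nonneg _) h1
  have hq2 : q ^ 2 = (n * (1 - α) - 1) ^ 2 + 4 * s * (1 - α) * (d + 1) := Real.sq_sqrt hargnn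
  have hq0 : (0:ℝ) ≤ q := Real.sqrt_nonneg _
  set X : ℝ := (1 - α) * ((n:ℝ) - s * (d+1)) with hXdef
  set Y : ℝ := ρ - (α * ((n:ℝ) + d - 1) + (1 - α) * ((s:ℝ) * (d+1) + d - 1)) with hYdef
  have hXpos : 0 < X := by
    rw [hXdef, hnt]
    have : (0:ℝ) < ((r:ℝ) - s) * d := by nlinarith
    exact mul_pos hβ this
  have hYpos : 0 < Y := by
    rw [hYdef, hρdef]
    rcases Nat.eq_zero_or_pos s with hs0 | hs1
    · -- s = 0 : q = n(1-α) - 1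
      subst hs0
      have hnb : (1:ℝ) < (n:ℝ) * (1 - α) := by
        have h1 : (1:ℝ)/r ≤ 1 - α := by linarith
        have h2 : (r:ℝ) + 1 ≤ (n:ℝ) := hnr1
        have h3 : (0:ℝ) < (n:ℝ) := by linarith
        have h4 : ((r:ℝ) + 1) * (1/r) ≤ (n:ℝ) * (1 - α) := by
          apply mul_le_mul h2 h1 (by positivity) (by linarith)
        have h5 : (1:ℝ) < ((r:ℝ) + 1) * (1/r) := by
          rw [add_mul, mul_one_div, div_self hrR.ne']
          have : (0:ℝ) < 1/r := by positivity
          linarith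
        linarith
      have hqval : q = (n:ℝ) * (1 - α) - 1 := by
        rw [hqdef]
        push_cast
        rw [show ((n:ℝ) * (1 - α) - 1) ^ 2 + 4 * 0 * (1 - α) * ((d:ℝ) + 1)
          = ((n:ℝ) * (1 - α) - 1) ^ 2 by ring]
        exact Real.sqrt_sq (by linarith)
      rw [hqval]
      push_cast
      have h1 : (1:ℝ)/r ≤ 1 - α := by linarith
      nlinarith [mul_le_mul hnr1 h1 (by positivity : (0:ℝ) ≤ 1/r) (by linarith : (0:ℝ) ≤ (n:ℝ)),
        mul_pos hrR (show (0:ℝ) < 1/r by positivity)]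
    · -- s ≥ 1
      have hsR : (1:ℝ) ≤ s := by exact_mod_cast hs1
      have hcpos : (0:ℝ) < (1 - α) * (s * (d+1)) :=
        mul_pos hβ (mul_pos (by linarith : (0:ℝ) < (s:ℝ)) (by positivity))
      -- q^2 = (a-e)^2 + 4*X*c
      have hΔ : q ^ 2 = (α * ((n:ℝ) + d - 1) + (1 - α) * ((s:ℝ) * (d+1) + d - 1)
            - (α * ((n:ℝ) + d - 2) + (1 - α) * ((n:ℝ) - (s:ℝ) * (d+1) + d - 2))) ^ 2
            + 4 * X * ((1 - α) * ((s:ℝ) * (d+1))) := by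
        rw [hXdef]; linear_combination hq2
      nlinarith [hΔ, hq0, mul_pos hXpos hcpos, sq_nonneg q]
  set z : Fin n → ℝ := fun u => if u.val % r < s then X else Y with hzdef
  have hzpos : ∀ u, 0 < z u := by
    intro u
    rw [hzdef]
    dsimp only
    split_ifs
    · exact hXpos
    · exact hYpos
  have hzc : ∀ (u v : Fin n), v.val % r = u.val % r → z v = z u := by
    intro u v h
    rw [hzdef]
    dsimp only
    rw [h]
  -- sum of z
  have hzsum : ∑ v, z v = (s:ℝ) * (d+1) * X + ((n:ℝ) - (s:ℝ) * (d+1)) * Y := by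
    rw [hzdef]
    dsimp only
    rw [Finset.sum_ite, Finset.sum_const, Finset.sum_const]
    have hcard1 : (Finset.univ.filter (fun v : Fin n => v.val % r < s)).card = s * (d+1) :=
      count_big hr0 hn hs
    have hcard2 : (Finset.univ.filter (fun v : Fin n => ¬ v.val % r < s)).card = n - s * (d+1) := by
      have h := Finset.card_filter_add_card_filter_not
        (s := (Finset.univ : Finset (Fin n))) (p := fun v : Fin n => v.val % r < s)
      rw [Finset.card_univ, Fintype.card_fin, hcard1] at h
      omega
    have hle : s * (d+1) ≤ n := by
      have := count_big (n := n) hr0 hn hs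
      calc s * (d+1) = (Finset.univ.filter (fun v : Fin n => v.val % r < s)).card := this.symm
        _ ≤ (Finset.univ : Finset (Fin n)).card := Finset.card_filter_le _ _
        _ = n := by rw [Finset.card_univ, Fintype.card_fin]
    rw [hcard1, hcard2, nsmul_eq_mul, nsmul_eq_mul]
    push_cast [hle]
    ring
  -- transmission
  have htr : ∀ u : Fin n, transmission (SimpleGraph.turanGraph n r) u
      = (n:ℝ) + ((d:ℝ) + (if u.val % r < s then 1 else 0)) - 2 := by
    intro u
    have h := sum_dist_mul hr2 hrsn hn hs u (fun _ => (1:ℝ)) (fun _ _ => rfl)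
    simp only [mul_one] at h
    rw [transmission, h, Finset.sum_const, Finset.card_univ, Fintype.card_fin, nsmul_eq_mul]
    ring
  -- expansion of mulVec
  have hexp : ∀ u : Fin n, (Dalpha α (SimpleGraph.turanGraph n r)).mulVec z u
      = α * transmission (SimpleGraph.turanGraph n r) u * z u
        + (1 - α) * ∑ v, ((SimpleGraph.turanGraph n r).dist u v : ℝ) * z v := by
    intro u
    simp only [Dalpha, Matrix.mulVec, dotProduct, Matrix.add_apply, Matrix.smul_apply,
      smul_eq_mul, distMatrix, add_mul]
    rw [Finset.sum_add_distrib]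
    congr 1
    · simp only [Matrix.diagonal_apply, mul_ite, ite_mul, mul_zero, zero_mul]
      rw [Finset.sum_ite_eq Finset.univ u (fun v => α * transmission (SimpleGraph.turanGraph n r) u * z v)]
      simp [mul_assoc]
    · rw [Finset.mul_sum]
      exact Finset.sum_congr rfl (fun v _ => by ring)
  -- the eigen-equation
  have heig : (Dalpha α (SimpleGraph.turanGraph n r)).mulVec z = ρ • z := by
    funext u
    rw [hexp u, htr u, sum_dist_mul hr2 hrsn hn hs u z (hzc u), hzsum]
    rw [Pi.smul_apply, smul_eq_mul]
    by_cases hbs : u.val % r < s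
    · rw [if_pos hbs]
      have hzu : z u = X := by rw [hzdef]; dsimp only; rw [if_pos hbs]
      rw [hzu, hXdef, hYdef, hρdef]
      ring
    · rw [if_neg hbs]
      have hzu : z u = Y := by rw [hzdef]; dsimp only; rw [if_neg hbs]
      rw [hzu, hXdef, hYdef, hρdef]
      linear_combination (-1/4 : ℝ) * hq2
  -- symmetry and nonnegativity
  have hsym : ∀ u v, Dalpha α (SimpleGraph.turanGraph n r) u v
      = Dalpha α (SimpleGraph.turanGraph n r) v u := by
    intro u v
    simp only [Dalpha, Matrix.add_apply, Matrix.smul_apply, smul_eq_mul, distMatrix,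
      Matrix.diagonal_apply]
    rw [SimpleGraph.dist_comm]
    by_cases h : u = v
    · subst h; ring
    · rw [if_neg h, if_neg (fun hc => h hc.symm)]
  have hpos : ∀ u v, 0 ≤ Dalpha α (SimpleGraph.turanGraph n r) u v := by
    intro u v
    simp only [Dalpha, Matrix.add_apply, Matrix.smul_apply, smul_eq_mul, distMatrix,
      Matrix.diagonal_apply]
    have h1 : (0:ℝ) ≤ transmission (SimpleGraph.turanGraph n r) u := by
      rw [transmission]
      exact Finset.sum_nonneg (fun v _ => by positivity)
    have h2 : (0:ℝ) ≤ ((SimpleGraph.turanGraph n r).dist u v : ℝ) := by positivity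
    by_cases h : u = v
    · rw [if_pos h]; nlinarith
    · rw [if_neg h]; nlinarith
  exact specRadius_eq_of_pos_eigenvector (by omega) _ hsym hpos ρ z hzpos heig
end

section
/- Let G be a tree of order n ≥ 4 that is not isomorphic to the star S_n. Then its Wiener index satisfies W(G) ≥ n² − n − 2 > W(S_n) = (n−1)². -/
open Matrix

open scoped Classical
open Finset

section Aux
variable {n : ℕ}

-- dist = 2 gives a common neighbor
lemma exists_mid {G : SimpleGraph (Fin n)} (hc : G.Connected) {u v : Fin n}
    (h : G.dist u v = 2) : ∃ x, G.Adj u x ∧ G.Adj x v := by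
  obtain ⟨p, hp⟩ := hc.exists_walk_length_eq_dist u v
  rw [h] at hp
  cases p with
  | nil => simp at hp
  | cons h1 q =>
    cases q with
    | nil => simp at hp
    | cons h2 q' =>
      cases q' with
      | nil => exact ⟨_, h1, h2⟩
      | cons h3 q'' => simp [SimpleGraph.Walk.length_cons] at hp

-- every vertex has a neighbor
lemma deg_pos' {G : SimpleGraph (Fin n)} (hc : G.Connected) (hn : 2 ≤ n) (v : Fin n) :
    ∃ w, G.Adj v w := by
  have : ∃ w : Fin n, w ≠ v := by
    refine ⟨if v = ⟨0, by omega⟩ then ⟨1, by omega⟩ else ⟨0, by omega⟩, ?_⟩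
    split <;> rename_i h
    · rw [h]; intro hh; exact absurd (congrArg Fin.val hh) (by simp)
    · intro hh; exact h hh.symm
  obtain ⟨w, hw⟩ := this
  obtain ⟨p, hp⟩ := hc.exists_walk_length_eq_dist v w
  cases p with
  | nil => exact absurd rfl hw
  | cons h q => exact ⟨_, h⟩

lemma deg_pos {G : SimpleGraph (Fin n)} (hc : G.Connected) (hn : 2 ≤ n) (v : Fin n) :
    1 ≤ G.degree v := by
  obtain ⟨w, hw⟩ := deg_pos' hc hn v
  exact (G.degree_pos_iff_exists_adj v).mpr ⟨w, hw⟩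

lemma per_vertex {G : SimpleGraph (Fin n)} (hc : G.Connected) (u : Fin n) :
    3 * n ≤ (∑ v, G.dist u v) + 2 * G.degree u
      + (∑ x ∈ G.neighborFinset u, ((G.neighborFinset x).erase u).card) + 3 := by
  classical
  set A1 : Finset (Fin n) := univ.filter (fun v => G.dist u v = 1) with hA1def
  set A2 : Finset (Fin n) := univ.filter (fun v => G.dist u v = 2) with hA2def
  set A3 : Finset (Fin n) := univ.filter (fun v => 3 ≤ G.dist u v) with hA3def
  have hA1 : A1 = G.neighborFinset u := by
    ext v; simp [hA1def, SimpleGraph.dist_eq_one_iff_adj, SimpleGraph.mem_neighborFinset]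
  have hd12 : Disjoint A1 A2 := by
    rw [Finset.disjoint_left]; intro a h1 h2
    simp only [hA1def, hA2def, Finset.mem_filter, Finset.mem_univ, true_and] at h1 h2; omega
  have hd123 : Disjoint (A1 ∪ A2) A3 := by
    rw [Finset.disjoint_left]; intro a h1 h2
    simp only [hA1def, hA2def, hA3def, Finset.mem_union, Finset.mem_filter,
      Finset.mem_univ, true_and] at h1 h2
    rcases h1 with h | h <;> omega
  have hu : u ∉ A1 ∪ A2 ∪ A3 := by
    simp [hA1def, hA2def, hA3def, SimpleGraph.dist_self]
  have hcover : (univ : Finset (Fin n)) = insert u (A1 ∪ A2 ∪ A3) := by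
    ext v
    simp only [Finset.mem_univ, true_iff, Finset.mem_insert, Finset.mem_union,
      hA1def, hA2def, hA3def, Finset.mem_filter, Finset.mem_univ, true_and]
    by_cases hv : v = u
    · exact Or.inl hv
    · have := hc.pos_dist_of_ne (Ne.symm hv)
      omega
  have hcard : n = 1 + (A1.card + A2.card + A3.card) := by
    have := congrArg Finset.card hcover
    rw [Finset.card_univ, Fintype.card_fin, Finset.card_insert_of_notMem hu,
      Finset.card_union_of_disjoint hd123, Finset.card_union_of_disjoint hd12] at this
    omega
  have hsum : A1.card * 1 + A2.card * 2 + A3.card * 3 ≤ ∑ v, G.dist u v := by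
    have hsub : A1 ∪ A2 ∪ A3 ⊆ univ := Finset.subset_univ _
    have h0 : ∑ v ∈ A1 ∪ A2 ∪ A3, G.dist u v ≤ ∑ v, G.dist u v :=
      Finset.sum_le_sum_of_subset hsub
    rw [Finset.sum_union hd123, Finset.sum_union hd12] at h0
    have b1 : A1.card * 1 ≤ ∑ v ∈ A1, G.dist u v := by
      rw [← smul_eq_mul]
      exact Finset.card_nsmul_le_sum _ _ _ (fun v hv => by
        simp only [hA1def, Finset.mem_filter, Finset.mem_univ, true_and] at hv; omega)
    have b2 : A2.card * 2 ≤ ∑ v ∈ A2, G.dist u v := by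
      rw [← smul_eq_mul]
      exact Finset.card_nsmul_le_sum _ _ _ (fun v hv => by
        simp only [hA2def, Finset.mem_filter, Finset.mem_univ, true_and] at hv; omega)
    have b3 : A3.card * 3 ≤ ∑ v ∈ A3, G.dist u v := by
      rw [← smul_eq_mul]
      exact Finset.card_nsmul_le_sum _ _ _ (fun v hv => by
        simp only [hA3def, Finset.mem_filter, Finset.mem_univ, true_and] at hv; omega)
    omega
  have hA2card : A2.card ≤ ∑ x ∈ G.neighborFinset u, ((G.neighborFinset x).erase u).card := by
    have hsub : A2 ⊆ (G.neighborFinset u).biUnion (fun x => (G.neighborFinset x).erase u) := by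
      intro v hv
      simp only [hA2def, Finset.mem_filter] at hv
      obtain ⟨x, hux, hxv⟩ := exists_mid hc hv.2
      have hvu : v ≠ u := by
        intro h; subst h; simp [SimpleGraph.dist_self] at hv
      refine Finset.mem_biUnion.mpr ⟨x, ?_, ?_⟩
      · exact (SimpleGraph.mem_neighborFinset _ _ _).mpr hux
      · exact Finset.mem_erase.mpr ⟨hvu, (SimpleGraph.mem_neighborFinset _ _ _).mpr hxv⟩
    exact le_trans (Finset.card_le_card hsub) (Finset.card_biUnion_le)
  have hdeg : G.degree u = A1.card := by rw [hA1, SimpleGraph.card_neighborFinset_eq_degree]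
  omega

lemma nbr_sum {G : SimpleGraph (Fin n)} (f : Fin n → ℕ) :
    ∑ u, ∑ x ∈ G.neighborFinset u, f x = ∑ x, G.degree x * f x := by
  classical
  have h1 : ∀ u : Fin n, ∑ x ∈ G.neighborFinset u, f x
      = ∑ x, if G.Adj u x then f x else 0 := by
    intro u
    rw [SimpleGraph.neighborFinset_eq_filter, Finset.sum_filter]
  simp_rw [h1]
  rw [Finset.sum_comm]
  refine Finset.sum_congr rfl fun x _ => ?_
  rw [Finset.sum_ite, Finset.sum_const, Finset.sum_const_zero, add_zero, smul_eq_mul]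
  congr 1
  rw [SimpleGraph.degree, SimpleGraph.neighborFinset_eq_filter]
  congr 1
  ext u
  simp [SimpleGraph.adj_comm]

lemma double_count {G : SimpleGraph (Fin n)} :
    (∑ u, ∑ x ∈ G.neighborFinset u, ((G.neighborFinset x).erase u).card)
      + ∑ u, G.degree u = ∑ x, G.degree x * G.degree x := by
  classical
  have key : ∀ u : Fin n, ∑ x ∈ G.neighborFinset u, (((G.neighborFinset x).erase u).card + 1)
      = ∑ x ∈ G.neighborFinset u, G.degree x := by
    intro u
    refine Finset.sum_congr rfl fun x hx => ?_
    have hux : u ∈ G.neighborFinset x := by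
      rw [SimpleGraph.mem_neighborFinset] at hx ⊢; exact hx.symm
    have hpos : 1 ≤ (G.neighborFinset x).card := Finset.card_pos.mpr ⟨u, hux⟩
    rw [Finset.card_erase_of_mem hux, SimpleGraph.card_neighborFinset_eq_degree] at *
    omega
  have h2 : ∀ u : Fin n, (∑ x ∈ G.neighborFinset u, ((G.neighborFinset x).erase u).card)
      + G.degree u = ∑ x ∈ G.neighborFinset u, G.degree x := by
    intro u
    rw [← key u, Finset.sum_add_distrib, Finset.sum_const, smul_eq_mul, mul_one,
      SimpleGraph.card_neighborFinset_eq_degree]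
  calc (∑ u, ∑ x ∈ G.neighborFinset u, ((G.neighborFinset x).erase u).card) + ∑ u, G.degree u
      = ∑ u, ((∑ x ∈ G.neighborFinset u, ((G.neighborFinset x).erase u).card) + G.degree u) := by
        rw [Finset.sum_add_distrib]
    _ = ∑ u, ∑ x ∈ G.neighborFinset u, G.degree x := by
        exact Finset.sum_congr rfl fun u _ => h2 u
    _ = ∑ x, G.degree x * G.degree x := nbr_sum _

lemma degsum {G : SimpleGraph (Fin n)} (hT : G.IsTree) (hn : 1 ≤ n) :
    (∑ v, G.degree v) + 2 = 2 * n := by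
  classical
  have h1 := G.sum_degrees_eq_twice_card_edges
  have h2 := hT.card_edgeFinset
  rw [Fintype.card_fin] at h2
  omega

lemma iso_of_full_degree {G : SimpleGraph (Fin n)} (hT : G.IsTree) (hn : 4 ≤ n)
    {c : Fin n} (hc : G.degree c = n - 1) : Nonempty (G ≃g starGraph n) := by
  classical
  -- c is adjacent to everything else
  have hNsub : G.neighborFinset c ⊆ univ.erase c := by
    intro x hx
    rw [SimpleGraph.mem_neighborFinset] at hx
    exact Finset.mem_erase.mpr ⟨hx.ne', Finset.mem_univ x⟩
  have hNcard : (univ.erase c : Finset (Fin n)).card ≤ (G.neighborFinset c).card := by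
    rw [SimpleGraph.card_neighborFinset_eq_degree, hc, Finset.card_erase_of_mem (Finset.mem_univ c),
      Finset.card_univ, Fintype.card_fin]
  have hNeq : G.neighborFinset c = univ.erase c :=
    Finset.eq_of_subset_of_card_le hNsub hNcard
  have hadjc : ∀ v : Fin n, v ≠ c → G.Adj c v := by
    intro v hv
    have : v ∈ G.neighborFinset c := by
      rw [hNeq]; exact Finset.mem_erase.mpr ⟨hv, Finset.mem_univ v⟩
    rwa [SimpleGraph.mem_neighborFinset] at this
  -- no edge between two non-centers
  have hnoedge : ∀ u v : Fin n, u ≠ c → v ≠ c → ¬ G.Adj u v := by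
    intro u v hu hv hadj
    have huv : u ≠ v := hadj.ne
    -- two distinct paths from u to v
    have p1 : G.Walk u v := .cons hadj .nil
    have hp1 : (SimpleGraph.Walk.cons hadj SimpleGraph.Walk.nil : G.Walk u v).IsPath := by
      simp [huv]
    have hp2 : (SimpleGraph.Walk.cons ((hadjc u hu).symm)
        (SimpleGraph.Walk.cons (hadjc v hv) SimpleGraph.Walk.nil) : G.Walk u v).IsPath := by
      simp only [SimpleGraph.Walk.isPath_def, SimpleGraph.Walk.support_cons,
        SimpleGraph.Walk.support_nil]
      simp [huv, hu, hv, Ne.symm hu, Ne.symm hv]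
    have := hT.IsAcyclic.path_unique ⟨_, hp1⟩ ⟨_, hp2⟩
    simp only [Subtype.mk_eq_mk] at this
    have hlen := congrArg SimpleGraph.Walk.length this
    simp at hlen
  -- adjacency characterization
  have hchar : ∀ u v : Fin n, G.Adj u v ↔ (u ≠ v ∧ (u = c ∨ v = c)) := by
    intro u v
    constructor
    · intro h
      refine ⟨h.ne, ?_⟩
      by_contra hcc
      push_neg at hcc
      exact hnoedge u v hcc.1 hcc.2 h
    · rintro ⟨hne, h | h⟩
      · subst h; exact hadjc v (Ne.symm hne)
      · subst h; exact (hadjc u hne).symm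
  -- build the iso via swap c 0
  have h0 : (0 : ℕ) < n := by omega
  set z : Fin n := ⟨0, h0⟩ with hz
  refine ⟨⟨Equiv.swap c z, ?_⟩⟩
  intro u v
  rw [hchar]
  show (starGraph n).Adj (Equiv.swap c z u) (Equiv.swap c z v) ↔ _
  have hswap : ∀ w : Fin n, (Equiv.swap c z w).val = 0 ↔ w = c := by
    intro w
    constructor
    · intro h
      have : Equiv.swap c z w = z := Fin.ext h
      have := (Equiv.swap c z).injective (a₁ := w) (a₂ := c) (by rw [this, Equiv.swap_apply_left])
      exact this
    · intro h; subst h; rw [Equiv.swap_apply_left]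
  constructor
  · rintro ⟨h1, h2⟩
    refine ⟨fun h => h1 (by rw [h]), ?_⟩
    rcases h2 with h | h
    · exact Or.inl ((hswap u).mp h)
    · exact Or.inr ((hswap v).mp h)
  · rintro ⟨h1, h2⟩
    refine ⟨fun h => h1 ((Equiv.swap c z).injective h), ?_⟩
    rcases h2 with h | h
    · exact Or.inl ((hswap u).mpr h)
    · exact Or.inr ((hswap v).mpr h)

lemma sumsq_bound {G : SimpleGraph (Fin n)} (hT : G.IsTree) (hn : 4 ≤ n)
    (hub : ∀ v, (G.degree v : ℝ) ≤ (n : ℝ) - 2) :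
    ∑ x, (G.degree x : ℝ) ^ 2 ≤ (n : ℝ) ^ 2 - 3 * n + 6 := by
  classical
  have hc := hT.isConnected
  have hpos : ∀ v, 1 ≤ G.degree v := deg_pos hc (by omega)
  have hds := degsum hT (by omega)
  -- exists vertex of degree ≥ 2
  have hex : ∃ i0 : Fin n, 2 ≤ G.degree i0 := by
    by_contra hco
    push_neg at hco
    have : ∑ v, G.degree v ≤ ∑ _v : Fin n, 1 :=
      Finset.sum_le_sum (fun v _ => by have := hco v; omega)
    simp [Finset.card_univ] at this
    omega
  obtain ⟨i0, hi0⟩ := hex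
  set e : Fin n → ℝ := fun x => (G.degree x : ℝ) - 1 with he
  have he0 : ∀ x, 0 ≤ e x := by
    intro x; have := hpos x; simp [he]
    exact_mod_cast this
  have hesum : ∑ x, e x = (n : ℝ) - 2 := by
    have h : ((∑ v, G.degree v : ℕ) : ℝ) + 2 = 2 * n := by exact_mod_cast hds
    push_cast at h
    simp only [he]
    rw [Finset.sum_sub_distrib, Finset.sum_const, Finset.card_univ, Fintype.card_fin,
      nsmul_eq_mul, mul_one]
    linarith
  have hi0' : 1 ≤ e i0 := by
    simp only [he]
    have : (2 : ℝ) ≤ (G.degree i0 : ℝ) := by exact_mod_cast hi0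
    linarith
  have hub' : ∀ x, e x ≤ (n : ℝ) - 3 := by
    intro x; have := hub x; simp only [he]; linarith
  -- rest sum
  set T : ℝ := ∑ x ∈ univ.erase i0, e x with hT'
  have hTsplit : e i0 + T = (n : ℝ) - 2 := by
    rw [hT', Finset.add_sum_erase _ e (Finset.mem_univ i0), hesum]
  have hT0 : 0 ≤ T := Finset.sum_nonneg (fun x _ => he0 x)
  have hrest : ∑ x ∈ univ.erase i0, (e x) ^ 2 ≤ T ^ 2 := by
    have h1 : ∀ x ∈ univ.erase i0, (e x) ^ 2 ≤ e x * T := by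
      intro x hx
      have hle : e x ≤ T := Finset.single_le_sum (fun y _ => he0 y) hx
      have := he0 x
      nlinarith
    calc ∑ x ∈ univ.erase i0, (e x) ^ 2 ≤ ∑ x ∈ univ.erase i0, e x * T :=
          Finset.sum_le_sum h1
      _ = T * T := by rw [← Finset.sum_mul, ← hT']
      _ = T ^ 2 := by ring
  have hesq : ∑ x, (e x) ^ 2 ≤ ((n : ℝ) - 3) ^ 2 + 1 := by
    rw [← Finset.add_sum_erase _ (fun x => (e x) ^ 2) (Finset.mem_univ i0)]
    have h1 := hub' i0
    nlinarith [hrest, hi0', hTsplit, hT0]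
  have hexp : ∑ x, (G.degree x : ℝ) ^ 2 = ∑ x, (e x) ^ 2 + 2 * ((n:ℝ) - 2) + n := by
    have hpt : ∀ x : Fin n, (G.degree x : ℝ) ^ 2 = (e x) ^ 2 + 2 * e x + 1 := by
      intro x; simp only [he]; ring
    simp_rw [hpt]
    rw [Finset.sum_add_distrib, Finset.sum_add_distrib, Finset.sum_const, Finset.card_univ,
      Fintype.card_fin, nsmul_eq_mul, mul_one, ← Finset.mul_sum, hesum]
  rw [hexp]
  nlinarith [hesq]

lemma main_bound {G : SimpleGraph (Fin n)} (hT : G.IsTree) (hn : 4 ≤ n)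
    (hns : ¬ Nonempty (G ≃g starGraph n)) :
    wienerIndex G ≥ (n : ℝ) ^ 2 - n - 2 := by
  classical
  have hc := hT.isConnected
  -- degree upper bound
  have hub : ∀ v, (G.degree v : ℝ) ≤ (n : ℝ) - 2 := by
    intro v
    have h1 : G.degree v < n := by
      have := G.degree_lt_card_verts v
      rwa [Fintype.card_fin] at this
    have h2 : G.degree v ≠ n - 1 := by
      intro h
      exact hns (iso_of_full_degree hT hn h)
    have : G.degree v + 2 ≤ n := by omega
    have := (Nat.cast_le (α := ℝ)).mpr this
    push_cast at this
    linarith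
  have hQ := sumsq_bound hT hn hub
  -- sum the per-vertex inequality
  have h1 : ∀ u ∈ (univ : Finset (Fin n)), 3 * n ≤ (∑ v, G.dist u v) + 2 * G.degree u
      + (∑ x ∈ G.neighborFinset u, ((G.neighborFinset x).erase u).card) + 3 :=
    fun u _ => per_vertex hc u
  have h2 := Finset.sum_le_sum h1
  simp only [Finset.sum_add_distrib, Finset.sum_const, Finset.card_univ, Fintype.card_fin,
    smul_eq_mul] at h2
  rw [← Finset.mul_sum] at h2
  -- h2 : n * (3 * n) ≤ D + 2 * ∑ deg + S + n * 3
  set D : ℕ := ∑ u, ∑ v, G.dist u v with hD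
  set S : ℕ := ∑ u, ∑ x ∈ G.neighborFinset u, ((G.neighborFinset x).erase u).card with hS
  have hdc : S + ∑ u, G.degree u = ∑ x, G.degree x * G.degree x := double_count
  have hds : (∑ v, G.degree v) + 2 = 2 * n := degsum hT (by omega)
  -- cast everything to ℝ
  have hDr : wienerIndex G = (D : ℝ) / 2 := by
    rw [wienerIndex, hD]
    push_cast
    rfl
  have hQr : ((∑ x, G.degree x * G.degree x : ℕ) : ℝ) = ∑ x, (G.degree x : ℝ) ^ 2 := by
    push_cast
    refine Finset.sum_congr rfl fun x _ => ?_
    ring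
  have c2 : (n : ℝ) * (3 * n) ≤ (D : ℝ) + 2 * ((∑ v, G.degree v : ℕ) : ℝ)
      + (S : ℝ) + n * 3 := by exact_mod_cast h2
  have cdc : (S : ℝ) + ((∑ v, G.degree v : ℕ) : ℝ)
      = ((∑ x, G.degree x * G.degree x : ℕ) : ℝ) := by exact_mod_cast hdc
  have cds : ((∑ v, G.degree v : ℕ) : ℝ) + 2 = 2 * n := by exact_mod_cast hds
  rw [hQr] at cdc
  rw [hDr]
  linarith [hQ, c2, cdc, cds]

lemma star_adjsum {n : ℕ} (hn : 2 ≤ n) (u : Fin n) :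
    ∑ v, (if (starGraph n).Adj u v then (1:ℝ) else 0)
      = if u = ⟨0, by omega⟩ then (n : ℝ) - 1 else 1 := by
  classical
  set z : Fin n := ⟨0, by omega⟩ with hzdef
  have hval : ∀ w : Fin n, w.val = 0 ↔ w = z := by
    intro w; constructor
    · intro h; exact Fin.ext h
    · intro h; rw [h]
  by_cases hu : u = z
  · rw [if_pos hu]
    have : ∀ v : Fin n, (if (starGraph n).Adj u v then (1:ℝ) else 0)
        = 1 - (if v = u then 1 else 0) := by
      intro v
      by_cases hv : v = u
      · simp [hv, (starGraph n).loopless]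
      · have : (starGraph n).Adj u v := ⟨fun h => hv h.symm, Or.inl (by rw [hu])⟩
        simp [this, hv]
    simp_rw [this]
    rw [Finset.sum_sub_distrib, Finset.sum_ite_eq' Finset.univ u (fun _ => (1:ℝ))]
    simp
  · rw [if_neg hu]
    have : ∀ v : Fin n, (if (starGraph n).Adj u v then (1:ℝ) else 0)
        = if v = z then 1 else 0 := by
      intro v
      by_cases hv : v = z
      · subst hv
        have h : (starGraph n).Adj u z := ⟨hu, Or.inr rfl⟩
        simp [h]
      · have : ¬ (starGraph n).Adj u v := by
          rintro ⟨h1, h2 | h2⟩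
          · exact hu ((hval u).mp h2)
          · exact hv ((hval v).mp h2)
        simp [this, hv]
    simp_rw [this]
    rw [Finset.sum_ite_eq' Finset.univ z (fun _ => (1:ℝ))]
    simp

lemma star_dist {n : ℕ} (hn : 2 ≤ n) (u v : Fin n) :
    ((starGraph n).dist u v : ℝ) = (2 - if u = v then 2 else 0)
      - (if (starGraph n).Adj u v then 1 else 0) := by
  by_cases huv : u = v
  · simp [huv, (starGraph n).loopless.irrefl v]
  by_cases hadj : (starGraph n).Adj u v
  · rw [SimpleGraph.dist_eq_one_iff_adj.mpr hadj]; simp [huv, hadj]; norm_num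
  · have hu0 : u.val ≠ 0 := fun h => hadj ⟨huv, Or.inl h⟩
    have hv0 : v.val ≠ 0 := fun h => hadj ⟨huv, Or.inr h⟩
    have h1 : (starGraph n).Adj u ⟨0, by omega⟩ :=
      ⟨fun h => hu0 (by rw [h]), Or.inr rfl⟩
    have h2 : (starGraph n).Adj (⟨0, by omega⟩ : Fin n) v :=
      ⟨fun h => hv0 (by rw [← h]), Or.inl rfl⟩
    have hle : (starGraph n).dist u v ≤ 2 := by
      simpa using SimpleGraph.dist_le
        (SimpleGraph.Walk.cons h1 (SimpleGraph.Walk.cons h2 SimpleGraph.Walk.nil))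
    have hpos : 0 < (starGraph n).dist u v :=
      SimpleGraph.Reachable.pos_dist_of_ne
        ⟨SimpleGraph.Walk.cons h1 (SimpleGraph.Walk.cons h2 SimpleGraph.Walk.nil)⟩ huv
    have hne1 : (starGraph n).dist u v ≠ 1 := by
      intro h; exact hadj (SimpleGraph.dist_eq_one_iff_adj.mp h)
    have h2' : (starGraph n).dist u v = 2 := by omega
    simp [h2', huv, hadj]

lemma star_wiener {n : ℕ} (hn : 2 ≤ n) :
    wienerIndex (starGraph n) = ((n : ℝ) - 1) ^ 2 := by
  classical
  set z : Fin n := ⟨0, by omega⟩ with hzdef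
  have key : ∑ u, ∑ v, ((starGraph n).dist u v : ℝ) = 2 * ((n : ℝ) - 1) ^ 2 := by
    have hd := star_dist hn
    calc ∑ u, ∑ v, ((starGraph n).dist u v : ℝ)
        = ∑ u : Fin n, ((2 * n - 2) - ∑ v, (if (starGraph n).Adj u v then (1:ℝ) else 0)) := by
          refine Finset.sum_congr rfl fun u _ => ?_
          simp_rw [hd u]
          rw [Finset.sum_sub_distrib, Finset.sum_sub_distrib,
            Finset.sum_ite_eq Finset.univ u (fun _ => (2:ℝ))]
          simp [Finset.card_univ, mul_comm]
      _ = ∑ u : Fin n, ((2 * n - 2) - if u = z then (n : ℝ) - 1 else 1) := by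
          refine Finset.sum_congr rfl fun u _ => ?_
          rw [star_adjsum hn u]
      _ = 2 * ((n : ℝ) - 1) ^ 2 := by
          rw [Finset.sum_sub_distrib]
          have : ∀ u : Fin n, (if u = z then (n : ℝ) - 1 else 1)
              = 1 + if u = z then (n : ℝ) - 2 else 0 := by
            intro u; by_cases hu : u = z <;> simp [hu] <;> ring
          simp_rw [this]
          rw [Finset.sum_add_distrib, Finset.sum_ite_eq' Finset.univ z (fun _ => (n:ℝ)-2)]
          simp [Finset.card_univ]
          ring
  simp only [wienerIndex]
  rw [key]; ring

end Aux
/-- A tree of order `n ≥ 4` other than the star satisfies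
`W(G) ≥ n² − n − 2 > W(S_n) = (n−1)²`. -/
theorem stmt_7 {n : ℕ} (G : SimpleGraph (Fin n)) (hT : G.IsTree) (hn : 4 ≤ n)
    (hns : ¬ Nonempty (G ≃g starGraph n)) :
    wienerIndex G ≥ (n : ℝ) ^ 2 - n - 2 ∧
    (n : ℝ) ^ 2 - n - 2 > wienerIndex (starGraph n) ∧
    wienerIndex (starGraph n) = ((n : ℝ) - 1) ^ 2 := by
  have h2n : 2 ≤ n := by omega
  refine ⟨main_bound hT hn hns, ?_, star_wiener h2n⟩
  rw [star_wiener h2n]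
  have : (4 : ℝ) ≤ (n : ℝ) := by exact_mod_cast hn
  nlinarith
end

section
/- Let G be a connected unicyclic graph of order n ≥ 6 that is not isomorphic to S_n^+. Then its Wiener index satisfies W(G) ≥ n² − n − 4 > W(S_n^+) = n² − 2n. -/
open Matrix

open Finset SimpleGraph

variable {V : Type} [Fintype V] [DecidableEq V]

set_option linter.unusedSectionVars false

/-- walks can avoid a vertex of degree ≤ 1 that is not an endpoint -/
lemma walk_avoid (G : SimpleGraph V) [DecidableRel G.Adj] {u : V} (hdeg : G.degree u ≤ 1) :
    ∀ (N : ℕ) {v w : V}, v ≠ u → w ≠ u → ∀ (p : G.Walk v w), p.length ≤ N →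
      ∃ q : G.Walk v w, u ∉ q.support ∧ q.length ≤ p.length := by
  intro N
  induction N with
  | zero =>
    intro v w hv hw p hp
    cases p with
    | nil => exact ⟨.nil, by simp [Ne.symm hv], le_refl _⟩
    | cons h q => simp [SimpleGraph.Walk.length_cons] at hp
  | succ N ih =>
    intro v w hv hw p hp
    cases p with
    | nil => exact ⟨.nil, by simp [Ne.symm hv], le_refl _⟩
    | @cons _ x _ h q =>
      by_cases hx : x = u
      · subst hx
        cases q with
        | nil => exact absurd rfl hw
        | @cons _ y _ h' r =>
          have hyv : y = v := by
            have h1 : v ∈ G.neighborFinset x := by simp [SimpleGraph.mem_neighborFinset, h.symm]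
            have h2 : y ∈ G.neighborFinset x := by simp [SimpleGraph.mem_neighborFinset, h']
            exact (Finset.card_le_one.mp hdeg _ h2 _ h1)
          subst hyv
          have hr : r.length ≤ N := by
            simp only [SimpleGraph.Walk.length_cons] at hp ⊢
            omega
          obtain ⟨q', hq1, hq2⟩ := ih hv hw r (by omega)
          exact ⟨q', hq1, by simp only [SimpleGraph.Walk.length_cons]; omega⟩
      · obtain ⟨q', hq1, hq2⟩ := ih hx hw q
          (by simp only [SimpleGraph.Walk.length_cons] at hp; omega)
        refine ⟨.cons h q', ?_, by simp only [SimpleGraph.Walk.length_cons]; omega⟩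
        simp only [SimpleGraph.Walk.support_cons, List.mem_cons]
        rintro (rfl | hm)
        · exact hv rfl
        · exact hq1 hm

/-- lift a walk avoiding u into the induced subgraph -/
lemma walk_lift (G : SimpleGraph V) {u : V} :
    ∀ {a b : V} (p : G.Walk a b) (ha : a ≠ u) (hb : b ≠ u), u ∉ p.support →
      ∃ q : (G.induce {x : V | x ≠ u}).Walk ⟨a, ha⟩ ⟨b, hb⟩, q.length = p.length := by
  intro a b p
  induction p with
  | nil => intro ha hb _; exact ⟨.nil, rfl⟩
  | @cons a x b h p ih =>
    intro ha hb hsup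
    simp only [SimpleGraph.Walk.support_cons, List.mem_cons] at hsup
    push_neg at hsup
    have hx : x ≠ u := by
      intro hxu
      exact hsup.2 (hxu ▸ p.start_mem_support)
    obtain ⟨q, hq⟩ := ih hx hb hsup.2
    have hadj : (G.induce {x : V | x ≠ u}).Adj ⟨a, ha⟩ ⟨x, hx⟩ := h
    exact ⟨.cons hadj q, by simp [SimpleGraph.Walk.length_cons, hq]⟩

lemma pendant_dist (G : SimpleGraph V) [DecidableRel G.Adj] (hG : G.Connected) {u : V}
    (hdeg : G.degree u = 1) {v w : V} (hv : v ≠ u) (hw : w ≠ u) :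
    (G.induce {x : V | x ≠ u}).dist ⟨v, hv⟩ ⟨w, hw⟩ = G.dist v w := by
  obtain ⟨p, hp⟩ := hG.exists_walk_length_eq_dist v w
  obtain ⟨p', hp1, hp2⟩ := walk_avoid G (le_of_eq hdeg) p.length hv hw p le_rfl
  obtain ⟨q, hq⟩ := walk_lift G p' hv hw hp1
  have hle : (G.induce {x : V | x ≠ u}).dist ⟨v, hv⟩ ⟨w, hw⟩ ≤ G.dist v w := by
    calc _ ≤ q.length := SimpleGraph.dist_le q
    _ = p'.length := hq
    _ ≤ p.length := hp2
    _ = G.dist v w := hp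
  have hreach : (G.induce {x : V | x ≠ u}).Reachable ⟨v, hv⟩ ⟨w, hw⟩ := ⟨q⟩
  obtain ⟨q₀, hq₀⟩ := hreach.exists_walk_length_eq_dist
  have hge : G.dist v w ≤ (G.induce {x : V | x ≠ u}).dist ⟨v, hv⟩ ⟨w, hw⟩ := by
    have := SimpleGraph.dist_le (q₀.map (SimpleGraph.Embedding.induce _).toHom)
    rwa [SimpleGraph.Walk.length_map, hq₀] at this
  omega

lemma pendant_connected (G : SimpleGraph V) [DecidableRel G.Adj] (hG : G.Connected) {u : V}
    (hdeg : G.degree u = 1) (hcard : 2 ≤ Fintype.card V) :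
    (G.induce {x : V | x ≠ u}).Connected := by
  have hne : Nonempty {x : V | x ≠ u} := by
    obtain ⟨w, hw⟩ := Fintype.exists_ne_of_one_lt_card (by omega) u
    exact ⟨⟨w, hw⟩⟩
  rw [SimpleGraph.connected_iff]
  refine ⟨fun a b => ?_, hne⟩
  obtain ⟨p⟩ := hG (a : V) (b : V)
  obtain ⟨p', hp1, _⟩ := walk_avoid G (le_of_eq hdeg) p.length a.2 b.2 p le_rfl
  obtain ⟨q, _⟩ := walk_lift G p' a.2 b.2 hp1
  exact ⟨(by exact q : (G.induce {x : V | x ≠ u}).Walk ⟨a.1, a.2⟩ ⟨b.1, b.2⟩).copy (by simp) (by simp)⟩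

noncomputable def Dsum' (G : SimpleGraph V) : ℕ := ∑ u, ∑ v, G.dist u v
noncomputable def trsum' (G : SimpleGraph V) (u : V) : ℕ := ∑ v, G.dist u v


lemma two_le_dist_of (G : SimpleGraph V) (hG : G.Connected) {u v : V} (hne : u ≠ v)
    (hna : ¬ G.Adj u v) : 2 ≤ G.dist u v := by
  have h1 := hG.pos_dist_of_ne hne
  have h2 : G.dist u v ≠ 1 := fun h => hna ((dist_eq_one_iff_adj (G := G)).mp h)
  omega

/-- Main per-vertex transmission lower bound. -/
lemma tsum_ge (G : SimpleGraph V) [DecidableRel G.Adj] (hG : G.Connected) (u : V)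
    (S : Finset V) (huS : u ∈ S) (hNS : G.neighborFinset u ⊆ S)
    (hS : ∀ v, v ∉ S → 3 ≤ G.dist u v) :
    3 * Fintype.card V ≤ trsum' G u + 2 + G.degree u + S.card := by
  classical
  set h : V → ℕ := fun v => if v = u then 3 else if G.Adj u v then 2 else if v ∈ S then 1 else 0 with hh
  have hpt : ∀ v, 3 ≤ G.dist u v + h v := by
    intro v
    by_cases hvu : v = u
    · simp [hh, hvu]
    by_cases hadj : G.Adj u v
    · have : G.dist u v = 1 := (dist_eq_one_iff_adj (G := G)).mpr hadj
      simp [hh, hvu, hadj, this]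
    by_cases hvS : v ∈ S
    · have := two_le_dist_of G hG (Ne.symm hvu) hadj
      simp only [hh, hvu, hadj, hvS, if_false, if_true]
      omega
    · have := hS v hvS
      omega
  have hsum : 3 * Fintype.card V ≤ trsum' G u + ∑ v, h v := by
    calc 3 * Fintype.card V = ∑ _v : V, 3 := by simp [mul_comm]
    _ ≤ ∑ v, (G.dist u v + h v) := Finset.sum_le_sum (fun v _ => hpt v)
    _ = trsum' G u + ∑ v, h v := by rw [Finset.sum_add_distrib]; rfl
  -- bound ∑ h
  have hbound : ∑ v, h v ≤ 2 + G.degree u + S.card := by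
    have hptb : ∀ v, h v ≤ (if v = u then 3 else 0) + (if G.Adj u v then 2 else 0)
        + (if v ∈ S \ insert u (G.neighborFinset u) then 1 else 0) := by
      intro v
      by_cases hvu : v = u
      · simp [hh, hvu]
      by_cases hadj : G.Adj u v
      · simp [hh, hvu, hadj]
      by_cases hvS : v ∈ S
      · simp [hh, hvu, hadj, hvS, Finset.mem_sdiff, Finset.mem_insert,
          SimpleGraph.mem_neighborFinset]
      · simp [hh, hvu, hadj, hvS]
    have h1 : ∑ v : V, (if v = u then (3:ℕ) else 0) = 3 := by
      simp [Finset.sum_ite_eq']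
    have h2 : ∑ v : V, (if G.Adj u v then (2:ℕ) else 0) = 2 * G.degree u := by
      rw [Finset.sum_ite, Finset.sum_const, Finset.sum_const]
      simp [SimpleGraph.degree, SimpleGraph.neighborFinset_eq_filter, mul_comm]
    have h3 : ∑ v : V, (if v ∈ S \ insert u (G.neighborFinset u) then (1:ℕ) else 0)
        = (S \ insert u (G.neighborFinset u)).card := by
      rw [← Finset.card_filter]
      congr 1
      ext v
      simp
    have h4 : (S \ insert u (G.neighborFinset u)).card + (1 + G.degree u) = S.card := by
      have hsub : insert u (G.neighborFinset u) ⊆ S := by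
        intro x hx
        rcases Finset.mem_insert.mp hx with h | h
        · exact h ▸ huS
        · exact hNS h
      have hcard : (insert u (G.neighborFinset u)).card = 1 + G.degree u := by
        rw [Finset.card_insert_of_notMem (by simp), SimpleGraph.degree]
        omega
      rw [Finset.card_sdiff_of_subset hsub, hcard]
      have := Finset.card_le_card hsub
      rw [hcard] at this
      omega
    calc ∑ v, h v ≤ ∑ v : V, ((if v = u then 3 else 0) + (if G.Adj u v then 2 else 0)
        + (if v ∈ S \ insert u (G.neighborFinset u) then 1 else 0)) :=
          Finset.sum_le_sum (fun v _ => hptb v)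
      _ = 3 + 2 * G.degree u + (S \ insert u (G.neighborFinset u)).card := by
          rw [Finset.sum_add_distrib, Finset.sum_add_distrib, h1, h2, h3]
      _ ≤ 2 + G.degree u + S.card := by omega
  omega

/-- Baseline: summing over all vertices. -/
lemma baseline (G : SimpleGraph V) [DecidableRel G.Adj] (hG : G.Connected) (u : V) :
    2 * Fintype.card V ≤ trsum' G u + 2 + G.degree u := by
  have := tsum_ge G hG u Finset.univ (Finset.mem_univ u) (Finset.subset_univ _)
    (fun v hv => absurd (Finset.mem_univ v) hv)
  rw [Finset.card_univ] at this
  omega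

lemma pendant_degree (G : SimpleGraph V) [DecidableRel G.Adj] {u : V}
    [DecidableRel (G.induce {x : V | x ≠ u}).Adj]
    {v : V} (hv : v ≠ u) :
    (G.induce {x : V | x ≠ u}).degree ⟨v, hv⟩ + (if G.Adj v u then 1 else 0) = G.degree v := by
  classical
  have h1 : (G.induce {x : V | x ≠ u}).degree ⟨v, hv⟩
      = Fintype.card {y : {x : V | x ≠ u} // G.Adj v ↑y} := by
    rw [← SimpleGraph.card_neighborSet_eq_degree]
    apply Fintype.card_congr
    apply Equiv.subtypeEquivRight
    intro y
    rfl
  have e : {y : {x : V | x ≠ u} // G.Adj v ↑y} ≃ {y : V // y ≠ u ∧ G.Adj v y} :=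
    { toFun := fun a => ⟨a.1.1, a.1.2, a.2⟩
      invFun := fun a => ⟨⟨a.1, a.2.1⟩, a.2.2⟩
      left_inv := fun a => rfl
      right_inv := fun a => rfl }
  rw [h1, Fintype.card_congr e, Fintype.card_subtype]
  have h2 : Finset.filter (fun y => y ≠ u ∧ G.Adj v y) Finset.univ
      = (G.neighborFinset v).erase u := by
    ext y
    simp [SimpleGraph.mem_neighborFinset, and_comm]
  rw [h2]
  by_cases hadj : G.Adj v u
  · rw [Finset.card_erase_of_mem (by simpa [SimpleGraph.mem_neighborFinset] using hadj)]
    have hd : G.degree v = (G.neighborFinset v).card := rfl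
    have : 0 < G.degree v := by
      rw [SimpleGraph.degree_pos_iff_exists_adj]; exact ⟨u, hadj⟩
    simp only [hadj, if_true]
    omega
  · rw [Finset.erase_eq_of_notMem (by simpa [SimpleGraph.mem_neighborFinset] using hadj)]
    have hd : G.degree v = (G.neighborFinset v).card := rfl
    rw [if_neg hadj, add_zero, hd]

lemma pendant_sum_degrees (G : SimpleGraph V) [DecidableRel G.Adj] {u : V}
    [DecidableRel (G.induce {x : V | x ≠ u}).Adj] :
    (∑ x : {x : V | x ≠ u}, (G.induce {x : V | x ≠ u}).degree x) + 2 * G.degree u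
      = ∑ v : V, G.degree v := by
  classical
  have key : ∀ x : {x : V | x ≠ u}, (G.induce {x : V | x ≠ u}).degree x
      + (if G.Adj ↑x u then 1 else 0) = G.degree ↑x := by
    rintro ⟨v, hv⟩
    exact pendant_degree G (u := u) hv
  have h1 : (∑ x : {x : V | x ≠ u}, (G.induce {x : V | x ≠ u}).degree x)
      + (∑ x : {x : V | x ≠ u}, (if G.Adj ↑x u then 1 else 0))
      = ∑ x : {x : V | x ≠ u}, G.degree ↑x := by
    rw [← Finset.sum_add_distrib]
    exact Finset.sum_congr rfl (fun x _ => key x)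
  have hsub : ∀ (f : V → ℕ), ∑ v ∈ Finset.univ.erase u, f v = ∑ x : {x : V | x ≠ u}, f ↑x := by
    intro f
    exact Finset.sum_subtype (Finset.univ.erase u) (by simp) f
  have h2 : (∑ x : {x : V | x ≠ u}, (if G.Adj ↑x u then 1 else 0)) = G.degree u := by
    rw [← hsub (fun v => if G.Adj v u then 1 else 0)]
    rw [← Finset.card_filter]
    have : Finset.filter (fun v => G.Adj v u) (Finset.univ.erase u) = G.neighborFinset u := by
      ext v
      simp only [Finset.mem_filter, Finset.mem_erase, Finset.mem_univ, true_and,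
        SimpleGraph.mem_neighborFinset, and_true]
      constructor
      · rintro ⟨_, h⟩; exact h.symm
      · intro h; exact ⟨h.ne', h.symm⟩
    rw [this]
    rfl
  have h3 := Finset.sum_erase_add Finset.univ (fun v => G.degree v) (Finset.mem_univ u)
  rw [hsub (fun v => G.degree v)] at h3
  have h3' : (∑ x : {x : V | x ≠ u}, G.degree ↑x) + G.degree u = ∑ v : V, G.degree v := h3
  omega

lemma pendant_edge_card (G : SimpleGraph V) [DecidableRel G.Adj] {u : V}
    [DecidableRel (G.induce {x : V | x ≠ u}).Adj] (hdeg : G.degree u = 1) :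
    (G.induce {x : V | x ≠ u}).edgeFinset.card + 1 = G.edgeFinset.card := by
  have h1 := pendant_sum_degrees G (u := u)
  rw [SimpleGraph.sum_degrees_eq_twice_card_edges, SimpleGraph.sum_degrees_eq_twice_card_edges]
    at h1
  omega

lemma pendant_Dsum (G : SimpleGraph V) [DecidableRel G.Adj] (hG : G.Connected) {u : V}
    (hdeg : G.degree u = 1) :
    Dsum' G = Dsum' (G.induce {x : V | x ≠ u}) + 2 * trsum' G u := by
  classical
  have hsub : ∀ (f : V → ℕ), ∑ v ∈ Finset.univ.erase u, f v = ∑ x : {x : V | x ≠ u}, f ↑x :=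
    fun f => Finset.sum_subtype (Finset.univ.erase u) (by simp) f
  have e2 : ∀ v : V, (∑ w ∈ Finset.univ.erase u, G.dist v w) + G.dist v u = ∑ w : V, G.dist v w :=
    fun v => Finset.sum_erase_add Finset.univ (fun w => G.dist v w) (Finset.mem_univ u)
  have e3 : ∑ v ∈ Finset.univ.erase u, ∑ w ∈ Finset.univ.erase u, G.dist v w
      = Dsum' (G.induce {x : V | x ≠ u}) := by
    rw [hsub (fun v => ∑ w ∈ Finset.univ.erase u, G.dist v w)]
    refine Finset.sum_congr rfl (fun x _ => ?_)
    rw [hsub (fun w => G.dist ↑x w)]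
    refine Finset.sum_congr rfl (fun y _ => ?_)
    exact (pendant_dist G hG hdeg x.2 y.2).symm
  have e4 : ∑ v ∈ Finset.univ.erase u, G.dist v u = ∑ v ∈ Finset.univ.erase u, G.dist u v :=
    Finset.sum_congr rfl (fun v _ => SimpleGraph.dist_comm)
  have e8 : G.dist u u = 0 := SimpleGraph.dist_self
  have e11 : (∑ v ∈ Finset.univ.erase u, G.dist u v) + G.dist u u = trsum' G u :=
    Finset.sum_erase_add Finset.univ (fun w => G.dist u w) (Finset.mem_univ u)
  have key : Dsum' G = Dsum' (G.induce {x : V | x ≠ u})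
      + (∑ v ∈ Finset.univ.erase u, G.dist u v) + trsum' G u := by
    calc Dsum' G = (∑ v ∈ Finset.univ.erase u, ∑ w : V, G.dist v w) + ∑ w : V, G.dist u w :=
          (Finset.sum_erase_add Finset.univ (fun v => ∑ w : V, G.dist v w)
            (Finset.mem_univ u)).symm
      _ = (∑ v ∈ Finset.univ.erase u,
            ((∑ w ∈ Finset.univ.erase u, G.dist v w) + G.dist v u)) + trsum' G u := by
          rw [Finset.sum_congr rfl (fun v _ => (e2 v).symm)]; rfl
      _ = ((∑ v ∈ Finset.univ.erase u, ∑ w ∈ Finset.univ.erase u, G.dist v w)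
            + ∑ v ∈ Finset.univ.erase u, G.dist v u) + trsum' G u := by
          rw [Finset.sum_add_distrib]
      _ = Dsum' (G.induce {x : V | x ≠ u})
            + (∑ v ∈ Finset.univ.erase u, G.dist u v) + trsum' G u := by rw [e3, e4]
  omega

def IsUniv (G : SimpleGraph V) : Prop := ∃ c, ∀ v, v ≠ c → G.Adj c v

lemma degree_all_pos (G : SimpleGraph V) [DecidableRel G.Adj] (hG : G.Connected)
    (hcard : 2 ≤ Fintype.card V) (v : V) : 1 ≤ G.degree v := by
  rw [Nat.one_le_iff_ne_zero, Ne, ← Nat.le_zero, ← Nat.not_lt_eq,  Classical.not_not]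
  rw [SimpleGraph.degree_pos_iff_exists_adj]
  obtain ⟨w, hw⟩ := Fintype.exists_ne_of_one_lt_card (by omega) v
  obtain ⟨p⟩ := hG v w
  cases p with
  | nil => exact absurd rfl hw
  | cons h _ => exact ⟨_, h⟩

lemma pendant_or_two (G : SimpleGraph V) [DecidableRel G.Adj] (hG : G.Connected)
    (hcard : 2 ≤ Fintype.card V) (hedge : ∑ v : V, G.degree v = 2 * Fintype.card V) :
    (∃ u, G.degree u = 1) ∨ (∀ u, G.degree u = 2) := by
  by_cases h1 : ∃ u, G.degree u = 1
  · exact Or.inl h1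
  push_neg at h1
  right
  have hge : ∀ u : V, 2 ≤ G.degree u := by
    intro u
    have := degree_all_pos G hG hcard u
    have := h1 u
    omega
  have : ∑ v : V, (2:ℕ) = ∑ v : V, G.degree v := by
    rw [hedge, Finset.sum_const, Finset.card_univ]
    ring
  have := (Finset.sum_eq_sum_iff_of_le (fun i _ => hge i)).mp this
  intro u
  exact (this u (Finset.mem_univ u)).symm

lemma univ_other_deg_le_two (G : SimpleGraph V) [DecidableRel G.Adj] (hG : G.Connected)
    (hcard : 4 ≤ Fintype.card V) (hedge : ∑ v : V, G.degree v = 2 * Fintype.card V)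
    {c : V} (hc : ∀ v, v ≠ c → G.Adj c v) {w : V} (hw : w ≠ c) : G.degree w ≤ 2 := by
  by_contra hdeg
  push_neg at hdeg
  have h2 : 2 ≤ ((G.neighborFinset w).erase c).card := by
    have hd : G.degree w = (G.neighborFinset w).card := rfl
    by_cases hm : c ∈ G.neighborFinset w
    · rw [Finset.card_erase_of_mem hm]
      omega
    · rw [Finset.erase_eq_of_notMem hm]
      omega
  obtain ⟨x, hx, y, hy, hxy⟩ :=
    Finset.one_lt_card.mp (show 1 < ((G.neighborFinset w).erase c).card by omega)
  rw [Finset.mem_erase, SimpleGraph.mem_neighborFinset] at hx hy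
  -- degrees
  have hdegc : Fintype.card V - 1 ≤ G.degree c := by
    have hsub : Finset.univ.erase c ⊆ G.neighborFinset c := by
      intro t ht
      rw [Finset.mem_erase] at ht
      rw [SimpleGraph.mem_neighborFinset]
      exact hc t ht.1
    have := Finset.card_le_card hsub
    rw [Finset.card_erase_of_mem (Finset.mem_univ c), Finset.card_univ] at this
    exact this
  have hdegx : 2 ≤ G.degree x := by
    have hsub : ({c, w} : Finset V) ⊆ G.neighborFinset x := by
      intro t ht
      rw [SimpleGraph.mem_neighborFinset]
      rcases Finset.mem_insert.mp ht with rfl | ht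
      · exact (hc x hx.1).symm
      · rw [Finset.mem_singleton] at ht
        subst ht
        exact hx.2.symm
    have := Finset.card_le_card hsub
    rwa [Finset.card_pair (fun h => hw h.symm)] at this
  have hdegy : 2 ≤ G.degree y := by
    have hsub : ({c, w} : Finset V) ⊆ G.neighborFinset y := by
      intro t ht
      rw [SimpleGraph.mem_neighborFinset]
      rcases Finset.mem_insert.mp ht with rfl | ht
      · exact (hc y hy.1).symm
      · rw [Finset.mem_singleton] at ht
        subst ht
        exact hy.2.symm
    have := Finset.card_le_card hsub
    rwa [Finset.card_pair (fun h => hw h.symm)] at this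
  -- the four vertices are distinct
  have hxw : x ≠ w := fun h => G.irrefl (h ▸ hx.2)
  have hyw : y ≠ w := fun h => G.irrefl (h ▸ hy.2)
  have hA : ({c, w, x, y} : Finset V).card = 4 := by
    rw [Finset.card_insert_of_notMem (by simp [Ne.symm hw, Ne.symm hx.1, Ne.symm hy.1]),
      Finset.card_insert_of_notMem (by simp [Ne.symm hxw, Ne.symm hyw]),
      Finset.card_pair hxy]
  have hsplit : (∑ v ∈ Finset.univ \ ({c, w, x, y} : Finset V), G.degree v)
      + ∑ v ∈ ({c, w, x, y} : Finset V), G.degree v = ∑ v : V, G.degree v :=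
    Finset.sum_sdiff (Finset.subset_univ _)
  have hsumA : (Fintype.card V - 1) + 3 + 2 + 2 ≤ ∑ v ∈ ({c, w, x, y} : Finset V), G.degree v := by
    rw [Finset.sum_insert (by simp [Ne.symm hw, Ne.symm hx.1, Ne.symm hy.1]),
      Finset.sum_insert (by simp [Ne.symm hxw, Ne.symm hyw]),
      Finset.sum_pair hxy]
    omega
  have hrest : Fintype.card V - 4 ≤ ∑ v ∈ Finset.univ \ ({c, w, x, y} : Finset V), G.degree v := by
    calc Fintype.card V - 4 = (Finset.univ \ ({c, w, x, y} : Finset V)).card := by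
          rw [Finset.card_sdiff_of_subset (Finset.subset_univ _), Finset.card_univ, hA]
      _ ≤ ∑ v ∈ Finset.univ \ ({c, w, x, y} : Finset V), G.degree v := by
          have := Finset.card_nsmul_le_sum (Finset.univ \ ({c, w, x, y} : Finset V))
            (fun v => G.degree v) 1 (fun v _ => degree_all_pos G hG (by omega) v)
          simpa using this
  omega

lemma dist_two_mid (G : SimpleGraph V) {u v : V} (h2 : G.dist u v = 2)
    (hr : G.Reachable u v) : ∃ y, G.Adj u y ∧ G.Adj y v := by
  obtain ⟨p, hp⟩ := hr.exists_walk_length_eq_dist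
  rw [h2] at hp
  cases p with
  | nil => simp at hp
  | @cons _ y _ h q =>
    cases q with
    | nil => simp at hp
    | @cons _ z _ h' r =>
      cases r with
      | nil => exact ⟨y, h, h'⟩
      | cons h'' r' => simp [SimpleGraph.Walk.length_cons] at hp

lemma unique_nbr (G : SimpleGraph V) [DecidableRel G.Adj] {u w₀ : V} (hdeg : G.degree u = 1)
    (hadj : G.Adj u w₀) {z : V} (hz : G.Adj u z) : z = w₀ := by
  have h1 : z ∈ G.neighborFinset u := by rwa [SimpleGraph.mem_neighborFinset]
  have h2 : w₀ ∈ G.neighborFinset u := by rwa [SimpleGraph.mem_neighborFinset]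
  exact Finset.card_le_one.mp (le_of_eq hdeg) _ h1 _ h2

lemma ball2_pendant (G : SimpleGraph V) [DecidableRel G.Adj] (hG : G.Connected) {u w₀ : V}
    (hdeg : G.degree u = 1) (hadj : G.Adj u w₀) :
    ∀ v, v ∉ insert w₀ (G.neighborFinset w₀) → 3 ≤ G.dist u v := by
  intro v hv
  simp only [Finset.mem_insert, SimpleGraph.mem_neighborFinset] at hv
  push_neg at hv
  have hvu : v ≠ u := by
    rintro rfl
    exact hv.2 hadj.symm
  have h0 : G.dist u v ≠ 0 := by
    have := hG.pos_dist_of_ne (Ne.symm hvu)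
    omega
  have h1 : G.dist u v ≠ 1 := by
    intro h
    have := (SimpleGraph.dist_eq_one_iff_adj (G := G)).mp h
    exact hv.1 (unique_nbr G hdeg hadj this)
  have h2 : G.dist u v ≠ 2 := by
    intro h
    obtain ⟨y, hy1, hy2⟩ := dist_two_mid G h (hG u v)
    have : y = w₀ := unique_nbr G hdeg hadj hy1
    subst this
    exact hv.2 hy2
  omega

lemma far_of_not_univ (G : SimpleGraph V) [DecidableRel G.Adj] (hG : G.Connected) {u w₀ : V}
    (hdeg : G.degree u = 1) (hadj : G.Adj u w₀) (hnu : ¬ IsUniv G) :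
    ∃ z, 3 ≤ G.dist u z := by
  rw [IsUniv] at hnu
  push_neg at hnu
  obtain ⟨z, hz1, hz2⟩ := hnu w₀
  refine ⟨z, ball2_pendant G hG hdeg hadj z ?_⟩
  simp only [Finset.mem_insert, SimpleGraph.mem_neighborFinset]
  push_neg
  exact ⟨hz1, hz2⟩

lemma baseline_sum (G : SimpleGraph V) [DecidableRel G.Adj] (hG : G.Connected) :
    2 * Fintype.card V * Fintype.card V
      ≤ Dsum' G + 2 * Fintype.card V + ∑ v : V, G.degree v := by
  have key : ∀ u : V, 2 * Fintype.card V ≤ trsum' G u + 2 + G.degree u :=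
    fun u => baseline G hG u
  calc 2 * Fintype.card V * Fintype.card V = ∑ _u : V, 2 * Fintype.card V := by
        rw [Finset.sum_const, Finset.card_univ]; ring
    _ ≤ ∑ u : V, (trsum' G u + 2 + G.degree u) := Finset.sum_le_sum (fun u _ => key u)
    _ = Dsum' G + 2 * Fintype.card V + ∑ v : V, G.degree v := by
        rw [Finset.sum_add_distrib, Finset.sum_add_distrib, Finset.sum_const, Finset.card_univ]
        have hd : Dsum' G = ∑ x : V, trsum' G x := rfl
        rw [hd]
        simp only [smul_eq_mul]
        ring

lemma card_ne_subtype {u : V} : Fintype.card {x : V | x ≠ u} + 1 = Fintype.card V := by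
  rw [Fintype.card_subtype]
  have : Finset.filter (fun x => x ∈ {x : V | x ≠ u}) Finset.univ = Finset.univ.erase u := by
    ext v
    simp [Finset.mem_erase]
  rw [this, Finset.card_erase_of_mem (Finset.mem_univ u), Finset.card_univ]
  have : 1 ≤ Fintype.card V := Fintype.card_pos_iff.mpr ⟨u⟩
  omega

lemma main_L : ∀ n : ℕ, ∀ (V : Type) [Fintype V] [DecidableEq V] (G : SimpleGraph V)
    [DecidableRel G.Adj], Fintype.card V = n → 4 ≤ n →
    G.Connected → G.edgeFinset.card = n →
    (5 ≤ n → ¬ IsUniv G) → (5 ≤ n → ∃ u, G.degree u = 1) →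
    2 * n * n ≤ Dsum' G + 2 * n + 8 := by
  intro n
  induction n using Nat.strong_induction_on with
  | _ n ih =>
  intro V _ _ G _ hcard hn hconn hedge hu hp
  have hdegsum : ∑ v : V, G.degree v = 2 * n := by
    rw [SimpleGraph.sum_degrees_eq_twice_card_edges, hedge]
  by_cases h4 : n = 4
  · subst h4
    have := baseline_sum G hconn
    rw [hcard, hdegsum] at this
    omega
  · have hn5 : 5 ≤ n := by omega
    obtain ⟨u, hdeg⟩ := hp hn5
    obtain ⟨w₀, hadj⟩ : ∃ w₀, G.Adj u w₀ := by
      rw [← SimpleGraph.degree_pos_iff_exists_adj]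
      omega
    haveI hdecH : DecidableRel (G.induce {x : V | x ≠ u}).Adj :=
      fun a b => inferInstanceAs (Decidable (G.Adj a.1 b.1))
    set m := n - 1 with hm
    have hnm : n = m + 1 := by omega
    have hcardH : Fintype.card {x : V | x ≠ u} = m := by
      have := card_ne_subtype (V := V) (u := u)
      omega
    have hHconn := pendant_connected G hconn hdeg (by omega)
    have hHedge : (G.induce {x : V | x ≠ u}).edgeFinset.card = m := by
      have := pendant_edge_card G hdeg
      omega
    have hHdegsum : ∑ x : {x : V | x ≠ u}, (G.induce {x : V | x ≠ u}).degree x = 2 * m := by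
      rw [SimpleGraph.sum_degrees_eq_twice_card_edges, hHedge]
    have hsplit := pendant_Dsum G hconn hdeg
    have hUG : ¬ IsUniv G := hu hn5
    have hw0u : w₀ ≠ u := hadj.ne'
    -- t(u) ≥ 2n - 2
    obtain ⟨z, hz⟩ := far_of_not_univ G hconn hdeg hadj hUG
    have hd1 : G.dist u w₀ = 1 := (SimpleGraph.dist_eq_one_iff_adj (G := G)).mpr hadj
    have hzu : u ≠ z := by
      rintro rfl
      rw [SimpleGraph.dist_self] at hz
      omega
    have hzw : w₀ ≠ z := by
      rintro rfl
      omega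
    have ht1 : 2 * m ≤ trsum' G u := by
      have hS := tsum_ge G hconn u (Finset.univ.erase z)
        (Finset.mem_erase.mpr ⟨hzu, Finset.mem_univ u⟩)
        (by
          intro x hx
          rw [SimpleGraph.mem_neighborFinset] at hx
          have : x = w₀ := unique_nbr G hdeg hadj hx
          subst this
          exact Finset.mem_erase.mpr ⟨hzw, Finset.mem_univ x⟩)
        (by
          intro v hv
          have : v = z := by
            by_contra hne
            exact hv (Finset.mem_erase.mpr ⟨hne, Finset.mem_univ v⟩)
          subst this
          exact hz)
      rw [hcard, hdeg, Finset.card_erase_of_mem (Finset.mem_univ z), Finset.card_univ, hcard]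
        at hS
      omega
    have hsq : n * n = m * m + 2 * m + 1 := by rw [hnm]; ring
    by_cases hcase : IsUniv (G.induce {x : V | x ≠ u})
        ∨ (∀ x, (G.induce {x : V | x ≠ u}).degree x = 2)
    · -- Case B : G - u is a star-plus or a cycle; use baseline + strong t-bound
      have hdegw : (G.induce {x : V | x ≠ u}).degree ⟨w₀, hw0u⟩ ≤ 2 := by
        rcases hcase with ⟨c, hc⟩ | hall
        · -- universal vertex in H
          have hcw : (c : V) ≠ w₀ := by
            rintro hcw
            apply hUG
            refine ⟨w₀, fun v hv => ?_⟩
            by_cases hvu : v = u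
            · subst hvu
              exact hadj.symm
            · have hx : (⟨v, hvu⟩ : {x : V | x ≠ u}) ≠ c := by
                intro h
                apply hv
                rw [← hcw, ← h]
              have h2 : G.Adj (↑c) v := hc ⟨v, hvu⟩ hx
              rwa [hcw] at h2
          exact univ_other_deg_le_two (G.induce {x : V | x ≠ u}) hHconn
            (by omega) (by rw [hHdegsum, hcardH]) hc
            (fun h => hcw (congrArg Subtype.val h).symm)
        · exact le_of_eq (hall _)
      have hdegw' : G.degree w₀ ≤ 3 := by
        have := pendant_degree G (u := u) hw0u
        rw [if_pos hadj.symm] at this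
        omega
      have ht2 : 3 * m ≤ trsum' G u + 4 := by
        have hS := tsum_ge G hconn u (insert w₀ (G.neighborFinset w₀))
          (Finset.mem_insert_of_mem (by rw [SimpleGraph.mem_neighborFinset]; exact hadj.symm))
          (by
            intro x hx
            rw [SimpleGraph.mem_neighborFinset] at hx
            have : x = w₀ := unique_nbr G hdeg hadj hx
            subst this
            exact Finset.mem_insert_self _ _)
          (ball2_pendant G hconn hdeg hadj)
        have hcardS : (insert w₀ (G.neighborFinset w₀)).card ≤ 4 := by
          have h1 := Finset.card_insert_le w₀ (G.neighborFinset w₀)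
          have h2 : (G.neighborFinset w₀).card = G.degree w₀ := rfl
          omega
        rw [hcard, hdeg] at hS
        omega
      have hbase := baseline_sum (G.induce {x : V | x ≠ u}) hHconn
      rw [hcardH, hHdegsum] at hbase
      have e1 : 2 * m * m = 2 * (m * m) := by ring
      have e2 : 2 * n * n = 2 * (n * n) := by ring
      omega
    · -- Case A : use the induction hypothesis on G - u
      push_neg at hcase
      obtain ⟨hnuH, hndH⟩ := hcase
      have hpendH : ∃ x, (G.induce {x : V | x ≠ u}).degree x = 1 := by
        rcases pendant_or_two (G.induce {x : V | x ≠ u}) hHconn (by omega)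
          (by rw [hHdegsum, hcardH]) with h | h
        · exact h
        · obtain ⟨x0, hx0⟩ := hndH
          exact absurd (h x0) hx0
      have hIH := ih m (by omega) {x : V | x ≠ u} (G.induce {x : V | x ≠ u})
        hcardH (by omega) hHconn hHedge (fun _ => hnuH) (fun _ => hpendH)
      have e1 : 2 * m * m = 2 * (m * m) := by ring
      have e2 : 2 * n * n = 2 * (n * n) := by ring
      omega


lemma alldeg2_tsum (G : SimpleGraph V) [DecidableRel G.Adj] (hG : G.Connected)
    (hall : ∀ v, G.degree v = 2) (u : V) :
    3 * Fintype.card V ≤ trsum' G u + 9 := by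
  classical
  set S : Finset V := insert u ((G.neighborFinset u)
    ∪ (G.neighborFinset u).biUnion (fun y => (G.neighborFinset y).erase u)) with hSdef
  have hcardS : S.card ≤ 5 := by
    have h1 : (G.neighborFinset u).card = 2 := hall u
    have h2 : ((G.neighborFinset u).biUnion (fun y => (G.neighborFinset y).erase u)).card
        ≤ 2 := by
      calc ((G.neighborFinset u).biUnion (fun y => (G.neighborFinset y).erase u)).card
          ≤ ∑ y ∈ G.neighborFinset u, ((G.neighborFinset y).erase u).card :=
            Finset.card_biUnion_le
        _ ≤ ∑ _y ∈ G.neighborFinset u, 1 := by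
            apply Finset.sum_le_sum
            intro y hy
            rw [SimpleGraph.mem_neighborFinset] at hy
            have hmem : u ∈ G.neighborFinset y := by
              rw [SimpleGraph.mem_neighborFinset]; exact hy.symm
            rw [Finset.card_erase_of_mem hmem]
            have : (G.neighborFinset y).card = 2 := hall y
            omega
        _ = 2 := by rw [Finset.sum_const, h1]; simp
    calc S.card ≤ ((G.neighborFinset u)
        ∪ (G.neighborFinset u).biUnion (fun y => (G.neighborFinset y).erase u)).card + 1 :=
          Finset.card_insert_le _ _
      _ ≤ (G.neighborFinset u).card
          + ((G.neighborFinset u).biUnion (fun y => (G.neighborFinset y).erase u)).card + 1 := by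
          have := Finset.card_union_le (G.neighborFinset u)
            ((G.neighborFinset u).biUnion (fun y => (G.neighborFinset y).erase u))
          omega
      _ ≤ 5 := by omega
  have hfar : ∀ v, v ∉ S → 3 ≤ G.dist u v := by
    intro v hv
    have hvu : v ≠ u := by
      rintro rfl
      exact hv (Finset.mem_insert_self _ _)
    have h0 : G.dist u v ≠ 0 := by
      have := hG.pos_dist_of_ne (Ne.symm hvu)
      omega
    have h1 : G.dist u v ≠ 1 := by
      intro h
      have hadj := (SimpleGraph.dist_eq_one_iff_adj (G := G)).mp h
      apply hv
      apply Finset.mem_insert_of_mem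
      apply Finset.mem_union_left
      rwa [SimpleGraph.mem_neighborFinset]
    have h2 : G.dist u v ≠ 2 := by
      intro h
      obtain ⟨y, hy1, hy2⟩ := dist_two_mid G h (hG u v)
      apply hv
      apply Finset.mem_insert_of_mem
      apply Finset.mem_union_right
      apply Finset.mem_biUnion.mpr
      refine ⟨y, by rwa [SimpleGraph.mem_neighborFinset], ?_⟩
      rw [Finset.mem_erase, SimpleGraph.mem_neighborFinset]
      exact ⟨hvu, hy2⟩
    omega
  have hS := tsum_ge G hG u S (Finset.mem_insert_self _ _)
    (fun x hx => Finset.mem_insert_of_mem (Finset.mem_union_left _ hx)) hfar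
  rw [hall u] at hS
  omega

lemma alldeg2_bound (G : SimpleGraph V) [DecidableRel G.Adj] (hG : G.Connected)
    (hall : ∀ v, G.degree v = 2) {n : ℕ} (hcard : Fintype.card V = n) (hn : 6 ≤ n) :
    2 * n * n ≤ Dsum' G + 2 * n + 8 := by
  have hsum : 3 * n * n ≤ Dsum' G + 9 * n := by
    calc 3 * n * n = ∑ _u : V, 3 * n := by
          rw [Finset.sum_const, Finset.card_univ, hcard]; ring
      _ ≤ ∑ u : V, (trsum' G u + 9) := by
          apply Finset.sum_le_sum
          intro u _
          have := alldeg2_tsum G hG hall u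
          rw [hcard] at this
          omega
      _ = Dsum' G + 9 * n := by
          rw [Finset.sum_add_distrib, Finset.sum_const, Finset.card_univ, hcard]
          have hd : Dsum' G = ∑ x : V, trsum' G x := rfl
          rw [hd]
          simp only [smul_eq_mul]
          ring
  have key : 7 * n ≤ n * n + 8 := by
    rcases Nat.lt_or_ge n 7 with h | h
    · interval_cases n <;> omega
    · have : 7 * n ≤ n * n := Nat.mul_le_mul_right n h
      omega
  have e1 : 3 * n * n = 3 * (n * n) := by ring
  have e2 : 2 * n * n = 2 * (n * n) := by ring
  omega


section StarPlusFacts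

instance starPlus_decAdj (n : ℕ) : DecidableRel (starPlus n).Adj :=
  fun u v => inferInstanceAs (Decidable (u ≠ v ∧ (u.val = 0 ∨ v.val = 0
    ∨ (u.val = 1 ∧ v.val = 2) ∨ (u.val = 2 ∧ v.val = 1))))

lemma starPlus_dist_eq {n : ℕ} (hn : 6 ≤ n) (u v : Fin n) :
    (starPlus n).dist u v + 2 * (if u = v then 1 else 0)
      + (if (starPlus n).Adj u v then 1 else 0) = 2 := by
  by_cases heq : u = v
  · subst heq
    rw [SimpleGraph.dist_self, if_pos rfl, if_neg (SimpleGraph.irrefl _)]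
  · by_cases hadj : (starPlus n).Adj u v
    · rw [(SimpleGraph.dist_eq_one_iff_adj (G := (starPlus n))).mpr hadj,
        if_neg heq, if_pos hadj]
    · -- distance 2 via the hub
      set z0 : Fin n := ⟨0, by omega⟩ with hz0
      have hu0 : u.val ≠ 0 := by
        intro h
        exact hadj ⟨heq, Or.inl h⟩
      have hv0 : v.val ≠ 0 := by
        intro h
        exact hadj ⟨heq, Or.inr (Or.inl h)⟩
      have h1 : (starPlus n).Adj u z0 := by
        refine ⟨?_, Or.inr (Or.inl rfl)⟩
        intro h
        exact hu0 (by rw [h])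
      have h2 : (starPlus n).Adj z0 v := by
        refine ⟨?_, Or.inl rfl⟩
        intro h
        exact hv0 (by rw [← h])
      have hle : (starPlus n).dist u v ≤ 2 := by
        have := SimpleGraph.dist_le (SimpleGraph.Walk.cons h1
          (SimpleGraph.Walk.cons h2 SimpleGraph.Walk.nil))
        simpa using this
      have hne0 : (starPlus n).dist u v ≠ 0 := by
        intro h
        rcases SimpleGraph.dist_eq_zero_iff_eq_or_not_reachable.mp h with h' | h'
        · exact heq h'
        · exact h' ⟨SimpleGraph.Walk.cons h1 (SimpleGraph.Walk.cons h2 SimpleGraph.Walk.nil)⟩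
      have hne1 : (starPlus n).dist u v ≠ 1 := by
        intro h
        exact hadj ((SimpleGraph.dist_eq_one_iff_adj (G := (starPlus n))).mp h)
      rw [if_neg heq, if_neg hadj]
      omega

lemma starPlus_A {n : ℕ} (hn : 6 ≤ n) :
    ∑ u : Fin n, (Finset.univ.filter (fun v => (starPlus n).Adj u v)).card = 2 * n := by
  set z0 : Fin n := ⟨0, by omega⟩ with hz0
  set z1 : Fin n := ⟨1, by omega⟩ with hz1
  set z2 : Fin n := ⟨2, by omega⟩ with hz2
  have hval : ∀ w : Fin n, w ∉ ({z0, z1, z2} : Finset (Fin n))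
      ↔ (w.val ≠ 0 ∧ w.val ≠ 1 ∧ w.val ≠ 2) := by
    intro w
    simp only [Finset.mem_insert, Finset.mem_singleton, not_or]
    constructor
    · rintro ⟨h0, h1, h2⟩
      refine ⟨fun h => h0 (Fin.ext h), fun h => h1 (Fin.ext h), fun h => h2 (Fin.ext h)⟩
    · rintro ⟨h0, h1, h2⟩
      exact ⟨fun h => h0 (by rw [h]), fun h => h1 (by rw [h]), fun h => h2 (by rw [h])⟩
  have f0 : (Finset.univ.filter (fun v => (starPlus n).Adj z0 v)).card = n - 1 := by
    have : Finset.univ.filter (fun v => (starPlus n).Adj z0 v) = Finset.univ.erase z0 := by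
      ext v
      simp only [Finset.mem_filter, Finset.mem_univ, true_and, Finset.mem_erase, and_true]
      constructor
      · intro h
        exact fun hv => h.1 hv.symm
      · intro h
        exact ⟨fun hv => h hv.symm, Or.inl rfl⟩
    rw [this, Finset.card_erase_of_mem (Finset.mem_univ _), Finset.card_univ, Fintype.card_fin]
  have f1 : (Finset.univ.filter (fun v => (starPlus n).Adj z1 v)).card = 2 := by
    have : Finset.univ.filter (fun v => (starPlus n).Adj z1 v) = {z0, z2} := by
      ext v
      simp only [Finset.mem_filter, Finset.mem_univ, true_and, Finset.mem_insert,
        Finset.mem_singleton]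
      constructor
      · rintro ⟨hne, h⟩
        rcases h with h | h | h | h
        · exact absurd h (by simp [hz1])
        · exact Or.inl (Fin.ext h)
        · exact Or.inr (Fin.ext h.2)
        · exact absurd h.1 (by simp [hz1])
      · rintro (rfl | rfl)
        · exact ⟨by simp [hz0, hz1, Fin.ext_iff], Or.inr (Or.inl rfl)⟩
        · exact ⟨by simp [hz1, hz2, Fin.ext_iff], Or.inr (Or.inr (Or.inl ⟨rfl, rfl⟩))⟩
    rw [this, Finset.card_pair (by simp [hz0, hz2, Fin.ext_iff])]
  have f2 : (Finset.univ.filter (fun v => (starPlus n).Adj z2 v)).card = 2 := by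
    have : Finset.univ.filter (fun v => (starPlus n).Adj z2 v) = {z0, z1} := by
      ext v
      simp only [Finset.mem_filter, Finset.mem_univ, true_and, Finset.mem_insert,
        Finset.mem_singleton]
      constructor
      · rintro ⟨hne, h⟩
        rcases h with h | h | h | h
        · exact absurd h (by simp [hz2])
        · exact Or.inl (Fin.ext h)
        · exact absurd h.1 (by simp [hz2])
        · exact Or.inr (Fin.ext h.2)
      · rintro (rfl | rfl)
        · exact ⟨by simp [hz0, hz2, Fin.ext_iff], Or.inr (Or.inl rfl)⟩
        · exact ⟨by simp [hz1, hz2, Fin.ext_iff], Or.inr (Or.inr (Or.inr ⟨rfl, rfl⟩))⟩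
    rw [this, Finset.card_pair (by simp [hz0, hz1, Fin.ext_iff])]
  have fgen : ∀ u : Fin n, u ∉ ({z0, z1, z2} : Finset (Fin n)) →
      (Finset.univ.filter (fun v => (starPlus n).Adj u v)).card = 1 := by
    intro u hu
    obtain ⟨h0, h1, h2⟩ := (hval u).mp hu
    have : Finset.univ.filter (fun v => (starPlus n).Adj u v) = {z0} := by
      ext v
      simp only [Finset.mem_filter, Finset.mem_univ, true_and, Finset.mem_singleton]
      constructor
      · rintro ⟨hne, h⟩
        rcases h with h | h | h | h
        · exact absurd h h0
        · exact Fin.ext h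
        · exact absurd h.1 h1
        · exact absurd h.1 h2
      · rintro rfl
        refine ⟨fun h => h0 (by rw [h]), Or.inr (Or.inl rfl)⟩
    rw [this, Finset.card_singleton]
  have hcard3 : ({z0, z1, z2} : Finset (Fin n)).card = 3 := by
    rw [Finset.card_insert_of_notMem (by simp [hz0, hz1, hz2, Fin.ext_iff]),
      Finset.card_pair (by simp [hz1, hz2, Fin.ext_iff])]
  have hsplit : (∑ u ∈ Finset.univ \ ({z0, z1, z2} : Finset (Fin n)),
        (Finset.univ.filter (fun v => (starPlus n).Adj u v)).card)
      + ∑ u ∈ ({z0, z1, z2} : Finset (Fin n)),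
        (Finset.univ.filter (fun v => (starPlus n).Adj u v)).card
      = ∑ u : Fin n, (Finset.univ.filter (fun v => (starPlus n).Adj u v)).card :=
    Finset.sum_sdiff (Finset.subset_univ _)
  have hsum3 : ∑ u ∈ ({z0, z1, z2} : Finset (Fin n)),
      (Finset.univ.filter (fun v => (starPlus n).Adj u v)).card = (n - 1) + 2 + 2 := by
    rw [Finset.sum_insert (by simp [hz0, hz1, hz2, Fin.ext_iff]),
      Finset.sum_insert (by simp [hz1, hz2, Fin.ext_iff]),
      Finset.sum_singleton, f0, f1, f2]
    omega
  have hsumgen : ∑ u ∈ Finset.univ \ ({z0, z1, z2} : Finset (Fin n)),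
      (Finset.univ.filter (fun v => (starPlus n).Adj u v)).card = n - 3 := by
    rw [Finset.sum_congr rfl (fun u hu => fgen u (Finset.mem_sdiff.mp hu).2)]
    rw [Finset.sum_const, Finset.card_sdiff_of_subset (Finset.subset_univ _), Finset.card_univ,
      Fintype.card_fin, hcard3]
    simp
  omega

lemma starPlus_Dsum {n : ℕ} (hn : 6 ≤ n) : Dsum' (starPlus n) + 4 * n = 2 * n * n := by
  classical
  have key : ∀ u v : Fin n, (starPlus n).dist u v + 2 * (if u = v then 1 else 0)
      + (if (starPlus n).Adj u v then 1 else 0) = 2 := starPlus_dist_eq hn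
  have hdiag : ∀ u : Fin n, ∑ v : Fin n, (if u = v then (1:ℕ) else 0) = 1 := by
    intro u
    simp [Finset.sum_ite_eq]
  have hA := starPlus_A hn
  have htot : ∀ u : Fin n, (∑ v, (starPlus n).dist u v)
      + 2 * (∑ v : Fin n, (if u = v then 1 else 0))
      + (∑ v : Fin n, (if (starPlus n).Adj u v then 1 else 0)) = 2 * n := by
    intro u
    have hk : ∑ v : Fin n, ((starPlus n).dist u v + 2 * (if u = v then 1 else 0)
        + (if (starPlus n).Adj u v then 1 else 0)) = 2 * n := by
      rw [Finset.sum_congr rfl (fun v _ => key u v), Finset.sum_const, Finset.card_univ,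
        Fintype.card_fin]
      ring
    rw [Finset.sum_add_distrib, Finset.sum_add_distrib, ← Finset.mul_sum] at hk
    exact hk
  have htot2 : (∑ u : Fin n, ∑ v, (starPlus n).dist u v) + 2 * n
      + (∑ u : Fin n, ∑ v : Fin n, (if (starPlus n).Adj u v then 1 else 0)) = 2 * n * n := by
    calc (∑ u : Fin n, ∑ v, (starPlus n).dist u v) + 2 * n
          + (∑ u : Fin n, ∑ v : Fin n, (if (starPlus n).Adj u v then 1 else 0))
        = ∑ u : Fin n, ((∑ v, (starPlus n).dist u v)
            + 2 * (∑ v : Fin n, (if u = v then 1 else 0))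
            + (∑ v : Fin n, (if (starPlus n).Adj u v then 1 else 0))) := by
          rw [Finset.sum_add_distrib, Finset.sum_add_distrib, ← Finset.mul_sum]
          congr 2
          rw [Finset.sum_congr rfl (fun u _ => hdiag u), Finset.sum_const, Finset.card_univ,
            Fintype.card_fin]
          ring
      _ = ∑ _u : Fin n, 2 * n := Finset.sum_congr rfl (fun u _ => htot u)
      _ = 2 * n * n := by rw [Finset.sum_const, Finset.card_univ, Fintype.card_fin]; ring
  have hAsum : (∑ u : Fin n, ∑ v : Fin n, (if (starPlus n).Adj u v then 1 else 0)) = 2 * n := by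
    rw [← hA]
    exact Finset.sum_congr rfl (fun u _ => (Finset.card_filter _ _).symm)
  have hD : Dsum' (starPlus n) = ∑ u : Fin n, ∑ v, (starPlus n).dist u v := rfl
  omega

end StarPlusFacts


lemma univ_edge_pair {n : ℕ} (hn : 6 ≤ n) (G : SimpleGraph (Fin n)) [DecidableRel G.Adj]
    (hedge : G.edgeFinset.card = n) {c : Fin n}
    (hc : ∀ v, v ≠ c → G.Adj c v) :
    ∃ x y : Fin n, x ≠ c ∧ y ≠ c ∧ G.Adj x y ∧
      (∀ a b : Fin n, a ≠ c → b ≠ c → G.Adj a b → (a = x ∧ b = y) ∨ (a = y ∧ b = x)) := by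
  classical
  have hdegsum : ∑ v : Fin n, G.degree v = 2 * n := by
    rw [SimpleGraph.sum_degrees_eq_twice_card_edges, hedge]
  have hNc : G.neighborFinset c = Finset.univ.erase c := by
    ext v
    simp only [SimpleGraph.mem_neighborFinset, Finset.mem_erase, Finset.mem_univ, and_true]
    exact ⟨fun h => h.ne', fun h => hc v h⟩
  have hdegc : G.degree c = n - 1 := by
    have : G.degree c = (G.neighborFinset c).card := rfl
    rw [this, hNc, Finset.card_erase_of_mem (Finset.mem_univ c), Finset.card_univ,
      Fintype.card_fin]
  -- the set of ordered non-center edges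
  set T : Finset (Fin n × Fin n) := (Finset.univ.erase c).biUnion
    (fun v => ((G.neighborFinset v).erase c).map
      ⟨fun w => (v, w), fun a b h => by injection h⟩) with hT
  have hmemT : ∀ p : Fin n × Fin n, p ∈ T ↔ p.1 ≠ c ∧ p.2 ≠ c ∧ G.Adj p.1 p.2 := by
    intro p
    rw [hT, Finset.mem_biUnion]
    constructor
    · rintro ⟨v, hv, hp⟩
      rw [Finset.mem_map] at hp
      obtain ⟨w, hw, hpw⟩ := hp
      rw [Finset.mem_erase, SimpleGraph.mem_neighborFinset] at hw
      rw [Finset.mem_erase] at hv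
      subst hpw
      exact ⟨hv.1, hw.1, hw.2⟩
    · rintro ⟨h1, h2, h3⟩
      refine ⟨p.1, Finset.mem_erase.mpr ⟨h1, Finset.mem_univ _⟩, ?_⟩
      rw [Finset.mem_map]
      exact ⟨p.2, Finset.mem_erase.mpr ⟨h2, by rwa [SimpleGraph.mem_neighborFinset]⟩, rfl⟩
  have hcardT : T.card = 2 := by
    rw [hT, Finset.card_biUnion (by
      intro a ha b hb hab
      refine Finset.disjoint_left.mpr ?_
      intro p hpa hpb
      rw [Finset.mem_map] at hpa hpb
      obtain ⟨wa, _, hwa⟩ := hpa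
      obtain ⟨wb, _, hwb⟩ := hpb
      rw [← hwa] at hwb
      exact hab ((congrArg Prod.fst hwb).symm))]
    have hterm : ∀ v ∈ Finset.univ.erase c,
        (((G.neighborFinset v).erase c).map
          ⟨fun w => (v, w), fun a b h => by injection h⟩).card + 1 = G.degree v := by
      intro v hv
      rw [Finset.card_map, Finset.card_erase_of_mem (by
        rw [SimpleGraph.mem_neighborFinset]
        exact (hc v (Finset.mem_erase.mp hv).1).symm)]
      have hpos : 1 ≤ G.degree v := by
        have : c ∈ G.neighborFinset v := by
          rw [SimpleGraph.mem_neighborFinset]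
          exact (hc v (Finset.mem_erase.mp hv).1).symm
        have := Finset.card_pos.mpr ⟨c, this⟩
        exact this
      have : G.degree v = (G.neighborFinset v).card := rfl
      omega
    have hsum : (∑ v ∈ Finset.univ.erase c, (((G.neighborFinset v).erase c).map
          ⟨fun w => (v, w), fun a b h => by injection h⟩).card)
        + (Finset.univ.erase c).card = ∑ v ∈ Finset.univ.erase c, G.degree v := by
      have h0 : ∑ v ∈ Finset.univ.erase c, ((((G.neighborFinset v).erase c).map
            ⟨fun w => (v, w), fun a b h => by injection h⟩).card + 1)
          = ∑ v ∈ Finset.univ.erase c, G.degree v := Finset.sum_congr rfl hterm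
      rw [Finset.sum_add_distrib] at h0
      simpa using h0
    have hsumdeg : (∑ v ∈ Finset.univ.erase c, G.degree v) + G.degree c
        = ∑ v : Fin n, G.degree v := Finset.sum_erase_add _ _ (Finset.mem_univ c)
    have hcarderase : (Finset.univ.erase c).card = n - 1 := by
      rw [Finset.card_erase_of_mem (Finset.mem_univ c), Finset.card_univ, Fintype.card_fin]
    omega
  -- extract the unique edge
  have hTne : ∃ p : Fin n × Fin n, p ∈ T := by
    have : 0 < T.card := by omega
    obtain ⟨p, hp⟩ := Finset.card_pos.mp this
    exact ⟨p, hp⟩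
  obtain ⟨⟨x, y⟩, hp⟩ := hTne
  obtain ⟨hxc, hyc, hxy⟩ := (hmemT (x, y)).mp hp
  have hyx : (y, x) ∈ T := (hmemT (y, x)).mpr ⟨hyc, hxc, hxy.symm⟩
  have hxyne : x ≠ y := hxy.ne
  have hpairne : ((x, y) : Fin n × Fin n) ≠ (y, x) := by
    intro h
    injection h with h1 _
    exact hxyne h1
  have hpairsub : ({(x, y), (y, x)} : Finset (Fin n × Fin n)) ⊆ T := by
    intro p hp'
    rcases Finset.mem_insert.mp hp' with rfl | hp'
    · exact hp
    · rw [Finset.mem_singleton] at hp'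
      subst hp'
      exact hyx
  have hTeq : ({(x, y), (y, x)} : Finset (Fin n × Fin n)) = T :=
    Finset.eq_of_subset_of_card_le hpairsub (by rw [Finset.card_pair hpairne]; omega)
  refine ⟨x, y, hxc, hyc, hxy, ?_⟩
  intro a b hac hbc hadj
  have : (a, b) ∈ T := (hmemT (a, b)).mpr ⟨hac, hbc, hadj⟩
  rw [← hTeq] at this
  rcases Finset.mem_insert.mp this with h | h
  · injection h with h1 h2
    exact Or.inl ⟨h1, h2⟩
  · rw [Finset.mem_singleton] at h
    injection h with h1 h2
    exact Or.inr ⟨h1, h2⟩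


set_option maxHeartbeats 2000000 in
lemma iso_of_univ {n : ℕ} (hn : 6 ≤ n) (G : SimpleGraph (Fin n)) [DecidableRel G.Adj]
    (hedge : G.edgeFinset.card = n) (hU : IsUniv G) :
    Nonempty (G ≃g starPlus n) := by
  classical
  obtain ⟨c, hc⟩ := hU
  obtain ⟨x, y, hxc, hyc, hxy, huniq⟩ := univ_edge_pair hn G hedge hc
  have hxyne : x ≠ y := hxy.ne
  have hchar : ∀ a b : Fin n, G.Adj a b
      ↔ a ≠ b ∧ (a = c ∨ b = c ∨ (a = x ∧ b = y) ∨ (a = y ∧ b = x)) := by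
    intro a b
    constructor
    · intro h
      refine ⟨h.ne, ?_⟩
      by_cases hac : a = c
      · exact Or.inl hac
      by_cases hbc : b = c
      · exact Or.inr (Or.inl hbc)
      rcases huniq a b hac hbc h with ⟨h1, h2⟩ | ⟨h1, h2⟩
      · exact Or.inr (Or.inr (Or.inl ⟨h1, h2⟩))
      · exact Or.inr (Or.inr (Or.inr ⟨h1, h2⟩))
    · rintro ⟨hne, (rfl | rfl | ⟨rfl, rfl⟩ | ⟨rfl, rfl⟩)⟩
      · exact hc b (fun h => hne h.symm)
      · exact (hc a hne).symm
      · exact hxy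
      · exact hxy.symm
  set v0 : Fin n := ⟨0, by omega⟩ with hv0
  set v1 : Fin n := ⟨1, by omega⟩ with hv1
  set v2 : Fin n := ⟨2, by omega⟩ with hv2
  set A : Finset (Fin n) := {c, x, y} with hA
  set B : Finset (Fin n) := {v0, v1, v2} with hB
  have hcardA : A.card = 3 := by
    rw [hA, Finset.card_insert_of_notMem (by simp [Ne.symm hxc, Ne.symm hyc]),
      Finset.card_pair hxyne]
  have hcardB : B.card = 3 := by
    rw [hB, Finset.card_insert_of_notMem (by simp [hv0, hv1, hv2, Fin.ext_iff]),
      Finset.card_pair (by simp [hv1, hv2, Fin.ext_iff])]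
  have hcards : Fintype.card ↥(Finset.univ \ A : Finset (Fin n))
      = Fintype.card ↥(Finset.univ \ B : Finset (Fin n)) := by
    rw [Fintype.card_coe, Fintype.card_coe, Finset.card_sdiff_of_subset (Finset.subset_univ _),
      Finset.card_sdiff_of_subset (Finset.subset_univ _), hcardA, hcardB]
  let e0 := Fintype.equivOfCardEq hcards
  have hmemA : ∀ v : Fin n, v ≠ c → v ≠ x → v ≠ y → v ∈ (Finset.univ \ A : Finset (Fin n)) := by
    intro v h1 h2 h3
    rw [Finset.mem_sdiff]
    exact ⟨Finset.mem_univ v, by simp [hA, h1, h2, h3]⟩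
  let f : Fin n → Fin n := fun v =>
    if h1 : v = c then v0 else if h2 : v = x then v1 else if h3 : v = y then v2
    else ↑(e0 ⟨v, hmemA v h1 h2 h3⟩)
  have hfc : f c = v0 := by simp [f]
  have hfx : f x = v1 := by simp [f, hxc, hxyne]
  have hfy : f y = v2 := by simp [f, hyc, Ne.symm hxyne]
  have hfgen : ∀ v : Fin n, v ≠ c → v ≠ x → v ≠ y → f v ∉ B := by
    intro v h1 h2 h3
    have : f v = ↑(e0 ⟨v, hmemA v h1 h2 h3⟩) := by simp [f, h1, h2, h3]
    rw [this]
    have := (e0 ⟨v, hmemA v h1 h2 h3⟩).2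
    rw [Finset.mem_sdiff] at this
    exact this.2
  have hv0B : v0 ∈ B := by simp [hB]
  have hv1B : v1 ∈ B := by simp [hB]
  have hv2B : v2 ∈ B := by simp [hB]
  have hv01 : v0 ≠ v1 := by simp [hv0, hv1, Fin.ext_iff]
  have hv02 : v0 ≠ v2 := by simp [hv0, hv2, Fin.ext_iff]
  have hv12 : v1 ≠ v2 := by simp [hv1, hv2, Fin.ext_iff]
  have hiff0 : ∀ v : Fin n, f v = v0 ↔ v = c := by
    intro v
    constructor
    · intro h
      by_cases h1 : v = c
      · exact h1
      by_cases h2 : v = x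
      · subst h2; rw [hfx] at h; exact absurd h.symm hv01
      by_cases h3 : v = y
      · subst h3; rw [hfy] at h; exact absurd h.symm hv02
      · exact absurd (h ▸ hv0B) (hfgen v h1 h2 h3)
    · rintro rfl; exact hfc
  have hiff1 : ∀ v : Fin n, f v = v1 ↔ v = x := by
    intro v
    constructor
    · intro h
      by_cases h1 : v = c
      · subst h1; rw [hfc] at h; exact absurd h hv01
      by_cases h2 : v = x
      · exact h2
      by_cases h3 : v = y
      · subst h3; rw [hfy] at h; exact absurd h.symm hv12
      · exact absurd (h ▸ hv1B) (hfgen v h1 h2 h3)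
    · rintro rfl; exact hfx
  have hiff2 : ∀ v : Fin n, f v = v2 ↔ v = y := by
    intro v
    constructor
    · intro h
      by_cases h1 : v = c
      · subst h1; rw [hfc] at h; exact absurd h hv02
      by_cases h2 : v = x
      · subst h2; rw [hfx] at h; exact absurd h hv12
      by_cases h3 : v = y
      · exact h3
      · exact absurd (h ▸ hv2B) (hfgen v h1 h2 h3)
    · rintro rfl; exact hfy
  have hval0 : ∀ v : Fin n, (f v).val = 0 ↔ v = c := by
    intro v
    rw [← hiff0 v]
    constructor
    · intro h; exact Fin.ext h
    · intro h; rw [h]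
  have hval1 : ∀ v : Fin n, (f v).val = 1 ↔ v = x := by
    intro v
    rw [← hiff1 v]
    constructor
    · intro h; exact Fin.ext h
    · intro h; rw [h]
  have hval2 : ∀ v : Fin n, (f v).val = 2 ↔ v = y := by
    intro v
    rw [← hiff2 v]
    constructor
    · intro h; exact Fin.ext h
    · intro h; rw [h]
  have hinj : Function.Injective f := by
    intro a b h
    by_cases h1 : a = c
    · subst h1; rw [hfc] at h; exact ((hiff0 b).mp h.symm).symm
    by_cases h2 : a = x
    · subst h2; rw [hfx] at h; exact ((hiff1 b).mp h.symm).symm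
    by_cases h3 : a = y
    · subst h3; rw [hfy] at h; exact ((hiff2 b).mp h.symm).symm
    · by_cases g1 : b = c
      · subst g1; rw [hfc] at h; exact absurd ((hiff0 a).mp h) h1
      by_cases g2 : b = x
      · subst g2; rw [hfx] at h; exact absurd ((hiff1 a).mp h) h2
      by_cases g3 : b = y
      · subst g3; rw [hfy] at h; exact absurd ((hiff2 a).mp h) h3
      · have ha : f a = ↑(e0 ⟨a, hmemA a h1 h2 h3⟩) := by simp [f, h1, h2, h3]
        have hb : f b = ↑(e0 ⟨b, hmemA b g1 g2 g3⟩) := by simp [f, g1, g2, g3]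
        rw [ha, hb] at h
        have := e0.injective (Subtype.coe_injective h)
        exact congrArg Subtype.val this
  have hbij : Function.Bijective f := (Finite.injective_iff_bijective).mp hinj
  refine ⟨{ toEquiv := Equiv.ofBijective f hbij, map_rel_iff' := ?_ }⟩
  intro a b
  show (starPlus n).Adj (f a) (f b) ↔ G.Adj a b
  rw [hchar a b]
  show (f a ≠ f b ∧ ((f a).val = 0 ∨ (f b).val = 0 ∨ ((f a).val = 1 ∧ (f b).val = 2)
    ∨ ((f a).val = 2 ∧ (f b).val = 1))) ↔ _
  simp only [ne_eq, hinj.eq_iff, hval0, hval1, hval2]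

lemma Dsum_cast {n : ℕ} (X : SimpleGraph (Fin n)) :
    ((Dsum' X : ℕ) : ℝ) = ∑ u, ∑ v, (X.dist u v : ℝ) := by
  unfold Dsum'
  push_cast
  rfl

/-- A connected unicyclic graph of order `n ≥ 6` other than `S_n⁺` satisfies
`W(G) ≥ n² − n − 4 > W(S_n⁺) = n² − 2n`. -/
theorem stmt_8 {n : ℕ} (G : SimpleGraph (Fin n)) (hG : G.Connected)
    (huni : G.edgeSet.ncard = n) (hn : 6 ≤ n)
    (hns : ¬ Nonempty (G ≃g starPlus n)) :
    wienerIndex G ≥ (n : ℝ) ^ 2 - n - 4 ∧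
    (n : ℝ) ^ 2 - n - 4 > wienerIndex (starPlus n) ∧
    wienerIndex (starPlus n) = (n : ℝ) ^ 2 - 2 * n := by
  classical
  letI : DecidableRel G.Adj := Classical.decRel _
  have hcardV : Fintype.card (Fin n) = n := Fintype.card_fin n
  have hedgeF : G.edgeFinset.card = n := by
    have h1 : G.edgeSet.ncard = G.edgeFinset.card := Set.ncard_eq_toFinset_card' _
    omega
  -- the key natural-number bound for G
  have hbound : 2 * n * n ≤ Dsum' G + 2 * n + 8 := by
    by_cases hall : ∀ v, G.degree v = 2
    · exact alldeg2_bound G hG hall hcardV hn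
    · have hnU : ¬ IsUniv G := fun h => hns (iso_of_univ hn G hedgeF h)
      have hdegsum : ∑ v : Fin n, G.degree v = 2 * Fintype.card (Fin n) := by
        rw [SimpleGraph.sum_degrees_eq_twice_card_edges, hedgeF, hcardV]
      have hpend : ∃ u, G.degree u = 1 := by
        rcases pendant_or_two G hG (by omega) hdegsum with h | h
        · exact h
        · exact absurd h hall
      exact main_L n (Fin n) G hcardV (by omega) hG hedgeF (fun _ => hnU) (fun _ => hpend)
  have hSP : Dsum' (starPlus n) + 4 * n = 2 * n * n := starPlus_Dsum hn
  -- real versions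
  have hWG : wienerIndex G = ((Dsum' G : ℕ) : ℝ) / 2 := by
    rw [wienerIndex, Dsum_cast]
  have hWS : wienerIndex (starPlus n) = ((Dsum' (starPlus n) : ℕ) : ℝ) / 2 := by
    rw [wienerIndex, Dsum_cast]
  have hnR : (6 : ℝ) ≤ (n : ℝ) := by exact_mod_cast hn
  have hboundR : 2 * (n : ℝ) * n ≤ (Dsum' G : ℝ) + 2 * n + 8 := by exact_mod_cast hbound
  have hSPR : (Dsum' (starPlus n) : ℝ) + 4 * n = 2 * (n : ℝ) * n := by exact_mod_cast hSP
  refine ⟨?_, ?_, ?_⟩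
  · rw [hWG]
    nlinarith [hboundR]
  · rw [hWS]
    nlinarith [hSPR]
  · rw [hWS]
    nlinarith [hSPR]
end

section
/- Let G be a connected simple graph of order n and let 1 ≥ α > β ≥ 0. Then ρ_{D_α}(G) ≥ ρ_{D_β}(G), with equality if and only if G is transmission regular (i.e., Tr(u) is the same for all vertices u of G). -/
open Matrix

namespace SRaux

variable {n : ℕ}

noncomputable def toE (x : Fin n → ℝ) : EuclideanSpace ℝ (Fin n) := (WithLp.equiv 2 _).symm x

lemma inner_toE (x y : Fin n → ℝ) : inner (𝕜 := ℝ) (toE x) (toE y) = x ⬝ᵥ y := by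
  simp [toE, PiLp.inner_apply, RCLike.inner_apply, dotProduct]
  exact Finset.sum_congr rfl fun i _ => mul_comm _ _

lemma hasEigen_iff (M : Matrix (Fin n) (Fin n) ℝ) (μ : ℝ) :
    Module.End.HasEigenvalue (Matrix.toLin' M) μ ↔ ∃ x : Fin n → ℝ, x ≠ 0 ∧ M *ᵥ x = μ • x := by
  rw [Module.End.hasEigenvalue_iff, Submodule.ne_bot_iff]
  constructor
  · rintro ⟨x, hx, hx0⟩
    exact ⟨x, hx0, by simpa [Matrix.toLin'_apply] using Module.End.mem_eigenspace_iff.mp hx⟩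
  · rintro ⟨x, hx0, hx⟩
    exact ⟨x, Module.End.mem_eigenspace_iff.mpr (by simpa [Matrix.toLin'_apply] using hx), hx0⟩

lemma rayleigh_expand (M : Matrix (Fin n) (Fin n) ℝ) (hM : M.IsHermitian) (x : Fin n → ℝ) :
    x ⬝ᵥ (M *ᵥ x) =
      ∑ i, hM.eigenvalues i * (inner (𝕜 := ℝ) (hM.eigenvectorBasis i) (toE x))^2 := by
  classical
  set b := hM.eigenvectorBasis
  have hMt : Mᵀ = M := hM
  have hbE : ∀ i, toE (⇑(b i)) = b i := fun i => rfl
  have key : ∀ i, inner (𝕜 := ℝ) (b i) (toE (M *ᵥ x)) =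
      hM.eigenvalues i * inner (𝕜 := ℝ) (b i) (toE x) := by
    intro i
    rw [← hbE i, inner_toE, inner_toE]
    calc (⇑(b i) : Fin n → ℝ) ⬝ᵥ (M *ᵥ x) = (M *ᵥ ⇑(b i)) ⬝ᵥ x := by
          rw [dotProduct_mulVec, ← mulVec_transpose, hMt]
      _ = (hM.eigenvalues i • ⇑(b i)) ⬝ᵥ x := by rw [hM.mulVec_eigenvectorBasis i]
      _ = hM.eigenvalues i * (⇑(b i) ⬝ᵥ x) := smul_dotProduct _ _ _
  have par := b.sum_inner_mul_inner (𝕜 := ℝ) (toE x) (toE (M *ᵥ x))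
  rw [inner_toE] at par
  rw [← par]
  refine Finset.sum_congr rfl fun i _ => ?_
  rw [key i, real_inner_comm (toE x)]
  ring

lemma parseval (M : Matrix (Fin n) (Fin n) ℝ) (hM : M.IsHermitian) (x : Fin n → ℝ) :
    x ⬝ᵥ x = ∑ i, (inner (𝕜 := ℝ) (hM.eigenvectorBasis i) (toE x))^2 := by
  have par := hM.eigenvectorBasis.sum_inner_mul_inner (𝕜 := ℝ) (toE x) (toE x)
  rw [inner_toE] at par
  rw [← par]
  refine Finset.sum_congr rfl fun i _ => ?_
  rw [real_inner_comm (toE x)]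
  ring

lemma dot_self_pos {x : Fin n → ℝ} (hx : x ≠ 0) : 0 < x ⬝ᵥ x := by
  rcases lt_or_eq_of_le (Finset.sum_nonneg fun i _ => mul_self_nonneg (x i)) with h | h
  · exact h
  · exact absurd (dotProduct_self_eq_zero.mp h.symm) hx

lemma spec_top (M : Matrix (Fin n) (Fin n) ℝ) (hM : M.IsHermitian) (hne : Nonempty (Fin n)) :
    (∃ x : Fin n → ℝ, x ≠ 0 ∧ M *ᵥ x = specRadius M • x) ∧
    (∀ x : Fin n → ℝ, x ⬝ᵥ (M *ᵥ x) ≤ specRadius M * (x ⬝ᵥ x)) ∧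
    (∀ (μ : ℝ) (x : Fin n → ℝ), x ≠ 0 → M *ᵥ x = μ • x → μ ≤ specRadius M) := by
  classical
  obtain ⟨i₀, hi₀⟩ := Finite.exists_max hM.eigenvalues
  set μmax := hM.eigenvalues i₀ with hμmax
  have hray : ∀ x : Fin n → ℝ, x ⬝ᵥ (M *ᵥ x) ≤ μmax * (x ⬝ᵥ x) := by
    intro x
    rw [rayleigh_expand M hM x, parseval M hM x, Finset.mul_sum]
    exact Finset.sum_le_sum fun i _ => mul_le_mul_of_nonneg_right (hi₀ i) (sq_nonneg _)
  have hvne : (⇑(hM.eigenvectorBasis i₀) : Fin n → ℝ) ≠ 0 :=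
    fun h => hM.eigenvectorBasis.orthonormal.ne_zero i₀ (by simpa using congrArg (WithLp.toLp 2) h)
  have hvec : M *ᵥ ⇑(hM.eigenvectorBasis i₀) = μmax • ⇑(hM.eigenvectorBasis i₀) :=
    hM.mulVec_eigenvectorBasis i₀
  have hub : ∀ μ ∈ {μ : ℝ | Module.End.HasEigenvalue (Matrix.toLin' M) μ}, μ ≤ μmax := by
    intro μ hμ
    obtain ⟨x, hx0, hx⟩ := (hasEigen_iff M μ).mp hμ
    have h1 : x ⬝ᵥ (M *ᵥ x) = μ * (x ⬝ᵥ x) := by rw [hx]; simp [dotProduct_smul]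
    have h2 := hray x
    rw [h1] at h2
    exact le_of_mul_le_mul_right (by linarith) (dot_self_pos hx0)
  have hmem : μmax ∈ {μ : ℝ | Module.End.HasEigenvalue (Matrix.toLin' M) μ} :=
    (hasEigen_iff M μmax).mpr ⟨_, hvne, hvec⟩
  have hspec : specRadius M = μmax :=
    le_antisymm (csSup_le ⟨μmax, hmem⟩ hub) (le_csSup ⟨μmax, hub⟩ hmem)
  refine ⟨⟨_, hvne, by rw [hspec]; exact hvec⟩, fun x => by rw [hspec]; exact hray x,
    fun μ x hx0 hx => ?_⟩
  rw [hspec]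
  exact hub μ ((hasEigen_iff M μ).mpr ⟨x, hx0, hx⟩)


variable (G : SimpleGraph (Fin n))

lemma dist_symm_real (u v : Fin n) : (G.dist v u : ℝ) = (G.dist u v : ℝ) := by
  rw [SimpleGraph.dist_comm]

lemma herm (γ : ℝ) : (Dalpha γ G).IsHermitian := by
  unfold Matrix.IsHermitian
  ext i j
  simp only [conjTranspose_apply, star_trivial, Dalpha, Matrix.add_apply, Matrix.smul_apply,
    Matrix.diagonal_apply, distMatrix, smul_eq_mul]
  rw [SimpleGraph.dist_comm]
  congr 1
  by_cases h : i = j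
  · subst h; rfl
  · rw [if_neg h, if_neg (Ne.symm h)]

lemma rowSum (γ : ℝ) (u : Fin n) : ∑ v, Dalpha γ G u v = transmission G u := by
  simp only [Dalpha, Matrix.add_apply, Matrix.smul_apply, Matrix.diagonal_apply, distMatrix,
    smul_eq_mul, Finset.sum_add_distrib, mul_ite, mul_zero]
  rw [Finset.sum_ite_eq Finset.univ u (fun _ => γ * transmission G u), ← Finset.mul_sum]
  simp only [Finset.mem_univ, if_true]
  have : ∑ v, (G.dist u v : ℝ) = transmission G u := rfl
  rw [this]; ring

lemma entry_nonneg {γ : ℝ} (h0 : 0 ≤ γ) (h1 : γ ≤ 1) (u v : Fin n) : 0 ≤ Dalpha γ G u v := by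
  have htr : 0 ≤ transmission G u := Finset.sum_nonneg fun _ _ => Nat.cast_nonneg _
  simp only [Dalpha, Matrix.add_apply, Matrix.smul_apply, Matrix.diagonal_apply, distMatrix,
    smul_eq_mul]
  have h2 : (0:ℝ) ≤ if u = v then transmission G u else 0 := by positivity
  have h3 : (0:ℝ) ≤ (G.dist u v : ℝ) := Nat.cast_nonneg _
  nlinarith

lemma quad (x : Fin n → ℝ) :
    2 * (x ⬝ᵥ ((Matrix.diagonal (transmission G) - distMatrix G) *ᵥ x)) =
      ∑ u, ∑ v, (G.dist u v : ℝ) * (x u - x v)^2 := by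
  classical
  have hsymm : ∑ u, ∑ v, (G.dist u v : ℝ) * (x v)^2 = ∑ u, ∑ v, (G.dist u v : ℝ) * (x u)^2 := by
    rw [Finset.sum_comm]
    refine Finset.sum_congr rfl fun u _ => Finset.sum_congr rfl fun v _ => ?_
    rw [SimpleGraph.dist_comm]
  have lhs_eq : x ⬝ᵥ ((Matrix.diagonal (transmission G) - distMatrix G) *ᵥ x) =
      (∑ u, ∑ v, (G.dist u v : ℝ) * (x u)^2) - ∑ u, ∑ v, (G.dist u v : ℝ) * (x u * x v) := by
    simp only [dotProduct, mulVec, Matrix.sub_apply, Matrix.diagonal_apply, distMatrix]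
    rw [← Finset.sum_sub_distrib]
    refine Finset.sum_congr rfl fun u _ => ?_
    rw [Finset.mul_sum]
    have h1 : ∀ v : Fin n, x u * (((if u = v then transmission G u else 0) - (G.dist u v : ℝ)) * x v)
        = (if u = v then transmission G u * (x u * x v) else 0)
          - (G.dist u v : ℝ) * (x u * x v) := by
      intro v; split_ifs <;> ring
    rw [Finset.sum_congr rfl fun v _ => h1 v, Finset.sum_sub_distrib,
      Finset.sum_ite_eq Finset.univ u (fun v => transmission G u * (x u * x v))]
    simp only [Finset.mem_univ, if_true]
    congr 1
    rw [transmission, Finset.sum_mul]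
    refine Finset.sum_congr rfl fun v _ => by ring
  rw [lhs_eq]
  have rhs_eq : ∑ u, ∑ v, (G.dist u v : ℝ) * (x u - x v)^2 =
      (∑ u, ∑ v, (G.dist u v : ℝ) * (x u)^2) + (∑ u, ∑ v, (G.dist u v : ℝ) * (x v)^2)
        - 2 * ∑ u, ∑ v, (G.dist u v : ℝ) * (x u * x v) := by
    rw [Finset.mul_sum, ← Finset.sum_add_distrib, ← Finset.sum_sub_distrib]
    refine Finset.sum_congr rfl fun u _ => ?_
    rw [Finset.mul_sum, ← Finset.sum_add_distrib, ← Finset.sum_sub_distrib]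
    refine Finset.sum_congr rfl fun v _ => by ring
  rw [rhs_eq, hsymm]
  ring

lemma eig_le {γ k μ : ℝ} (h0 : 0 ≤ γ) (h1 : γ ≤ 1) (hrowk : ∀ u, transmission G u = k)
    {x : Fin n → ℝ} (hx0 : x ≠ 0) (hx : Dalpha γ G *ᵥ x = μ • x) : μ ≤ k := by
  classical
  have hne : Nonempty (Fin n) := by
    by_contra h
    exact hx0 (funext fun u => absurd ⟨u⟩ h)
  obtain ⟨u, hu⟩ := Finite.exists_max (fun u => |x u|)
  have hxu : 0 < |x u| := by
    rcases (abs_nonneg (x u)).lt_or_eq with h | h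
    · exact h
    · exfalso
      apply hx0
      funext v
      have := hu v
      rw [← h] at this
      exact abs_eq_zero.mp (le_antisymm this (abs_nonneg _))
  have heq : ∑ v, Dalpha γ G u v * x v = μ * x u := by
    have := congrFun hx u
    simpa [mulVec, dotProduct] using this
  have hbound : |μ| * |x u| ≤ k * |x u| := by
    calc |μ| * |x u| = |∑ v, Dalpha γ G u v * x v| := by rw [heq, abs_mul]
      _ ≤ ∑ v, |Dalpha γ G u v * x v| := Finset.abs_sum_le_sum_abs _ _
      _ = ∑ v, Dalpha γ G u v * |x v| := by
          refine Finset.sum_congr rfl fun v _ => ?_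
          rw [abs_mul, abs_of_nonneg (entry_nonneg G h0 h1 u v)]
      _ ≤ ∑ v, Dalpha γ G u v * |x u| := by
          refine Finset.sum_le_sum fun v _ => ?_
          exact mul_le_mul_of_nonneg_left (hu v) (entry_nonneg G h0 h1 u v)
      _ = k * |x u| := by rw [← Finset.sum_mul, rowSum G γ u, hrowk u]
  have : |μ| ≤ k := le_of_mul_le_mul_right hbound hxu
  exact le_trans (le_abs_self μ) this

lemma ones_eigen {γ k : ℝ} (hrowk : ∀ u, transmission G u = k) :
    Dalpha γ G *ᵥ (fun _ => (1:ℝ)) = k • (fun _ => (1:ℝ)) := by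
  funext u
  simp only [mulVec, dotProduct, mul_one, Pi.smul_apply, smul_eq_mul]
  rw [rowSum G γ u, hrowk u]

end SRaux

/-- For `1 ≥ α > β ≥ 0`, `ρ_{D_α}(G) ≥ ρ_{D_β}(G)`, with equality iff `G` is
transmission regular. -/
theorem stmt_9 {n : ℕ} (G : SimpleGraph (Fin n)) (hG : G.Connected)
    (α β : ℝ) (hβ0 : 0 ≤ β) (hβα : β < α) (hα1 : α ≤ 1) :
    specRadius (Dalpha α G) ≥ specRadius (Dalpha β G) ∧
    (specRadius (Dalpha α G) = specRadius (Dalpha β G) ↔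
      ∀ u v : Fin n, transmission G u = transmission G v) := by
  classical
  have hne : Nonempty (Fin n) := hG.nonempty
  have hα0 : (0:ℝ) ≤ α := le_of_lt (lt_of_le_of_lt hβ0 hβα)
  have hβ1 : β ≤ 1 := le_of_lt (lt_of_lt_of_le hβα hα1)
  obtain ⟨⟨xb, hxb0, hxb⟩, hrayβ, hleβ⟩ := SRaux.spec_top (Dalpha β G) (SRaux.herm G β) hne
  obtain ⟨⟨xa, hxa0, hxa⟩, hrayα, hleα⟩ := SRaux.spec_top (Dalpha α G) (SRaux.herm G α) hne
  set ρα := specRadius (Dalpha α G) with hρα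
  set ρβ := specRadius (Dalpha β G) with hρβ
  set q := xb ⬝ᵥ ((Matrix.diagonal (transmission G) - distMatrix G) *ᵥ xb) with hqdef
  set N := xb ⬝ᵥ xb with hNdef
  have hNpos : 0 < N := SRaux.dot_self_pos hxb0
  have hq2 : 2 * q = ∑ u, ∑ v, (G.dist u v : ℝ) * (xb u - xb v)^2 := SRaux.quad G xb
  have hsum_nn : (0:ℝ) ≤ ∑ u, ∑ v, (G.dist u v : ℝ) * (xb u - xb v)^2 :=
    Finset.sum_nonneg fun u _ => Finset.sum_nonneg fun v _ =>
      mul_nonneg (Nat.cast_nonneg _) (sq_nonneg _)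
  have hqnn : 0 ≤ q := by linarith
  have hdecomp : xb ⬝ᵥ (Dalpha α G *ᵥ xb) = ρβ * N + (α - β) * q := by
    have hmat : Dalpha α G = Dalpha β G +
        (α - β) • (Matrix.diagonal (transmission G) - distMatrix G) := by
      ext i j
      simp only [Dalpha, Matrix.add_apply, Matrix.smul_apply, Matrix.sub_apply, smul_eq_mul]
      ring
    rw [hmat, add_mulVec, smul_mulVec, dotProduct_add, dotProduct_smul, hxb,
      dotProduct_smul]
    simp only [smul_eq_mul, hqdef, hNdef]
  have hineq : ρβ * N + (α - β) * q ≤ ρα * N := by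
    rw [← hdecomp]; exact hrayα xb
  have hmain : ρβ ≤ ρα := by
    have h1 : ρβ * N ≤ ρα * N := by nlinarith
    exact le_of_mul_le_mul_right h1 hNpos
  refine ⟨hmain, ?_, ?_⟩
  · -- equality → transmission regular
    intro heq
    have hq0 : q = 0 := by
      have : (α - β) * q ≤ 0 := by rw [heq] at hineq; linarith
      have hab : 0 < α - β := by linarith
      nlinarith
    have hsum0 : ∑ u, ∑ v, (G.dist u v : ℝ) * (xb u - xb v)^2 = 0 := by
      rw [← hq2, hq0]; ring
    have hconst : ∀ u v : Fin n, xb u = xb v := by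
      intro u v
      rcases eq_or_ne u v with rfl | huv
      · rfl
      · have hz1 := (Finset.sum_eq_zero_iff_of_nonneg fun u _ =>
          Finset.sum_nonneg fun v _ =>
            mul_nonneg (Nat.cast_nonneg _) (sq_nonneg _)).mp hsum0 u (Finset.mem_univ u)
        have hz2 := (Finset.sum_eq_zero_iff_of_nonneg fun v _ =>
          mul_nonneg (Nat.cast_nonneg (G.dist u v)) (sq_nonneg _)).mp hz1 v (Finset.mem_univ v)
        have hdpos : (0:ℝ) < (G.dist u v : ℝ) := by
          exact_mod_cast hG.pos_dist_of_ne huv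
        have : (xb u - xb v)^2 = 0 := by
          rcases mul_eq_zero.mp hz2 with h | h
          · exact absurd h (ne_of_gt hdpos)
          · exact h
        have := sq_eq_zero_iff.mp this
        linarith
    obtain ⟨w, hw⟩ := Function.ne_iff.mp hxb0
    have hxbne : ∀ u : Fin n, xb u ≠ 0 := fun u => by rw [hconst u w]; exact hw
    have htr : ∀ u : Fin n, transmission G u = ρβ := by
      intro u
      have heig : ∑ v, Dalpha β G u v * xb v = ρβ * xb u := by
        have := congrFun hxb u
        simpa [mulVec, dotProduct] using this
      have : ∑ v, Dalpha β G u v * xb v = transmission G u * xb u := by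
        rw [← SRaux.rowSum G β u, Finset.sum_mul]
        exact Finset.sum_congr rfl fun v _ => by rw [hconst v u]
      rw [this] at heig
      exact mul_right_cancel₀ (hxbne u) heig
    intro u v
    rw [htr u, htr v]
  · -- transmission regular → equality
    intro hreg
    obtain ⟨u₀⟩ := hne
    set k := transmission G u₀ with hk
    have hrowk : ∀ u, transmission G u = k := fun u => hreg u u₀
    have hones0 : (fun _ : Fin n => (1:ℝ)) ≠ 0 := by
      intro h
      have := congrFun h u₀
      norm_num at this
    have hαk : ρα = k := by
      apply le_antisymm
      · exact SRaux.eig_le G hα0 hα1 hrowk hxa0 hxa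
      · exact hleα k _ hones0 (SRaux.ones_eigen G hrowk)
    have hβk : ρβ = k := by
      apply le_antisymm
      · exact SRaux.eig_le G hβ0 hβ1 hrowk hxb0 hxb
      · exact hleβ k _ hones0 (SRaux.ones_eigen G hrowk)
    rw [hαk, hβk]
end

section
/- Let G be a tree of order n ≥ 4 that is not isomorphic to the star S_n. Then the distance signless Laplacian spectral radius satisfies ρ_{D^Q}(G) > (5n − 8 + √(9(n−2)² + 4(n−1)))/2. -/
open Matrix

lemma eig_bound {n : ℕ} (M : Matrix (Fin n) (Fin n) ℝ) {μ : ℝ}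
    (h : Module.End.HasEigenvalue (Matrix.toLin' M) μ) :
    μ ≤ ∑ i, ∑ j, |M i j| := by
  obtain ⟨u, hu⟩ := h.exists_hasEigenvector
  have humv : M *ᵥ u = μ • u := by
    have := hu.apply_eq_smul
    simpa [Matrix.toLin'_apply] using this
  obtain ⟨i, -, hi⟩ := Finset.exists_max_image (Finset.univ : Finset (Fin n))
    (fun j => |u j|) ⟨⟨0, by
      rcases Nat.eq_zero_or_pos n with h0 | h0
      · exfalso; apply hu.2; ext j; exact absurd j.2 (by omega)
      · exact h0⟩, Finset.mem_univ _⟩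
  have hipos : 0 < |u i| := by
    rcases (abs_nonneg (u i)).lt_or_eq with h' | h'
    · exact h'
    · exfalso; apply hu.2; ext j
      have h2 := hi j (Finset.mem_univ j)
      rw [← h'] at h2
      simpa using le_antisymm h2 (abs_nonneg _)
  have key : |μ| * |u i| ≤ (∑ j, |M i j|) * |u i| := by
    have h1 : μ * u i = ∑ j, M i j * u j := by
      have h := congrFun humv i
      simp only [Matrix.mulVec, dotProduct, Pi.smul_apply, smul_eq_mul] at h
      exact h.symm
    calc |μ| * |u i| = |μ * u i| := (abs_mul _ _).symm
      _ = |∑ j, M i j * u j| := by rw [h1]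
      _ ≤ ∑ j, |M i j * u j| := Finset.abs_sum_le_sum_abs _ _
      _ ≤ ∑ j, |M i j| * |u i| := by
          apply Finset.sum_le_sum; intro j _
          rw [abs_mul]
          exact mul_le_mul_of_nonneg_left (hi j (Finset.mem_univ j)) (abs_nonneg _)
      _ = (∑ j, |M i j|) * |u i| := by rw [Finset.sum_mul]
  have hμ : |μ| ≤ ∑ j, |M i j| := le_of_mul_le_mul_right key hipos
  calc μ ≤ |μ| := le_abs_self μ
    _ ≤ ∑ j, |M i j| := hμ
    _ ≤ ∑ i', ∑ j, |M i' j| := by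
        apply Finset.single_le_sum (f := fun i' => ∑ j, |M i' j|)
          (fun i' _ => Finset.sum_nonneg fun j _ => abs_nonneg _) (Finset.mem_univ i)

lemma specRadius_ge_rayleigh {n : ℕ} (hn : 0 < n) (M : Matrix (Fin n) (Fin n) ℝ)
    (hM : M.IsHermitian) (x : Fin n → ℝ) (hx : x ≠ 0) :
    (x ⬝ᵥ (M *ᵥ x)) / (x ⬝ᵥ x) ≤ specRadius M := by
  classical
  haveI : NeZero n := ⟨by omega⟩
  set E := EuclideanSpace ℝ (Fin n)
  haveI : Nonempty (Fin n) := ⟨⟨0, hn⟩⟩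
  haveI : Nontrivial E := inferInstance
  set T : E →ₗ[ℝ] E := Matrix.toEuclideanLin M with hTdef
  have hT : T.IsSymmetric := Matrix.isHermitian_iff_isSymmetric.mp hM
  have heig := hT.hasEigenvalue_iSup_of_finiteDimensional
  set μ : ℝ := (⨆ x : { x : E // x ≠ 0 }, RCLike.re (inner ℝ (T x) (x : E) : ℝ) / ‖(x : E)‖ ^ 2 : ℝ)
    with hμdef
  -- transfer the eigenvalue to toLin'
  have hμeig : Module.End.HasEigenvalue (Matrix.toLin' M) μ := by
    obtain ⟨v, hv⟩ := heig.exists_hasEigenvector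
    have hveq : T v = μ • v := by simpa using hv.apply_eq_smul
    refine Module.End.hasEigenvalue_of_hasEigenvector
      (x := (WithLp.equiv 2 (Fin n → ℝ)) v) ⟨?_, fun h => hv.2 ?_⟩
    · rw [Module.End.mem_eigenspace_iff]
      have : (WithLp.equiv 2 (Fin n → ℝ)) (T v) = (WithLp.equiv 2 (Fin n → ℝ)) (μ • v) := by
        rw [hveq]
      exact this
    · ext j; exact congrFun h j
  -- bounded above
  have hbdd : BddAbove {μ : ℝ | Module.End.HasEigenvalue (Matrix.toLin' M) μ} :=
    ⟨∑ i, ∑ j, |M i j|, fun μ' hμ' => eig_bound M hμ'⟩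
  have hle : μ ≤ specRadius M := le_csSup hbdd hμeig
  refine le_trans ?_ hle
  -- the Rayleigh quotient at x is at most the sup
  set xE : E := (WithLp.equiv 2 (Fin n → ℝ)).symm x with hxEdef
  have hxE : xE ≠ 0 := by
    intro h; apply hx
    ext j
    exact congrFun (congrArg (WithLp.equiv 2 (Fin n → ℝ)) h) j
  have hrange : BddAbove (Set.range fun y : {y : E // y ≠ 0} =>
      RCLike.re (inner ℝ (T y) (y : E) : ℝ) / ‖(y : E)‖ ^ 2) := by
    set Tc := LinearMap.toContinuousLinearMap T
    refine ⟨‖Tc‖, ?_⟩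
    rintro r ⟨y, rfl⟩
    have hy : (0:ℝ) < ‖(y:E)‖ ^ 2 := by
      exact pow_pos (norm_pos_iff.mpr y.2) 2
    rw [div_le_iff₀ hy]
    have h1 : (inner ℝ (T y) (y : E) : ℝ) ≤ ‖T (y:E)‖ * ‖(y:E)‖ := real_inner_le_norm _ _
    have h2 : ‖T (y:E)‖ ≤ ‖Tc‖ * ‖(y:E)‖ := Tc.le_opNorm (y:E)
    have : (inner ℝ (T y) (y : E) : ℝ) ≤ ‖Tc‖ * ‖(y:E)‖ ^ 2 := by nlinarith [norm_nonneg (y:E)]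
    simpa using this
  have hsup := le_ciSup hrange (⟨xE, hxE⟩ : {y : E // y ≠ 0})
  refine le_trans (le_of_eq ?_) hsup
  -- compute the Rayleigh quotient at xE
  have hTxE : ∀ i, (T xE) i = (M *ᵥ x) i := fun i => rfl
  have hinner : (inner ℝ (T xE) xE : ℝ) = x ⬝ᵥ (M *ᵥ x) := by
    rw [PiLp.inner_apply]
    simp only [RCLike.inner_apply, conj_trivial]
    rw [dotProduct]
    apply Finset.sum_congr rfl
    intro i _
    rw [hTxE i]
    rfl
  have hnorm : ‖xE‖ ^ 2 = x ⬝ᵥ x := by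
    rw [← real_inner_self_eq_norm_sq, PiLp.inner_apply]
    simp [dotProduct, hxEdef, sq]
  rw [hinner, hnorm]
  simp


section CombAux
open SimpleGraph
lemma exists_internal_edge {n : ℕ} (G : SimpleGraph (Fin n)) (hT : G.IsTree) (hn : 4 ≤ n)
    (hns : ¬ Nonempty (G ≃g _root_.starGraph n)) :
    ∃ a b a' b', G.Adj a b ∧ G.Adj a a' ∧ a' ≠ b ∧ G.Adj b b' ∧ b' ≠ a := by
  classical
  haveI : NeZero n := ⟨by omega⟩
  by_contra hcon
  push_neg at hcon
  -- every edge has a leaf endpoint; we derive that G is a star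
  -- find a vertex of degree ≥ 2
  have hcard : G.edgeFinset.card + 1 = n := by
    simpa using hT.card_edgeFinset
  have hsum : ∑ v, G.degree v = 2 * G.edgeFinset.card :=
    SimpleGraph.sum_degrees_eq_twice_card_edges G
  have hdeg : ∃ c, 2 ≤ G.degree c := by
    by_contra hc
    push_neg at hc
    have : ∑ v, G.degree v ≤ ∑ _v : Fin n, 1 :=
      Finset.sum_le_sum fun v _ => by have := hc v; omega
    simp at this
    omega
  obtain ⟨c, hc⟩ := hdeg
  obtain ⟨x, hx, y, hy, hxy⟩ := Finset.one_lt_card.mp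
    (by rw [SimpleGraph.card_neighborFinset_eq_degree]; omega : 1 < (G.neighborFinset c).card)
  rw [SimpleGraph.mem_neighborFinset] at hx hy
  -- every neighbor of c is a leaf
  have hleaf : ∀ u, G.Adj c u → ∀ z, G.Adj u z → z = c := by
    intro u hcu z huz
    by_cases hxu : x = u
    · exact hcon c u y z hcu hy (by rw [← hxu]; exact fun h => hxy (h ▸ rfl)) huz
    · exact hcon c u x z hcu hx hxu huz
  -- every vertex is c or adjacent to c
  have key : ∀ (c' v : Fin n), (∀ u, G.Adj c' u → ∀ z, G.Adj u z → z = c') →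
      ∀ (p : G.Walk v c'), v = c' ∨ G.Adj c' v := by
    intro c' v hl p
    clear hleaf hxy hy hx hc hsum hcard hcon hns hn hT
    induction p with
    | nil => exact Or.inl rfl
    | cons h q ih =>
      rcases ih hl with rfl | hx'
      · exact Or.inr h.symm
      · exact Or.inl (hl _ hx' _ h.symm)
  have hstar : ∀ v, v = c ∨ G.Adj c v := by
    intro v
    obtain ⟨p⟩ := hT.isConnected.preconnected v c
    exact key c v hleaf p
  have hchar : ∀ u v, G.Adj u v ↔ (u ≠ v ∧ (u = c ∨ v = c)) := by
    intro u v
    constructor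
    · intro h
      refine ⟨h.ne, ?_⟩
      rcases hstar u with rfl | hu
      · exact Or.inl rfl
      · exact Or.inr (hleaf u hu v h)
    · rintro ⟨hne, rfl | rfl⟩
      · rcases hstar v with rfl | hv
        · exact absurd rfl hne
        · exact hv
      · rcases hstar u with rfl | hu
        · exact absurd rfl hne
        · exact hu.symm
  apply hns
  refine ⟨⟨Equiv.swap c 0, @fun u v => ?_⟩⟩
  show ((Equiv.swap c 0) u ≠ (Equiv.swap c 0) v ∧
      (((Equiv.swap c 0) u).val = 0 ∨ ((Equiv.swap c 0) v).val = 0)) ↔ G.Adj u v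
  rw [hchar u v]
  have hval : ∀ w : Fin n, ((Equiv.swap c 0) w).val = 0 ↔ w = c := by
    intro w
    rw [show (((Equiv.swap c 0) w).val = 0) ↔ ((Equiv.swap c 0) w = 0) by
        rw [Fin.ext_iff, Fin.val_zero],
      Equiv.swap_apply_eq_iff, Equiv.swap_apply_right]
  simp only [hval u, hval v, ne_eq, EmbeddingLike.apply_eq_iff_eq]

lemma side_cover {n : ℕ} (G : SimpleGraph (Fin n)) (a b : Fin n) (S : Set (Sym2 (Fin n)))
    (hS : ∀ u x : Fin n, s(u,x) ∈ S → (u = a ∧ x = b) ∨ (u = b ∧ x = a)) :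
    ∀ (v c : Fin n) (p : G.Walk v c),
      ((G.deleteEdges S).Reachable c a ∨ (G.deleteEdges S).Reachable c b) →
      ((G.deleteEdges S).Reachable v a ∨ (G.deleteEdges S).Reachable v b) := by
  intro v c p
  induction p with
  | nil => exact fun hc => hc
  | @cons u x _ h q ih =>
    intro hc
    have ihx := ih hc
    by_cases he : s(u, x) ∈ S
    · rcases hS u x he with ⟨rfl, rfl⟩ | ⟨rfl, rfl⟩
      · exact Or.inl (Reachable.refl _)
      · exact Or.inr (Reachable.refl _)
    · have hadj : (G.deleteEdges S).Adj u x := by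
        rw [SimpleGraph.deleteEdges_adj]
        exact ⟨h, he⟩
      rcases ihx with h1 | h1
      · exact Or.inl (hadj.reachable.trans h1)
      · exact Or.inr (hadj.reachable.trans h1)

lemma sum_dist_bound {n : ℕ} (G : SimpleGraph (Fin n)) (hT : G.IsTree) (hn : 4 ≤ n)
    (hns : ¬ Nonempty (G ≃g _root_.starGraph n)) :
    2*(n:ℝ)^2 - 2*n - 4 ≤ ∑ u : Fin n, ∑ v : Fin n, (G.dist u v : ℝ) := by
  classical
  obtain ⟨a, b, a', b', hab, haa', ha'b, hbb', hb'a⟩ := exists_internal_edge G hT hn hns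
  set G' := G.deleteEdges {s(a,b)} with hG'
  have hbr : ¬ G'.Reachable a b :=
    ((isBridge_iff.mp ((isAcyclic_iff_forall_adj_isBridge.mp hT.IsAcyclic) hab)))
  have hcross_walk : ∀ v w : Fin n, G'.Reachable v a → G'.Reachable w b →
      ∀ p : G.Walk v w, s(a,b) ∈ p.edges := by
    intro v w hv hw p
    by_contra hne
    have hp' : ∀ e ∈ p.edges, e ∉ ({s(a,b)} : Set (Sym2 (Fin n))) := by
      intro e he hmem
      rw [Set.mem_singleton_iff] at hmem
      exact hne (hmem ▸ he)
    have hr : G'.Reachable v w := ⟨p.toDeleteEdges _ hp'⟩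
    exact hbr (hv.symm.trans (hr.trans hw))
  have hcover : ∀ v : Fin n, G'.Reachable v a ∨ G'.Reachable v b := by
    intro v
    obtain ⟨p⟩ := hT.isConnected.preconnected v a
    refine side_cover G a b {s(a,b)} ?_ v a p (Or.inl (Reachable.refl _))
    intro u x hux
    rw [Set.mem_singleton_iff, Sym2.eq_iff] at hux
    exact hux
  have hdisj : ∀ v, ¬(G'.Reachable v a ∧ G'.Reachable v b) := by
    rintro v ⟨h1, h2⟩; exact hbr (h1.symm.trans h2)
  set A : Finset (Fin n) := Finset.univ.filter (fun v => G'.Reachable v a) with hA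
  set B : Finset (Fin n) := Finset.univ.filter (fun v => G'.Reachable v b) with hB
  have hmemA : ∀ v, v ∈ A ↔ G'.Reachable v a := by
    intro v; rw [hA, Finset.mem_filter]; simp
  have hmemB : ∀ v, v ∈ B ↔ G'.Reachable v b := by
    intro v; rw [hB, Finset.mem_filter]; simp
  have haA : a ∈ A := (hmemA a).mpr (Reachable.refl _)
  have hbB : b ∈ B := (hmemB b).mpr (Reachable.refl _)
  have ha'A : a' ∈ A := by
    rw [hmemA]
    refine SimpleGraph.Adj.reachable ?_
    rw [hG', SimpleGraph.deleteEdges_adj]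
    refine ⟨haa'.symm, ?_⟩
    simp only [Set.mem_singleton_iff, Sym2.eq_iff]
    push_neg
    constructor
    · intro _; exact hab.ne
    · intro h; exact absurd h ha'b
  have hb'B : b' ∈ B := by
    rw [hmemB]
    refine SimpleGraph.Adj.reachable ?_
    rw [hG', SimpleGraph.deleteEdges_adj]
    refine ⟨hbb'.symm, ?_⟩
    simp only [Set.mem_singleton_iff, Sym2.eq_iff]
    push_neg
    constructor
    · intro h; exact absurd h hb'a
    · intro _; exact hab.ne'
  have hdisjAB : Disjoint A B := by
    rw [Finset.disjoint_left]
    intro v hv1 hv2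
    exact hdisj v ⟨(hmemA v).mp hv1, (hmemB v).mp hv2⟩
  have hunion : A ∪ B = Finset.univ := by
    ext v
    simp only [Finset.mem_union, Finset.mem_univ, iff_true]
    rcases hcover v with h | h
    · exact Or.inl ((hmemA v).mpr h)
    · exact Or.inr ((hmemB v).mpr h)
  set A₀ := A.erase a with hA₀
  set B₀ := B.erase b with hB₀
  have hcardAB : A.card + B.card = n := by
    rw [← Finset.card_union_of_disjoint hdisjAB, hunion]
    simp
  have hcardA : A₀.card + 1 = A.card := Finset.card_erase_add_one haA
  have hcardB : B₀.card + 1 = B.card := Finset.card_erase_add_one hbB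
  have ha'A₀ : a' ∈ A₀ := Finset.mem_erase.mpr ⟨haa'.ne', ha'A⟩
  have hb'B₀ : b' ∈ B₀ := Finset.mem_erase.mpr ⟨hbb'.ne', hb'B⟩
  have hpA : 1 ≤ A₀.card := Finset.card_pos.mpr ⟨a', ha'A₀⟩
  have hqB : 1 ≤ B₀.card := Finset.card_pos.mpr ⟨b', hb'B₀⟩
  -- distance ≥ 3 between the two sides
  have hdist3 : ∀ v ∈ A₀, ∀ w ∈ B₀, 3 ≤ G.dist v w := by
    intro v hv w hw
    obtain ⟨hva', hvA⟩ := Finset.mem_erase.mp hv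
    obtain ⟨hwb', hwB⟩ := Finset.mem_erase.mp hw
    have hvA' := (hmemA v).mp hvA
    have hwB' := (hmemB w).mp hwB
    have hvb : v ≠ b := by rintro rfl; exact hdisj v ⟨hvA', Reachable.refl _⟩
    have hwa : w ≠ a := by rintro rfl; exact hdisj w ⟨Reachable.refl _, hwB'⟩
    have hvw : v ≠ w := by rintro rfl; exact hdisj v ⟨hvA', hwB'⟩
    have hd0 : G.dist v w ≠ 0 := by
      rw [SimpleGraph.dist_ne_zero_iff_ne_and_reachable]
      exact ⟨hvw, hT.isConnected.preconnected v w⟩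
    obtain ⟨p, hplen⟩ := SimpleGraph.exists_walk_of_dist_ne_zero hd0
    have hedge : s(a,b) ∈ p.bypass.edges := hcross_walk v w hvA' hwB' p.bypass
    have hasup := p.bypass.fst_mem_support_of_mem_edges hedge
    have hbsup := p.bypass.snd_mem_support_of_mem_edges hedge
    have hsub : ([v, w, a, b] : List (Fin n)) ⊆ p.bypass.support := by
      intro z hz
      simp only [List.mem_cons, List.not_mem_nil, or_false] at hz
      rcases hz with rfl | rfl | rfl | rfl
      · exact p.bypass.start_mem_support
      · exact p.bypass.end_mem_support
      · exact hasup
      · exact hbsup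
    have hnodup : ([v, w, a, b] : List (Fin n)).Nodup := by
      simp [hvw, hva', hvb, hwa, hwb', hab.ne]
    have hlen : ([v, w, a, b] : List (Fin n)).length ≤ p.bypass.support.length :=
      List.Subperm.length_le (hnodup.subperm hsub)
    rw [SimpleGraph.Walk.length_support] at hlen
    simp only [List.length_cons, List.length_nil] at hlen
    have hby := SimpleGraph.Walk.length_bypass_le p
    omega
  -- now the sum bound
  have hAB₀ : ∀ z : Fin n, ¬(z ∈ A₀ ∧ z ∈ B₀) := by
    rintro z ⟨h1, h2⟩
    exact (Finset.disjoint_left.mp hdisjAB) (Finset.mem_of_mem_erase h1)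
      (Finset.mem_of_mem_erase h2)
  have hpoint : ∀ u v : Fin n,
      2 - (if u = v then (2:ℝ) else 0) - (if G.Adj u v then (1:ℝ) else 0)
      + (if (u ∈ A₀ ∧ v ∈ B₀) ∨ (u ∈ B₀ ∧ v ∈ A₀) then (1:ℝ) else 0) ≤ (G.dist u v : ℝ) := by
    intro u v
    by_cases huv : u = v
    · subst huv
      have hcr : ¬((u ∈ A₀ ∧ u ∈ B₀) ∨ (u ∈ B₀ ∧ u ∈ A₀)) := by
        rintro (⟨h1, h2⟩ | ⟨h1, h2⟩)
        · exact hAB₀ u ⟨h1, h2⟩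
        · exact hAB₀ u ⟨h2, h1⟩
      simp only [if_pos rfl, if_neg (G.loopless.irrefl u), if_neg hcr,
        SimpleGraph.dist_self, Nat.cast_zero]
      norm_num
    · have hd1 : 1 ≤ G.dist u v :=
        hT.isConnected.pos_dist_of_ne huv
      by_cases hcr : (u ∈ A₀ ∧ v ∈ B₀) ∨ (u ∈ B₀ ∧ v ∈ A₀)
      · have h3 : 3 ≤ G.dist u v := by
          rcases hcr with ⟨h1, h2⟩ | ⟨h1, h2⟩
          · exact hdist3 u h1 v h2
          · rw [SimpleGraph.dist_comm]; exact hdist3 v h2 u h1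
        have hnadj : ¬ G.Adj u v := by
          intro hadj
          rw [← SimpleGraph.dist_eq_one_iff_adj] at hadj
          omega
        simp only [if_neg huv, if_neg hnadj, if_pos hcr]
        push_cast
        have : (3:ℝ) ≤ (G.dist u v : ℝ) := by exact_mod_cast h3
        linarith
      · by_cases hadj : G.Adj u v
        · simp only [if_neg huv, if_pos hadj, if_neg hcr]
          have : (1:ℝ) ≤ (G.dist u v : ℝ) := by exact_mod_cast hd1
          linarith
        · have h2 : 2 ≤ G.dist u v := by
            by_contra hlt
            push_neg at hlt
            have he1 : G.dist u v = 1 := by omega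
            exact hadj (SimpleGraph.dist_eq_one_iff_adj.mp he1)
          simp only [if_neg huv, if_neg hadj, if_neg hcr]
          have : (2:ℝ) ≤ (G.dist u v : ℝ) := by exact_mod_cast h2
          linarith
  have hle : ∑ u : Fin n, ∑ v : Fin n,
      (2 - (if u = v then (2:ℝ) else 0) - (if G.Adj u v then (1:ℝ) else 0)
      + (if (u ∈ A₀ ∧ v ∈ B₀) ∨ (u ∈ B₀ ∧ v ∈ A₀) then (1:ℝ) else 0))
      ≤ ∑ u : Fin n, ∑ v : Fin n, (G.dist u v : ℝ) :=
    Finset.sum_le_sum fun u _ => Finset.sum_le_sum fun v _ => hpoint u v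
  have hsumconst : ∑ _u : Fin n, ∑ _v : Fin n, (2:ℝ) = 2*(n:ℝ)^2 := by
    simp [Finset.sum_const, Fintype.card_fin, nsmul_eq_mul]
    ring
  have hsumeq : ∑ u : Fin n, ∑ v : Fin n, (if u = v then (2:ℝ) else 0) = 2*(n:ℝ) := by
    simp [Finset.sum_ite_eq, Finset.sum_const, Fintype.card_fin, nsmul_eq_mul]
    ring
  have hsumadj : ∑ u : Fin n, ∑ v : Fin n, (if G.Adj u v then (1:ℝ) else 0) = 2*((n:ℝ)-1) := by
    have hdeg : ∀ u : Fin n, ∑ v : Fin n, (if G.Adj u v then (1:ℝ) else 0) = (G.degree u : ℝ) := by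
      intro u
      rw [Finset.sum_boole, ← SimpleGraph.neighborFinset_eq_filter,
        SimpleGraph.card_neighborFinset_eq_degree]
    simp_rw [hdeg]
    have h1 : ∑ u : Fin n, (G.degree u : ℝ) = ((∑ u : Fin n, G.degree u : ℕ) : ℝ) := by
      push_cast; rfl
    rw [h1, SimpleGraph.sum_degrees_eq_twice_card_edges]
    have hcard : G.edgeFinset.card + 1 = n := by simpa using hT.card_edgeFinset
    have : ((G.edgeFinset.card : ℝ)) + 1 = n := by exact_mod_cast hcard
    push_cast
    linarith
  have hcardone : ∀ (S : Finset (Fin n)), ∑ u : Fin n, (if u ∈ S then (1:ℝ) else 0) = S.card := by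
    intro S
    rw [Finset.sum_ite_mem, Finset.univ_inter, Finset.sum_const, nsmul_eq_mul, mul_one]
  have hsumcross : ∑ u : Fin n, ∑ v : Fin n,
      (if (u ∈ A₀ ∧ v ∈ B₀) ∨ (u ∈ B₀ ∧ v ∈ A₀) then (1:ℝ) else 0)
      = (A₀.card : ℝ) * B₀.card + (B₀.card : ℝ) * A₀.card := by
    have hsplitc : ∀ u v : Fin n, (if (u ∈ A₀ ∧ v ∈ B₀) ∨ (u ∈ B₀ ∧ v ∈ A₀) then (1:ℝ) else 0)
        = (if u ∈ A₀ then (1:ℝ) else 0) * (if v ∈ B₀ then (1:ℝ) else 0)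
          + (if u ∈ B₀ then (1:ℝ) else 0) * (if v ∈ A₀ then (1:ℝ) else 0) := by
      intro u v
      by_cases h1 : u ∈ A₀
      · have h3 : u ∉ B₀ := fun h => hAB₀ u ⟨h1, h⟩
        by_cases h2 : v ∈ B₀ <;> simp [h1, h2, h3]
      · by_cases h3 : u ∈ B₀
        · by_cases h4 : v ∈ A₀ <;> simp [h1, h3, h4]
        · simp [h1, h3]
    simp_rw [hsplitc, Finset.sum_add_distrib, ← Finset.mul_sum, ← Finset.sum_mul, hcardone]
  -- compute the double sum of F
  have hFsum : ∑ u : Fin n, ∑ v : Fin n,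
      (2 - (if u = v then (2:ℝ) else 0) - (if G.Adj u v then (1:ℝ) else 0)
      + (if (u ∈ A₀ ∧ v ∈ B₀) ∨ (u ∈ B₀ ∧ v ∈ A₀) then (1:ℝ) else 0))
      = 2*(n:ℝ)^2 - 2*(n:ℝ) - 2*((n:ℝ)-1)
        + ((A₀.card : ℝ) * B₀.card + (B₀.card : ℝ) * A₀.card) := by
    simp only [Finset.sum_add_distrib, Finset.sum_sub_distrib]
    rw [hsumconst, hsumeq, hsumadj, hsumcross]
  have hcards : (A₀.card : ℝ) + (B₀.card : ℝ) + 2 = n := by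
    have : A₀.card + 1 + (B₀.card + 1) = n := by rw [hcardA, hcardB]; exact hcardAB
    exact_mod_cast by push_cast; linarith [this] 
  have hp1 : (1:ℝ) ≤ (A₀.card : ℝ) := by exact_mod_cast hpA
  have hq1 : (1:ℝ) ≤ (B₀.card : ℝ) := by exact_mod_cast hqB
  have hpq : (n:ℝ) - 3 ≤ (A₀.card : ℝ) * (B₀.card : ℝ) := by nlinarith
  rw [hFsum] at hle
  nlinarith

end CombAux

/-- A tree of order `n ≥ 4` other than the star has distance signless Laplacian
spectral radius greater than `(5n − 8 + √(9(n−2)² + 4(n−1)))/2`. -/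
theorem stmt_13 {n : ℕ} (G : SimpleGraph (Fin n)) (hT : G.IsTree) (hn : 4 ≤ n)
    (hns : ¬ Nonempty (G ≃g starGraph n)) :
    specRadius (Matrix.diagonal (transmission G) + distMatrix G) >
      (5 * (n : ℝ) - 8 +
        Real.sqrt (9 * ((n : ℝ) - 2) ^ 2 + 4 * ((n : ℝ) - 1))) / 2 := by
  classical
  haveI : NeZero n := ⟨by omega⟩
  have hS : 2*(n:ℝ)^2 - 2*n - 4 ≤ ∑ u : Fin n, ∑ v : Fin n, (G.dist u v : ℝ) :=
    sum_dist_bound G hT hn hns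
  set M := Matrix.diagonal (transmission G) + distMatrix G with hM
  have hherm : M.IsHermitian := by
    have h1 : ∀ i j, M i j = M j i := by
      intro i j
      simp only [hM, Matrix.add_apply, distMatrix, Matrix.diagonal_apply]
      rw [SimpleGraph.dist_comm]
      by_cases h : i = j
      · subst h; simp
      · rw [if_neg h, if_neg (Ne.symm h)]
    rw [Matrix.IsHermitian]
    ext i j
    rw [Matrix.conjTranspose_apply, star_trivial]
    exact h1 j i
  have hone : (fun _ : Fin n => (1:ℝ)) ≠ 0 := by
    intro h
    have := congrFun h 0
    simpa using this
  have hray := specRadius_ge_rayleigh (by omega : 0 < n) M hherm (fun _ => 1) hone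
  have hrow : ∀ i, ∑ j, M i j = transmission G i + ∑ j, (G.dist i j : ℝ) := by
    intro i
    simp only [hM, Matrix.add_apply, Finset.sum_add_distrib, distMatrix, Matrix.diagonal_apply]
    congr 1
    rw [Finset.sum_ite_eq]
    simp
  have hnum : (fun _ : Fin n => (1:ℝ)) ⬝ᵥ (M *ᵥ (fun _ : Fin n => (1:ℝ)))
      = 2 * ∑ u : Fin n, ∑ v : Fin n, (G.dist u v : ℝ) := by
    simp only [dotProduct, Matrix.mulVec, one_mul, mul_one]
    simp_rw [hrow]
    rw [Finset.sum_add_distrib]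
    have ht : ∑ i : Fin n, transmission G i = ∑ u : Fin n, ∑ v : Fin n, (G.dist u v : ℝ) := by
      simp [transmission]
    rw [ht]
    ring
  have hden : (fun _ : Fin n => (1:ℝ)) ⬝ᵥ (fun _ : Fin n => (1:ℝ)) = (n:ℝ) := by
    simp [dotProduct]
  rw [hnum, hden] at hray
  have hnR : (4:ℝ) ≤ (n:ℝ) := by exact_mod_cast hn
  have hnpos : (0:ℝ) < (n:ℝ) := by linarith
  have hsq : Real.sqrt (9 * ((n : ℝ) - 2) ^ 2 + 4 * ((n : ℝ) - 1)) < 3*(n:ℝ) - 5 := by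
    rw [show (9 * ((n : ℝ) - 2) ^ 2 + 4 * ((n : ℝ) - 1)) =
      (3*(n:ℝ)-5)^2 - (2*(n:ℝ) - 7) from by ring]
    refine (Real.sqrt_lt' (by linarith)).mpr ?_
    nlinarith
  have hstep : (8*(n:ℝ) - 13)/2 ≤ (2 * ∑ u : Fin n, ∑ v : Fin n, (G.dist u v : ℝ)) / (n:ℝ) := by
    rw [div_le_div_iff₀ (by norm_num) hnpos]
    nlinarith
  calc (5 * (n : ℝ) - 8 + Real.sqrt (9 * ((n : ℝ) - 2) ^ 2 + 4 * ((n : ℝ) - 1))) / 2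
      < (5 * (n : ℝ) - 8 + (3*(n:ℝ) - 5)) / 2 := by linarith
    _ = (8*(n:ℝ) - 13)/2 := by ring
    _ ≤ (2 * ∑ u : Fin n, ∑ v : Fin n, (G.dist u v : ℝ)) / (n:ℝ) := hstep
    _ ≤ specRadius M := hray
end

section
/- Let n ≥ 6 and 0 ≤ α ≤ 1. Then ρ_{D_α}(S_n^+) is the largest root of the cubic equation ρ³ − (3αn + 2n − α − 7)ρ² + (2α²n² + 6αn² − α²n − 17αn + 2α − 7n + 17)ρ − (4α²n³ − 10α²n² − 8αn² + 4α²n + 19αn − 7α + 3n − 5) = 0. -/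
open Matrix

lemma starPlus_adj {n : ℕ} {u v : Fin n} : (starPlus n).Adj u v ↔ u ≠ v ∧ (u.val = 0 ∨ v.val = 0 ∨ (u.val = 1 ∧ v.val = 2) ∨ (u.val = 2 ∧ v.val = 1)) := Iff.rfl

lemma starPlus_dist {n : ℕ} (hn : 6 ≤ n) (u v : Fin n) :
    ((starPlus n).dist u v : ℝ) = if u = v then 0 else
      if (u.val = 0 ∨ v.val = 0 ∨ (u.val = 1 ∧ v.val = 2) ∨ (u.val = 2 ∧ v.val = 1)) then 1 else 2 := by
  have h0 : (0:ℕ) < n := by omega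
  by_cases huv : u = v
  · simp [huv]
  rw [if_neg huv]
  by_cases hadj : (starPlus n).Adj u v
  · rw [if_pos hadj.2]
    have : (starPlus n).dist u v = 1 := SimpleGraph.dist_eq_one_iff_adj.2 hadj
    rw [this]; norm_num
  · rw [if_neg (fun h => hadj ⟨huv, h⟩)]
    have hu0 : u.val ≠ 0 := fun h => hadj ⟨huv, Or.inl h⟩
    have hv0 : v.val ≠ 0 := fun h => hadj ⟨huv, Or.inr (Or.inl h)⟩
    set z : Fin n := ⟨0, h0⟩ with hz
    have hadj1 : (starPlus n).Adj u z := ⟨by simp [Fin.ext_iff, hz]; omega, Or.inr (Or.inl rfl)⟩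
    have hadj2 : (starPlus n).Adj z v := ⟨by simp [Fin.ext_iff, hz]; omega, Or.inl rfl⟩
    have w : (starPlus n).Walk u v := hadj1.toWalk.append hadj2.toWalk
    have hle : (starPlus n).dist u v ≤ 2 := by
      have h2 := SimpleGraph.dist_le (hadj1.toWalk.append hadj2.toWalk)
      have h3 : (hadj1.toWalk.append hadj2.toWalk).length = 2 := by
        simp [SimpleGraph.Walk.length_append]
      omega
    have hne1 : (starPlus n).dist u v ≠ 1 := fun h => hadj (SimpleGraph.dist_eq_one_iff_adj.1 h)
    have hne0 : (starPlus n).dist u v ≠ 0 := by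
      intro h
      rcases SimpleGraph.dist_eq_zero_iff_eq_or_not_reachable.1 h with h' | h'
      · exact huv h'
      · exact h' ⟨w⟩
    have : (starPlus n).dist u v = 2 := by omega
    rw [this]; norm_num

set_option maxRecDepth 8000 in
lemma sum_dist_mul_s15 {n : ℕ} (hn : 6 ≤ n) (u : Fin n) (x : Fin n → ℝ) :
    ∑ v, ((starPlus n).dist u v : ℝ) * x v =
      if u.val = 0 then (∑ v, x v) - x ⟨0, by omega⟩
      else if u.val = 1 then 2*(∑ v, x v) - x ⟨0, by omega⟩ - 2*x ⟨1, by omega⟩ - x ⟨2, by omega⟩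
      else if u.val = 2 then 2*(∑ v, x v) - x ⟨0, by omega⟩ - x ⟨1, by omega⟩ - 2*x ⟨2, by omega⟩
      else 2*(∑ v, x v) - x ⟨0, by omega⟩ - 2*x u := by
  set i0 : Fin n := ⟨0, by omega⟩ with hi0
  set i1 : Fin n := ⟨1, by omega⟩ with hi1
  set i2 : Fin n := ⟨2, by omega⟩ with hi2
  by_cases h0 : u.val = 0
  · rw [if_pos h0]
    have key : ∀ v, ((starPlus n).dist u v : ℝ) * x v = x v - (if v = i0 then x v else 0) := by
      intro v
      rw [starPlus_dist hn]
      split_ifs <;> simp_all [Fin.ext_iff] <;> first | ring | omega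
    rw [Finset.sum_congr rfl (fun v _ => key v), Finset.sum_sub_distrib]
    simp [Finset.sum_ite_eq']
  · rw [if_neg h0]
    by_cases h1 : u.val = 1
    · rw [if_pos h1]
      have key : ∀ v, ((starPlus n).dist u v : ℝ) * x v =
          2 * x v - (if v = i0 then x v else 0) - 2*(if v = i1 then x v else 0) - (if v = i2 then x v else 0) := by
        intro v
        rw [starPlus_dist hn]
        split_ifs <;> simp_all [Fin.ext_iff] <;> first | ring | omega
      rw [Finset.sum_congr rfl (fun v _ => key v), Finset.sum_sub_distrib,
        Finset.sum_sub_distrib, Finset.sum_sub_distrib, ← Finset.mul_sum, ← Finset.mul_sum]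
      simp [Finset.sum_ite_eq']
      try ring
    · rw [if_neg h1]
      by_cases h2 : u.val = 2
      · rw [if_pos h2]
        have key : ∀ v, ((starPlus n).dist u v : ℝ) * x v =
            2 * x v - (if v = i0 then x v else 0) - (if v = i1 then x v else 0) - 2*(if v = i2 then x v else 0) := by
          intro v
          rw [starPlus_dist hn]
          split_ifs <;> simp_all [Fin.ext_iff] <;> first | ring | omega
        rw [Finset.sum_congr rfl (fun v _ => key v), Finset.sum_sub_distrib,
          Finset.sum_sub_distrib, Finset.sum_sub_distrib, ← Finset.mul_sum, ← Finset.mul_sum]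
        simp [Finset.sum_ite_eq']
        try ring
      · rw [if_neg h2]
        have key : ∀ v, ((starPlus n).dist u v : ℝ) * x v =
            2 * x v - (if v = i0 then x v else 0) - 2*(if v = u then x v else 0) := by
          intro v
          rw [starPlus_dist hn]
          by_cases hvu : u = v
          · rw [if_pos hvu, if_neg (by simp [Fin.ext_iff, ← hvu]; omega),
              if_pos hvu.symm]
            ring
          · rw [if_neg hvu]
            by_cases hv0 : v = i0
            · rw [if_pos (Or.inr (Or.inl (by rw [hv0, hi0]))), if_pos hv0,
                if_neg (fun h => hvu h.symm)]
              ring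
            · rw [if_neg (by intro h; apply hv0; rw [hi0]; ext; show v.val = 0; omega),
                if_neg hv0, if_neg (fun h => hvu h.symm)]
              ring
        rw [Finset.sum_congr rfl (fun v _ => key v), Finset.sum_sub_distrib,
          Finset.sum_sub_distrib, ← Finset.mul_sum, ← Finset.mul_sum]
        simp [Finset.sum_ite_eq']
        try ring

lemma transmission_eq {n : ℕ} (hn : 6 ≤ n) (u : Fin n) :
    transmission (starPlus n) u =
      if u.val = 0 then (n:ℝ)-1 else if u.val ≤ 2 then 2*(n:ℝ)-4 else 2*(n:ℝ)-3 := by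
  have h := sum_dist_mul_s15 hn u (fun _ => 1)
  simp only [mul_one] at h
  have hs : (∑ _v : Fin n, (1:ℝ)) = (n:ℝ) := by simp
  rw [hs] at h
  unfold transmission
  rw [h]
  by_cases h0 : u.val = 0
  · simp [h0]
  · rw [if_neg h0]
    by_cases h1 : u.val = 1
    · rw [if_pos h1, if_neg h0, if_pos (by omega)]; ring
    · rw [if_neg h1]
      by_cases h2 : u.val = 2
      · rw [if_pos h2, if_neg h0, if_pos (by omega)]; ring
      · rw [if_neg h2, if_neg h0, if_neg (by omega)]; ring

lemma mulVec_eq {n : ℕ} (hn : 6 ≤ n) (α : ℝ) (x : Fin n → ℝ) (u : Fin n) :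
    (Dalpha α (starPlus n)).mulVec x u =
      α * transmission (starPlus n) u * x u
        + (1-α) * ∑ v, ((starPlus n).dist u v : ℝ) * x v := by
  unfold Dalpha Matrix.mulVec distMatrix
  simp only [Matrix.add_apply, Matrix.smul_apply, dotProduct, Matrix.add_apply,
    Matrix.smul_apply, smul_eq_mul, add_mul, Finset.sum_add_distrib, Finset.mul_sum]
  congr 1
  · have : ∀ v, α * Matrix.diagonal (transmission (starPlus n)) u v * x v
        = α * (if u = v then transmission (starPlus n) u * x v else 0) := by
      intro v
      by_cases h : u = v
      · subst h; simp [Matrix.diagonal_apply_eq]; ring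
      · simp [Matrix.diagonal_apply_ne _ h, h]
    rw [Finset.sum_congr rfl (fun v _ => this v), ← Finset.mul_sum,
      Finset.sum_ite_eq]
    simp [mul_assoc]
  · exact Finset.sum_congr rfl (fun v _ => by show (1 - α) * ((starPlus n).dist u v : ℝ) * x v = _; ring)

noncomputable def cubic (n : ℕ) (α ρ : ℝ) : ℝ :=
  ρ ^ 3 - (3 * α * n + 2 * n - α - 7) * ρ ^ 2 +
    (2 * α ^ 2 * n ^ 2 + 6 * α * n ^ 2 - α ^ 2 * n - 17 * α * n + 2 * α - 7 * n + 17) * ρ -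
    (4 * α ^ 2 * n ^ 3 - 10 * α ^ 2 * n ^ 2 - 8 * α * n ^ 2 + 4 * α ^ 2 * n +
      19 * α * n - 7 * α + 3 * n - 5)

noncomputable def Bmat (n : ℕ) (α : ℝ) : Matrix (Fin 3) (Fin 3) ℝ :=
  !![α*((n:ℝ)-1), 2*(1-α), ((n:ℝ)-3)*(1-α);
     1-α, α*(2*(n:ℝ)-4)+(1-α), 2*((n:ℝ)-3)*(1-α);
     1-α, 4*(1-α), α*(2*(n:ℝ)-3)+2*((n:ℝ)-4)*(1-α)]

lemma det_B (n : ℕ) (α ρ : ℝ) :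
    (ρ • (1 : Matrix (Fin 3) (Fin 3) ℝ) - Bmat n α).det = cubic n α ρ := by
  simp [Bmat, cubic, Matrix.det_fin_three, Matrix.smul_apply, Matrix.one_apply,
    Matrix.sub_apply, Matrix.cons_val_zero, Matrix.cons_val_one, Matrix.head_cons,
    Matrix.cons_val_two, Matrix.tail_cons, Matrix.head_fin_const, Matrix.vecHead, Matrix.vecTail]
  ring

noncomputable def strv (n : ℕ) (a b c : ℝ) : Fin n → ℝ :=
  fun u => if u.val = 0 then a else if u.val ≤ 2 then b else c

lemma sum_strv {n : ℕ} (hn : 6 ≤ n) (a b c : ℝ) :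
    ∑ u, strv n a b c u = a + 2*b + ((n:ℝ)-3)*c := by
  set i0 : Fin n := ⟨0, by omega⟩ with hi0
  set i1 : Fin n := ⟨1, by omega⟩ with hi1
  set i2 : Fin n := ⟨2, by omega⟩ with hi2
  have key : ∀ u : Fin n, strv n a b c u =
      c + (if u = i0 then a - c else 0) + (if u = i1 then b - c else 0)
        + (if u = i2 then b - c else 0) := by
    intro u
    unfold strv
    by_cases h0 : u.val = 0
    · rw [if_pos h0, if_pos (by simp [Fin.ext_iff, hi0]; omega),
        if_neg (by simp [Fin.ext_iff, hi1]; omega), if_neg (by simp [Fin.ext_iff, hi2]; omega)]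
      ring
    · rw [if_neg h0]
      by_cases h1 : u.val = 1
      · rw [if_pos (by omega), if_neg (by simp [Fin.ext_iff, hi0]; omega),
          if_pos (by simp [Fin.ext_iff, hi1]; omega), if_neg (by simp [Fin.ext_iff, hi2]; omega)]
        ring
      · by_cases h2 : u.val = 2
        · rw [if_pos (by omega), if_neg (by simp [Fin.ext_iff, hi0]; omega),
            if_neg (by simp [Fin.ext_iff, hi1]; omega), if_pos (by simp [Fin.ext_iff, hi2]; omega)]
          ring
        · rw [if_neg (by omega), if_neg (by simp [Fin.ext_iff, hi0]; omega),
            if_neg (by simp [Fin.ext_iff, hi1]; omega), if_neg (by simp [Fin.ext_iff, hi2]; omega)]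
          ring
  rw [Finset.sum_congr rfl (fun u _ => key u)]
  simp only [Finset.sum_add_distrib, Finset.sum_const, Finset.card_univ, Fintype.card_fin,
    nsmul_eq_mul, Finset.sum_ite_eq', Finset.mem_univ, if_pos]
  ring

lemma root_is_eigen {n : ℕ} (hn : 6 ≤ n) {α ρ : ℝ} (h : cubic n α ρ = 0) :
    Module.End.HasEigenvalue (Matrix.toLin' (Dalpha α (starPlus n))) ρ := by
  have hdet : (ρ • (1 : Matrix (Fin 3) (Fin 3) ℝ) - Bmat n α).det = 0 := by
    rw [det_B]; exact h
  obtain ⟨w, hw0, hw⟩ := Matrix.exists_mulVec_eq_zero_iff.2 hdet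
  have e0 : ρ * w 0 = α*((n:ℝ)-1)*w 0 + 2*(1-α)*w 1 + ((n:ℝ)-3)*(1-α)*w 2 := by
    have h' := congrFun hw 0
    simp [Matrix.mulVec, dotProduct, Fin.sum_univ_three, Bmat, Matrix.sub_apply,
      Matrix.smul_apply, Matrix.one_apply] at h'
    linear_combination h'
  have e1 : ρ * w 1 = (1-α)*w 0 + (α*(2*(n:ℝ)-4)+(1-α))*w 1 + 2*((n:ℝ)-3)*(1-α)*w 2 := by
    have h' := congrFun hw 1
    simp [Matrix.mulVec, dotProduct, Fin.sum_univ_three, Bmat, Matrix.sub_apply,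
      Matrix.smul_apply, Matrix.one_apply] at h'
    linear_combination h'
  have e2 : ρ * w 2 = (1-α)*w 0 + 4*(1-α)*w 1 + (α*(2*(n:ℝ)-3)+2*((n:ℝ)-4)*(1-α))*w 2 := by
    have h' := congrFun hw 2
    simp [Matrix.mulVec, dotProduct, Fin.sum_univ_three, Bmat, Matrix.sub_apply,
      Matrix.smul_apply, Matrix.one_apply] at h'
    linear_combination h'
  set x : Fin n → ℝ := strv n (w 0) (w 1) (w 2) with hxdef
  have hT : ∑ v, x v = w 0 + 2*w 1 + ((n:ℝ)-3)*w 2 := sum_strv hn _ _ _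
  have hx0v : x ⟨0, by omega⟩ = w 0 := by simp [hxdef, strv]
  have hx1v : x ⟨1, by omega⟩ = w 1 := by simp [hxdef, strv]
  have hx2v : x ⟨2, by omega⟩ = w 1 := by simp [hxdef, strv]
  have hx3v : x ⟨3, by omega⟩ = w 2 := by simp [hxdef, strv]
  have hx : (Dalpha α (starPlus n)).mulVec x = ρ • x := by
    funext u
    rw [show (ρ • x) u = ρ * x u from rfl]
    rw [mulVec_eq hn, transmission_eq hn, sum_dist_mul_s15 hn, hT]
    by_cases h0 : u.val = 0
    · rw [if_pos h0, if_pos h0, show x u = w 0 by simp [hxdef, strv, h0], hx0v]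
      linear_combination -e0
    · rw [if_neg h0, if_neg h0]
      by_cases h1 : u.val = 1
      · rw [if_pos (by omega : u.val ≤ 2), if_pos h1,
          show x u = w 1 by simp [hxdef, strv, h1, h0, (by omega : u.val ≤ 2)],
          hx0v, hx1v, hx2v]
        linear_combination -e1
      · rw [if_neg h1]
        by_cases h2 : u.val = 2
        · rw [if_pos (by omega : u.val ≤ 2), if_pos h2,
            show x u = w 1 by simp only [hxdef, strv]; rw [if_neg h0, if_pos (by omega)],
            hx0v, hx1v, hx2v]
          linear_combination -e1
        · rw [if_neg (by omega : ¬ u.val ≤ 2), if_neg h2,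
            show x u = w 2 by simp only [hxdef, strv]; rw [if_neg h0, if_neg (by omega)],
            hx0v]
          linear_combination -e2
  have hxne : x ≠ 0 := by
    intro hz
    apply hw0
    funext i
    fin_cases i
    · have := congrFun hz ⟨0, by omega⟩
      rw [hx0v] at this
      simpa using this
    · have := congrFun hz ⟨1, by omega⟩
      rw [hx1v] at this
      simpa using this
    · have := congrFun hz ⟨3, by omega⟩
      rw [hx3v] at this
      simpa using this
  exact Module.End.hasEigenvalue_of_hasEigenvector
    ⟨Module.End.mem_eigenspace_iff.2 (by rw [Matrix.toLin'_apply, hx]), hxne⟩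

set_option maxHeartbeats 1000000 in
lemma eigen_cases {n : ℕ} (hn : 6 ≤ n) {α μ : ℝ}
    (h : Module.End.HasEigenvalue (Matrix.toLin' (Dalpha α (starPlus n))) μ) :
    cubic n α μ = 0 ∨ μ = α*(2*(n:ℝ)-3)-1 ∨ μ = α*(2*(n:ℝ)-1)-2 := by
  by_cases hm1 : μ = α*(2*(n:ℝ)-3)-1
  · exact Or.inr (Or.inl hm1)
  by_cases hm2 : μ = α*(2*(n:ℝ)-1)-2
  · exact Or.inr (Or.inr hm2)
  left
  obtain ⟨x, hmem, hxne⟩ := h.exists_hasEigenvector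
  have hx : ∀ u, (Dalpha α (starPlus n)).mulVec x u = μ * x u := by
    intro u
    have h' := Module.End.mem_eigenspace_iff.1 hmem
    rw [Matrix.toLin'_apply] at h'
    exact congrFun h' u
  set i0 : Fin n := ⟨0, by omega⟩ with hi0
  set i1 : Fin n := ⟨1, by omega⟩ with hi1
  set i2 : Fin n := ⟨2, by omega⟩ with hi2
  set i3 : Fin n := ⟨3, by omega⟩ with hi3
  set T : ℝ := ∑ v, x v with hTdef
  have eq0 : α*((n:ℝ)-1)*x i0 + (1-α)*(T - x i0) = μ * x i0 := by
    have h' := hx i0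
    rw [mulVec_eq hn, transmission_eq hn, sum_dist_mul_s15 hn] at h'
    simpa [hi0] using h'
  have eq1 : α*(2*(n:ℝ)-4)*x i1 + (1-α)*(2*T - x i0 - 2*x i1 - x i2) = μ * x i1 := by
    have h' := hx i1
    rw [mulVec_eq hn, transmission_eq hn, sum_dist_mul_s15 hn] at h'
    simp only [hi1] at h'
    norm_num at h'
    linear_combination h'
  have eq2 : α*(2*(n:ℝ)-4)*x i2 + (1-α)*(2*T - x i0 - x i1 - 2*x i2) = μ * x i2 := by
    have h' := hx i2
    rw [mulVec_eq hn, transmission_eq hn, sum_dist_mul_s15 hn] at h'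
    simp only [hi2] at h'
    norm_num at h'
    linear_combination h'
  have eqP : ∀ u : Fin n, 3 ≤ u.val →
      α*(2*(n:ℝ)-3)*x u + (1-α)*(2*T - x i0 - 2*x u) = μ * x u := by
    intro u hu
    have h' := hx u
    rw [mulVec_eq hn, transmission_eq hn, sum_dist_mul_s15 hn] at h'
    rw [if_neg (by omega), if_neg (by omega), if_neg (by omega), if_neg (by omega),
      if_neg (by omega)] at h'
    linear_combination h'
  have h12 : x i1 = x i2 := by
    have hfac : (α*(2*(n:ℝ)-3)-1-μ) * (x i1 - x i2) = 0 := by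
      linear_combination eq1 - eq2
    rcases mul_eq_zero.1 hfac with hc | hc
    · exact absurd (by linarith : μ = α*(2*(n:ℝ)-3)-1) hm1
    · linarith
  have hPc : ∀ u : Fin n, 3 ≤ u.val → x u = x i3 := by
    intro u hu
    have h1 : (μ - (α*(2*(n:ℝ)-1)-2)) * x u = (1-α)*(2*T - x i0) := by
      linear_combination -(eqP u hu)
    have h2 : (μ - (α*(2*(n:ℝ)-1)-2)) * x i3 = (1-α)*(2*T - x i0) := by
      linear_combination -(eqP i3 (by simp [hi3]))
    have hfac : (μ - (α*(2*(n:ℝ)-1)-2)) * (x u - x i3) = 0 := by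
      linear_combination h1 - h2
    rcases mul_eq_zero.1 hfac with hc | hc
    · exact absurd (by linarith : μ = α*(2*(n:ℝ)-1)-2) hm2
    · linarith
  have hxstr : x = strv n (x i0) (x i1) (x i3) := by
    funext u
    unfold strv
    by_cases h0 : u.val = 0
    · rw [if_pos h0]
      congr 1
      simp [hi0, Fin.ext_iff, h0]
    · rw [if_neg h0]
      by_cases h1 : u.val = 1
      · rw [if_pos (by omega)]
        congr 1
        simp [hi1, Fin.ext_iff, h1]
      · by_cases h2 : u.val = 2
        · rw [if_pos (by omega)]
          rw [show u = i2 by simp [hi2, Fin.ext_iff, h2], h12]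
        · rw [if_neg (by omega)]
          exact hPc u (by omega)
  have hT : T = x i0 + 2*x i1 + ((n:ℝ)-3)*x i3 := by
    rw [hTdef]
    conv_lhs => rw [hxstr]
    exact sum_strv hn _ _ _
  have hwne : ![x i0, x i1, x i3] ≠ 0 := by
    intro hz
    apply hxne
    rw [hxstr]
    have ha : x i0 = 0 := congrFun hz 0
    have hb : x i1 = 0 := congrFun hz 1
    have hc : x i3 = 0 := congrFun hz 2
    rw [ha, hb, hc]
    funext u
    simp [strv]
  rw [hT] at eq0 eq1
  rw [← h12] at eq1
  have eqP3 := eqP i3 (by simp [hi3])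
  rw [hT] at eqP3
  have hmul : (μ • (1 : Matrix (Fin 3) (Fin 3) ℝ) - Bmat n α).mulVec ![x i0, x i1, x i3] = 0 := by
    funext i
    fin_cases i
    · simp [Bmat, Matrix.mulVec, dotProduct, Fin.sum_univ_three, Matrix.sub_apply,
        Matrix.smul_apply, Matrix.one_apply]
      linear_combination -eq0
    · simp [Bmat, Matrix.mulVec, dotProduct, Fin.sum_univ_three, Matrix.sub_apply,
        Matrix.smul_apply, Matrix.one_apply]
      linear_combination -eq1
    · simp [Bmat, Matrix.mulVec, dotProduct, Fin.sum_univ_three, Matrix.sub_apply,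
        Matrix.smul_apply, Matrix.one_apply]
      linear_combination -eqP3
  have hdet : (μ • (1 : Matrix (Fin 3) (Fin 3) ℝ) - Bmat n α).det = 0 :=
    Matrix.exists_mulVec_eq_zero_iff.1 ⟨![x i0, x i1, x i3], hwne, hmul⟩
  rw [det_B] at hdet
  exact hdet


/-- `ρ_{D_α}(S_n⁺)` is the largest root of the cubic
`ρ³ − (3αn + 2n − α − 7)ρ² + (2α²n² + 6αn² − α²n − 17αn + 2α − 7n + 17)ρ
 − (4α²n³ − 10α²n² − 8αn² + 4α²n + 19αn − 7α + 3n − 5) = 0`. -/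
theorem stmt_15 {n : ℕ} (hn : 6 ≤ n) (α : ℝ) (hα0 : 0 ≤ α) (hα1 : α ≤ 1) :
    IsGreatest {ρ : ℝ |
        ρ ^ 3 - (3 * α * n + 2 * n - α - 7) * ρ ^ 2 +
          (2 * α ^ 2 * n ^ 2 + 6 * α * n ^ 2 - α ^ 2 * n - 17 * α * n + 2 * α -
            7 * n + 17) * ρ -
          (4 * α ^ 2 * n ^ 3 - 10 * α ^ 2 * n ^ 2 - 8 * α * n ^ 2 + 4 * α ^ 2 * n +
            19 * α * n - 7 * α + 3 * n - 5) = 0}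
      (specRadius (Dalpha α (starPlus n))) := by
  have hn' : (6:ℝ) ≤ (n:ℝ) := by exact_mod_cast hn
  set S : Set ℝ := {μ : ℝ | Module.End.HasEigenvalue (Matrix.toLin' (Dalpha α (starPlus n))) μ}
    with hSdef
  have hSfin : S.Finite := Module.End.finite_hasEigenvalue (Matrix.toLin' (Dalpha α (starPlus n)))
  have hmemset : ∀ ρ : ℝ, (ρ ∈ {ρ : ℝ |
        ρ ^ 3 - (3 * α * n + 2 * n - α - 7) * ρ ^ 2 +
          (2 * α ^ 2 * n ^ 2 + 6 * α * n ^ 2 - α ^ 2 * n - 17 * α * n + 2 * α -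
            7 * n + 17) * ρ -
          (4 * α ^ 2 * n ^ 3 - 10 * α ^ 2 * n ^ 2 - 8 * α * n ^ 2 + 4 * α ^ 2 * n +
            19 * α * n - 7 * α + 3 * n - 5) = 0}) ↔ cubic n α ρ = 0 := by
    intro ρ
    rw [Set.mem_setOf_eq]
    unfold cubic
    constructor <;> intro h <;> linear_combination h
  -- the test point
  set t0 : ℝ := 2*(n:ℝ) - 8 + 5*α with ht0
  have hpt : cubic n α t0 ≤ 0 := by
    have hid : cubic n α t0 = (1-α)^2 * ((n:ℝ)-3) * (10*α*((n:ℝ)-5) - (18*(n:ℝ)-65)) := by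
      unfold cubic
      rw [ht0]
      ring
    rw [hid]
    have h1 : (0:ℝ) ≤ (1-α)^2 := sq_nonneg _
    have h2 : (0:ℝ) ≤ (n:ℝ)-3 := by linarith
    have h3 : 10*α*((n:ℝ)-5) - (18*(n:ℝ)-65) ≤ 0 := by nlinarith
    nlinarith [mul_nonneg h1 h2]
  -- a big point where cubic is nonnegative
  obtain ⟨X, htX, hfX⟩ : ∃ X : ℝ, t0 ≤ X ∧ 0 ≤ cubic n α X := by
    set c2 : ℝ := 3 * α * n + 2 * n - α - 7
    set c1 : ℝ := 2 * α ^ 2 * n ^ 2 + 6 * α * n ^ 2 - α ^ 2 * n - 17 * α * n + 2 * α - 7 * n + 17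
    set c0 : ℝ := 4 * α ^ 2 * n ^ 3 - 10 * α ^ 2 * n ^ 2 - 8 * α * n ^ 2 + 4 * α ^ 2 * n +
      19 * α * n - 7 * α + 3 * n - 5
    refine ⟨1 + |c2| + |c1| + |c0| + |t0|, ?_, ?_⟩
    · have := le_abs_self t0
      have := abs_nonneg c2
      have := abs_nonneg c1
      have := abs_nonneg c0
      linarith
    · set X : ℝ := 1 + |c2| + |c1| + |c0| + |t0|
      have hX1 : (1:ℝ) ≤ X := by
        have := abs_nonneg c2; have := abs_nonneg c1; have := abs_nonneg c0
        have := abs_nonneg t0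
        simp only [X]; linarith
      have hXc : |c2| + |c1| + |c0| ≤ X - 1 := by
        have := abs_nonneg t0
        simp only [X]; linarith
      have hc2 : -|c2| ≤ c2 ∧ c2 ≤ |c2| := ⟨neg_abs_le _, le_abs_self _⟩
      have hc1 : -|c1| ≤ c1 ∧ c1 ≤ |c1| := ⟨neg_abs_le _, le_abs_self _⟩
      have hc0 : -|c0| ≤ c0 ∧ c0 ≤ |c0| := ⟨neg_abs_le _, le_abs_self _⟩
      have hgoal : cubic n α X = X^3 - c2*X^2 + c1*X - c0 := by
        unfold cubic; ring
      rw [hgoal]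
      nlinarith [hc2.1, hc2.2, hc1.1, hc1.2, hc0.1, hc0.2, sq_nonneg X,
        mul_le_mul_of_nonneg_left hXc (sq_nonneg X)]
  -- root r in [t0, X]
  have hcont : ContinuousOn (fun ρ => cubic n α ρ) (Set.Icc t0 X) := by
    apply Continuous.continuousOn
    unfold cubic
    continuity
  obtain ⟨r, hrIcc, hr⟩ := intermediate_value_Icc htX hcont ⟨hpt, hfX⟩
  have hrS : r ∈ S := root_is_eigen hn hr
  have hSne : S.Nonempty := ⟨r, hrS⟩
  have hbdd : BddAbove S := hSfin.bddAbove
  have hspec : specRadius (Dalpha α (starPlus n)) = sSup S := rfl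
  have hsup_mem : sSup S ∈ S := hSne.csSup_mem hSfin
  have hr_le : r ≤ sSup S := le_csSup hbdd hrS
  have ht0r : t0 ≤ r := hrIcc.1
  constructor
  · -- membership
    rw [hspec, hmemset]
    rcases eigen_cases hn hsup_mem with hc | hc | hc
    · exact hc
    · -- sSup S = μ₁ ≤ t0 ≤ r ≤ sSup S, so r = sSup S and cubic r = 0
      have hμ1 : α*(2*(n:ℝ)-3)-1 ≤ t0 := by nlinarith
      have : sSup S = r := le_antisymm (by rw [hc]; linarith) hr_le
      rw [this]; exact hr
    · have hμ2 : α*(2*(n:ℝ)-1)-2 ≤ t0 := by nlinarith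
      have : sSup S = r := le_antisymm (by rw [hc]; linarith) hr_le
      rw [this]; exact hr
  · -- upper bound
    intro ρ hρ
    rw [hmemset] at hρ
    rw [hspec]
    exact le_csSup hbdd (root_is_eigen hn hρ)
end
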